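/- arXiv:1506.02582 — 5 statements merged into one kernel-verified Lean document; each statement's English description precedes it below -/
import Mathlib

section
/- For all integers 0 ≤ k < t, almost surely 𝔼[ρ_k γ_{k+1} ρ_{k+1} γ_{k+2} ⋯ ρ_{t−1} γ_t | F_k] = ((P_πΓ)^{t−k} 𝟙)(S_k) ≤ 1 and 𝔼[β_{k+1} β_{k+2} ⋯ β_t | F_k] = ((P_πΓΛ)^{t−k} 𝟙)(S_k) ≤ 1, where 𝟙 ∈ ℝ^S is the all-ones vector. Furthermore, as t → ∞, the products ∏_{k=1}^t (ρ_{k−1} γ_k) converge to 0 almost surely, and ∏_{k=1}^t β_k converge to 0 almost surely. -/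
open MeasureTheory Filter Finset

noncomputable section

/-- Importance sampling ratio `ρ(s,a) = π(a|s)/π°(a|s)` (with the convention `0/0 = 0`,
which is automatic for Lean's real division). -/
def rho {S A : Type*} (pol polb : S → A → ℝ) (s : S) (a : A) : ℝ :=
  pol s a / polb s a

/-- Transition matrix of the state chain induced by a policy:
`P_π(s,s') = ∑_a π(a|s) p(s'|s,a)`. -/
def Ppi {S A : Type*} [Fintype A] (p : S → A → S → ℝ) (pol : S → A → ℝ) :
    Matrix S S ℝ :=
  Matrix.of fun s s' => ∑ a, pol s a * p s a s'

/-- The σ-algebra `F_t = σ(S_0, A_0, …, A_{t-1}, S_t)`. -/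
def filtSA {Ω S A : Type*} [MeasurableSpace S] [MeasurableSpace A]
    (St : ℕ → Ω → S) (At : ℕ → Ω → A) (t : ℕ) : MeasurableSpace Ω :=
  (⨆ k ∈ Finset.range (t + 1), MeasurableSpace.comap (St k) inferInstance) ⊔
    ⨆ k ∈ Finset.range t, MeasurableSpace.comap (At k) inferInstance

/-- Basic conditions on the MDP model together with Assumption 1. -/
structure MDPModel {S A : Type*} [Fintype S] [Fintype A] [DecidableEq S]
    (p : S → A → S → ℝ) (pol polb : S → A → ℝ) (γf lamf ifun : S → ℝ) : Prop where
  p_nonneg : ∀ s a s', 0 ≤ p s a s'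
  p_sum : ∀ s a, ∑ s', p s a s' = 1
  pol_nonneg : ∀ s a, 0 ≤ pol s a
  pol_sum : ∀ s, ∑ a, pol s a = 1
  polb_nonneg : ∀ s a, 0 ≤ polb s a
  polb_sum : ∀ s, ∑ a, polb s a = 1
  gamma_mem : ∀ s, γf s ∈ Set.Icc (0 : ℝ) 1
  lambda_mem : ∀ s, lamf s ∈ Set.Icc (0 : ℝ) 1
  interest_nonneg : ∀ s, 0 ≤ ifun s
  /-- Assumption 1(i): `I - P_π Γ` is invertible. -/
  inv : IsUnit (1 - Ppi p pol * Matrix.diagonal γf)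
  /-- Assumption 1(ii): the behavior chain is irreducible. -/
  irred : ∀ s s', ∃ t : ℕ, 0 < t ∧ 0 < (Ppi p polb ^ t) s s'
  /-- Assumption 1(ii): `π°(a|s) > 0` whenever `π(a|s) > 0`. -/
  support : ∀ s a, 0 < pol s a → 0 < polb s a

/-- The state-action process `(S_t, A_t)` is the Markov chain induced by the behavior
policy `π°` (arbitrary initial distribution). -/
structure IsBehaviorChain {S A Ω : Type*} [Fintype S] [Fintype A]
    [MeasurableSpace S] [MeasurableSpace A] [MeasurableSpace Ω]
    (p : S → A → S → ℝ) (polb : S → A → ℝ)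
    (P : Measure Ω) (St : ℕ → Ω → S) (At : ℕ → Ω → A) : Prop where
  smeas : ∀ t, Measurable (St t)
  ameas : ∀ t, Measurable (At t)
  markov : ∀ (t : ℕ) (f : A × S → ℝ),
    (P[(fun ω => f (At t ω, St (t + 1) ω)) | filtSA St At t]) =ᵐ[P]
      fun ω => ∑ a, ∑ s', polb (St t ω) a * p (St t ω) a s' * f (a, s')

/-- The emphatic trace iterates `(e_t, F_t)` with initial condition `(e0, F0)`. -/
structure IsTrace {S A Ω : Type*} {n : ℕ} (pol polb : S → A → ℝ) (γf lamf ifun : S → ℝ)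
    (φ : S → Fin n → ℝ) (St : ℕ → Ω → S) (At : ℕ → Ω → A)
    (e : ℕ → Ω → Fin n → ℝ) (F : ℕ → Ω → ℝ) (e0 : Fin n → ℝ) (F0 : ℝ) : Prop where
  init_e : ∀ ω, e 0 ω = e0
  init_F : ∀ ω, F 0 ω = F0
  rec_F : ∀ t ω, F (t + 1) ω =
    γf (St (t + 1) ω) * rho pol polb (St t ω) (At t ω) * F t ω + ifun (St (t + 1) ω)
  rec_e : ∀ t ω, e (t + 1) ω =
    (lamf (St (t + 1) ω) * γf (St (t + 1) ω) * rho pol polb (St t ω) (At t ω)) • e t ω +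
      (lamf (St (t + 1) ω) * ifun (St (t + 1) ω) +
        (1 - lamf (St (t + 1) ω)) * F (t + 1) ω) • φ (St (t + 1) ω)

end


set_option linter.unusedSectionVars false
set_option linter.unusedVariables false
set_option maxHeartbeats 1000000

noncomputable section
namespace Stmt0Aux
variable {S A : Type} [Fintype S] [Nonempty S] [Fintype A] [Nonempty A] [DecidableEq S]
variable {S A : Type} [Fintype S] [Nonempty S] [Fintype A] [DecidableEq S]


section Det
variable {p : S → A → S → ℝ} {pol : S → A → ℝ}
  (hp0 : ∀ s a s', 0 ≤ p s a s') (hp1 : ∀ s a, ∑ s', p s a s' = 1)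
  (hpol0 : ∀ s a, 0 ≤ pol s a) (hpol1 : ∀ s, ∑ a, pol s a = 1)
  {c : S → ℝ} (hc0 : ∀ s, 0 ≤ c s) (hc1 : ∀ s, c s ≤ 1)

/-- entries of `Ppi * diagonal c`. -/
lemma M_apply (s s' : S) :
    (Ppi p pol * Matrix.diagonal c) s s' = (∑ a, pol s a * p s a s') * c s' := by
  rw [Matrix.mul_diagonal]; rfl

include hp0 hpol0 hc0 in
lemma M_nonneg (s s' : S) : 0 ≤ (Ppi p pol * Matrix.diagonal c) s s' := by
  rw [M_apply]
  exact mul_nonneg (Finset.sum_nonneg fun a _ => mul_nonneg (hpol0 s a) (hp0 s a s')) (hc0 s')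

include hp0 hp1 hpol0 hpol1 hc0 hc1 in
lemma M_row_sum (s : S) : (Ppi p pol * Matrix.diagonal c).mulVec 1 s ≤ 1 := by
  simp only [Matrix.mulVec, dotProduct, Pi.one_apply, mul_one]
  calc ∑ s', (Ppi p pol * Matrix.diagonal c) s s'
      ≤ ∑ s', ∑ a, pol s a * p s a s' := by
        refine Finset.sum_le_sum fun s' _ => ?_
        rw [M_apply]
        calc (∑ a, pol s a * p s a s') * c s' ≤ (∑ a, pol s a * p s a s') * 1 := by
              refine mul_le_mul_of_nonneg_left (hc1 s')
                (Finset.sum_nonneg fun a _ => mul_nonneg (hpol0 s a) (hp0 s a s'))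
          _ = _ := mul_one _
    _ = ∑ a, pol s a * ∑ s', p s a s' := by
        rw [Finset.sum_comm]; exact Finset.sum_congr rfl fun a _ => (Finset.mul_sum _ _ _).symm
    _ = 1 := by simp only [hp1, mul_one, hpol1]

/-- entrywise nonneg of powers. -/
lemma pow_nonneg_entry {M : Matrix S S ℝ} (hM : ∀ s s', 0 ≤ M s s') (m : ℕ) :
    ∀ s s', 0 ≤ (M ^ m) s s' := by
  induction m with
  | zero => intro s s'; simp [Matrix.one_apply]; split <;> norm_num
  | succ m ih =>
    intro s s'
    rw [pow_succ, Matrix.mul_apply]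
    exact Finset.sum_nonneg fun j _ => mul_nonneg (ih s j) (hM j s')

lemma pow_le_pow_entry {M N : Matrix S S ℝ} (hM : ∀ s s', 0 ≤ M s s')
    (hN : ∀ s s', 0 ≤ N s s') (hMN : ∀ s s', M s s' ≤ N s s') (m : ℕ) :
    ∀ s s', (M ^ m) s s' ≤ (N ^ m) s s' := by
  induction m with
  | zero => intro s s'; simp
  | succ m ih =>
    intro s s'
    rw [pow_succ, pow_succ, Matrix.mul_apply, Matrix.mul_apply]
    refine Finset.sum_le_sum fun j _ => ?_
    exact mul_le_mul (ih s j) (hMN j s') (hM j s') (pow_nonneg_entry hN m s j)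

lemma mulVec_le_mulVec {M : Matrix S S ℝ} (hM : ∀ s s', 0 ≤ M s s')
    {x y : S → ℝ} (hxy : ∀ s, x s ≤ y s) (s : S) : M.mulVec x s ≤ M.mulVec y s := by
  simp only [Matrix.mulVec, dotProduct]
  exact Finset.sum_le_sum fun j _ => mul_le_mul_of_nonneg_left (hxy j) (hM s j)

include hp0 hp1 hpol0 hpol1 hc0 hc1 in
lemma u_le_one (m : ℕ) (s : S) :
    ((Ppi p pol * Matrix.diagonal c) ^ m).mulVec 1 s ≤ 1 := by
  induction m generalizing s with
  | zero => simp
  | succ m ih =>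
    rw [pow_succ', ← Matrix.mulVec_mulVec]
    calc (Ppi p pol * Matrix.diagonal c).mulVec (((Ppi p pol * Matrix.diagonal c) ^ m).mulVec 1) s
        ≤ (Ppi p pol * Matrix.diagonal c).mulVec 1 s :=
          mulVec_le_mulVec (M_nonneg hp0 hpol0 hc0) (fun s' => ih s') s
      _ ≤ 1 := M_row_sum hp0 hp1 hpol0 hpol1 hc0 hc1 s

include hp0 hpol0 hc0 in
lemma u_nonneg (m : ℕ) (s : S) :
    0 ≤ ((Ppi p pol * Matrix.diagonal c) ^ m).mulVec 1 s := by
  simp only [Matrix.mulVec, dotProduct, Pi.one_apply, mul_one]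
  exact Finset.sum_nonneg fun s' _ =>
    pow_nonneg_entry (M_nonneg hp0 hpol0 hc0) m s s'

include hp0 hp1 hpol0 hpol1 hc0 hc1 in
lemma u_antitone (m : ℕ) (s : S) :
    ((Ppi p pol * Matrix.diagonal c) ^ (m+1)).mulVec 1 s ≤
      ((Ppi p pol * Matrix.diagonal c) ^ m).mulVec 1 s := by
  rw [pow_succ, ← Matrix.mulVec_mulVec]
  refine le_trans (le_of_eq rfl) ?_
  have := mulVec_le_mulVec (M := (Ppi p pol * Matrix.diagonal c) ^ m)
    (pow_nonneg_entry (M_nonneg hp0 hpol0 hc0) m)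
    (x := (Ppi p pol * Matrix.diagonal c).mulVec 1) (y := 1)
    (fun s' => M_row_sum hp0 hp1 hpol0 hpol1 hc0 hc1 s') s
  simpa using this

end Det

/-- limit of iterates of a nonneg matrix with row sums ≤ 1 and `1 - M` invertible -/
lemma u_tendsto_zero {M : Matrix S S ℝ} (hM : ∀ s s', 0 ≤ M s s')
    (hrow : ∀ s, M.mulVec 1 s ≤ 1)
    (hle1 : ∀ m s, (M ^ m).mulVec 1 s ≤ 1)
    (hnn : ∀ m s, 0 ≤ (M ^ m).mulVec 1 s)
    (hanti : ∀ m s, (M ^ (m+1)).mulVec 1 s ≤ (M ^ m).mulVec 1 s)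
    (hinv : IsUnit (1 - M)) (s : S) :
    Tendsto (fun m => (M ^ m).mulVec 1 s) atTop (nhds 0) := by
  set u : ℕ → S → ℝ := fun m => (M ^ m).mulVec 1 with hu
  set L : S → ℝ := fun s => ⨅ m, u m s with hLdef
  have hbdd : ∀ s, BddBelow (Set.range fun m => u m s) :=
    fun s => ⟨0, by rintro x ⟨m, rfl⟩; exact hnn m s⟩
  have hconv : ∀ s, Tendsto (fun m => u m s) atTop (nhds (L s)) := fun s =>
    tendsto_atTop_ciInf (antitone_nat_of_succ_le fun m => hanti m s) (hbdd s)
  have hstep : ∀ m s, u (m+1) s = ∑ s', M s s' * u m s' := by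
    intro m s
    rw [hu]
    simp only [pow_succ', ← Matrix.mulVec_mulVec]
    rfl
  have hML : M.mulVec L = L := by
    funext s
    have h1 : Tendsto (fun m => u (m+1) s) atTop (nhds (L s)) :=
      (hconv s).comp (tendsto_add_atTop_nat 1)
    have h2 : Tendsto (fun m => ∑ s', M s s' * u m s') atTop
        (nhds (∑ s', M s s' * L s')) :=
      tendsto_finset_sum _ fun s' _ => (hconv s').const_mul _
    have heq := tendsto_nhds_unique (h1.congr fun m => hstep m s) h2
    have : M.mulVec L s = ∑ s', M s s' * L s' := by
      simp [Matrix.mulVec, dotProduct]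
    rw [this, ← heq]
  have hzero : (1 - M).mulVec L = 0 := by
    rw [Matrix.sub_mulVec, Matrix.one_mulVec, hML, sub_self]
  have hdet : IsUnit (1 - M).det := (Matrix.isUnit_iff_isUnit_det _).mp hinv
  have hL0 : L = 0 := by
    have : (1 - M)⁻¹ * (1 - M) = 1 := Matrix.nonsing_inv_mul _ hdet
    calc L = (1 : Matrix S S ℝ).mulVec L := (Matrix.one_mulVec _).symm
      _ = ((1 - M)⁻¹ * (1 - M)).mulVec L := by rw [this]
      _ = (1 - M)⁻¹.mulVec ((1 - M).mulVec L) := (Matrix.mulVec_mulVec _ _ _).symm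
      _ = 0 := by rw [hzero, Matrix.mulVec_zero]
  have := hconv s
  rw [hLdef] at this
  simpa [hL0] using hconv s

/-- existence of a window `T` after which the total mass is halved, plus summability. -/
lemma exists_T {M : Matrix S S ℝ} (hM : ∀ s s', 0 ≤ M s s')
    (hle1 : ∀ m s, (M ^ m).mulVec 1 s ≤ 1)
    (hnn : ∀ m s, 0 ≤ (M ^ m).mulVec 1 s)
    (hpownn : ∀ m s s', 0 ≤ (M ^ m) s s')
    (htend : ∀ s, Tendsto (fun m => (M ^ m).mulVec 1 s) atTop (nhds 0)) :
    ∃ T : ℕ, 1 ≤ T ∧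
      Summable (fun k : ℕ => ∑ s, (M ^ ((k+1)*T)).mulVec 1 s) := by
  set u : ℕ → S → ℝ := fun m => (M ^ m).mulVec 1 with hu
  set b : ℕ → ℝ := fun m => ∑ s, u m s with hb
  have hbnn : ∀ m, 0 ≤ b m := fun m => Finset.sum_nonneg fun s _ => hnn m s
  have hbt : Tendsto b atTop (nhds 0) := by
    have := tendsto_finset_sum (Finset.univ : Finset S) fun s _ => htend s
    simpa using this
  have : ∀ᶠ m in atTop, b m ≤ 1/2 := by
    have := hbt.eventually (eventually_le_nhds (by norm_num : (0:ℝ) < 1/2))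
    simpa using this
  obtain ⟨T₀, hT₀⟩ := this.exists_forall_of_atTop
  refine ⟨T₀ + 1, Nat.le_add_left _ _, ?_⟩
  set T := T₀ + 1 with hT
  have huT : ∀ s, u T s ≤ 1/2 := by
    intro s
    calc u T s ≤ b T := Finset.single_le_sum (fun s' _ => hnn T s') (Finset.mem_univ s)
      _ ≤ 1/2 := hT₀ T (Nat.le_add_right _ _)
  have hhalf : ∀ m, b (m + T) ≤ (1/2) * b m := by
    intro m
    have hus : ∀ s, u (m + T) s ≤ (1/2) * u m s := by
      intro s
      have : u (m + T) s = ∑ s', (M ^ m) s s' * u T s' := by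
        rw [hu]
        simp only [pow_add, ← Matrix.mulVec_mulVec]
        rfl
      rw [this]
      calc ∑ s', (M ^ m) s s' * u T s' ≤ ∑ s', (M ^ m) s s' * (1/2) :=
            Finset.sum_le_sum fun s' _ =>
              mul_le_mul_of_nonneg_left (huT s') (hpownn m s s')
        _ = (1/2) * u m s := by
            have : u m s = ∑ s', (M ^ m) s s' := by
              simp [hu, Matrix.mulVec, dotProduct]
            rw [this, Finset.mul_sum]
            exact Finset.sum_congr rfl fun s' _ => mul_comm _ _
    calc b (m + T) = ∑ s, u (m + T) s := rfl
      _ ≤ ∑ s, (1/2) * u m s := Finset.sum_le_sum fun s _ => hus s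
      _ = (1/2) * b m := by rw [← Finset.mul_sum]
  have hgeo : ∀ k, b ((k+1)*T) ≤ (1/2)^k * b T := by
    intro k
    induction k with
    | zero => simp
    | succ k ih =>
      have : (k+2)*T = (k+1)*T + T := by ring
      rw [this]
      calc b ((k+1)*T + T) ≤ (1/2) * b ((k+1)*T) := hhalf _
        _ ≤ (1/2) * ((1/2)^k * b T) := by
            refine mul_le_mul_of_nonneg_left ih (by norm_num)
        _ = (1/2)^(k+1) * b T := by ring
  refine Summable.of_nonneg_of_le (fun k => hbnn _) (fun k => hgeo k) ?_
  exact (summable_geometric_of_lt_one (by norm_num) (by norm_num)).mul_right _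

variable {S A : Type} [Fintype S] [Nonempty S] [Fintype A] [Nonempty A] [DecidableEq S]
    [MeasurableSpace S] [MeasurableSingletonClass S]
    [MeasurableSpace A] [MeasurableSingletonClass A]
    {Ω : Type} [MeasurableSpace Ω] {P : Measure Ω} [IsProbabilityMeasure P]
    {St : ℕ → Ω → S} {At : ℕ → Ω → A}

lemma filt_le (hS : ∀ t, Measurable (St t)) (hA : ∀ t, Measurable (At t)) (t : ℕ) :
    filtSA St At t ≤ (inferInstance : MeasurableSpace Ω) := by
  refine sup_le ?_ ?_
  · exact iSup₂_le fun k _ => (hS k).comap_le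
  · exact iSup₂_le fun k _ => (hA k).comap_le

lemma filt_mono {k t : ℕ} (hkt : k ≤ t) : filtSA St At k ≤ filtSA St At t := by
  refine sup_le_sup ?_ ?_
  · exact iSup₂_le fun i hi => le_iSup₂ (f := fun i (_ : i ∈ Finset.range (t+1)) =>
      MeasurableSpace.comap (St i) inferInstance) i
      (Finset.mem_range.2 (lt_of_lt_of_le (Finset.mem_range.1 hi) (by omega)))
  · exact iSup₂_le fun i hi => le_iSup₂ (f := fun i (_ : i ∈ Finset.range t) =>
      MeasurableSpace.comap (At i) inferInstance) i
      (Finset.mem_range.2 (lt_of_lt_of_le (Finset.mem_range.1 hi) hkt))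

lemma meas_St_filt {k t : ℕ} (hkt : k ≤ t) : Measurable[filtSA St At t] (St k) := by
  have h1 : MeasurableSpace.comap (St k) inferInstance ≤ filtSA St At t :=
    le_trans (le_iSup₂ (f := fun i (_ : i ∈ Finset.range (t+1)) =>
      MeasurableSpace.comap (St i) inferInstance) k (Finset.mem_range.2 (by omega)))
      le_sup_left
  exact fun s hs => h1 _ ⟨s, hs, rfl⟩

lemma meas_At_filt {k t : ℕ} (hkt : k < t) : Measurable[filtSA St At t] (At k) := by
  have h1 : MeasurableSpace.comap (At k) inferInstance ≤ filtSA St At t :=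
    le_trans (le_iSup₂ (f := fun i (_ : i ∈ Finset.range t) =>
      MeasurableSpace.comap (At i) inferInstance) k (Finset.mem_range.2 hkt))
      le_sup_right
  exact fun s hs => h1 _ ⟨s, hs, rfl⟩

/-- a uniform bound on a function on a finite type -/
lemma abs_le_bnd {X : Type} [Fintype X] (g : X → ℝ) (x : X) : |g x| ≤ ∑ y, |g y| :=
  Finset.single_le_sum (f := fun y => |g y|) (fun y _ => abs_nonneg _) (Finset.mem_univ x)

lemma integ_of_bdd {f : Ω → ℝ} (hm : Measurable f) (C : ℝ) (h : ∀ ω, |f ω| ≤ C) :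
    Integrable f P :=
  (integrable_const C).mono' hm.aestronglyMeasurable
    (Filter.Eventually.of_forall fun ω => by simpa using h ω)

/-- measurability & integrability of `ω ↦ g (St j ω) (At j ω) (St (j+1) ω)` -/
lemma meas_g (hS : ∀ t, Measurable (St t)) (hA : ∀ t, Measurable (At t))
    (g : S → A → S → ℝ) (j : ℕ) :
    Measurable fun ω => g (St j ω) (At j ω) (St (j+1) ω) := by
  have : (fun ω => g (St j ω) (At j ω) (St (j+1) ω)) =
      (fun q : S × A × S => g q.1 q.2.1 q.2.2) ∘
        fun ω => (St j ω, At j ω, St (j+1) ω) := rfl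
  rw [this]
  exact (measurable_of_countable _).comp
    ((hS j).prodMk ((hA j).prodMk (hS (j+1))))

lemma integ_g (hS : ∀ t, Measurable (St t)) (hA : ∀ t, Measurable (At t))
    (g : S → A → S → ℝ) (j : ℕ) :
    Integrable (fun ω => g (St j ω) (At j ω) (St (j+1) ω)) P := by
  refine integ_of_bdd (meas_g hS hA g j)
    (∑ q : S × A × S, |g q.1 q.2.1 q.2.2|) fun ω => ?_
  exact abs_le_bnd (fun q : S × A × S => g q.1 q.2.1 q.2.2) (St j ω, At j ω, St (j+1) ω)


variable {S A : Type} [Fintype S] [Nonempty S] [Fintype A] [Nonempty A] [DecidableEq S]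
    [MeasurableSpace S] [MeasurableSingletonClass S]
    [MeasurableSpace A] [MeasurableSingletonClass A]
    {Ω : Type} [MeasurableSpace Ω] {P : Measure Ω} [IsProbabilityMeasure P]
    {St : ℕ → Ω → S} {At : ℕ → Ω → A}
    {p : S → A → S → ℝ} {polb : S → A → ℝ}

lemma onestep (hS : ∀ t, Measurable (St t)) (hA : ∀ t, Measurable (At t))
    (hmarkov : ∀ (t : ℕ) (f : A × S → ℝ),
      (P[(fun ω => f (At t ω, St (t + 1) ω)) | filtSA St At t]) =ᵐ[P]
        fun ω => ∑ a, ∑ s', polb (St t ω) a * p (St t ω) a s' * f (a, s'))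
    (t : ℕ) (g : S → A → S → ℝ) :
    (P[(fun ω => g (St t ω) (At t ω) (St (t+1) ω)) | filtSA St At t]) =ᵐ[P]
      fun ω => ∑ a, ∑ s', polb (St t ω) a * p (St t ω) a s' * g (St t ω) a s' := by
  have hrw : (fun ω => g (St t ω) (At t ω) (St (t+1) ω)) =
      fun ω => ∑ s : S, (if St t ω = s then (1:ℝ) else 0) *
        g s (At t ω) (St (t+1) ω) := by
    funext ω
    simp [ite_mul, Finset.sum_ite_eq]
  rw [hrw]
  have hint : ∀ s : S, Integrable (fun ω =>
      (if St t ω = s then (1:ℝ) else 0) * g s (At t ω) (St (t+1) ω)) P := by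
    intro s
    exact integ_g hS hA (fun s₀ a s' => (if s₀ = s then (1:ℝ) else 0) * g s a s') t
  have hsum := condExp_finsetSum (μ := P) (m := filtSA St At t)
    (s := Finset.univ)
    (f := fun (s : S) (ω : Ω) =>
      (if St t ω = s then (1:ℝ) else 0) * g s (At t ω) (St (t+1) ω))
    (fun s _ => hint s)
  have hterm : ∀ s : S,
      (P[(fun ω => (if St t ω = s then (1:ℝ) else 0) * g s (At t ω) (St (t+1) ω)) |
        filtSA St At t]) =ᵐ[P]
      fun ω => (if St t ω = s then (1:ℝ) else 0) *
        ∑ a, ∑ s', polb (St t ω) a * p (St t ω) a s' * g s a s' := by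
    intro s
    have hsm : StronglyMeasurable[filtSA St At t]
        (fun ω => (if St t ω = s then (1:ℝ) else 0)) := by
      have : (fun ω => (if St t ω = s then (1:ℝ) else 0)) =
          (fun s₀ : S => if s₀ = s then (1:ℝ) else 0) ∘ St t := rfl
      rw [this]
      exact ((measurable_of_countable _).comp (meas_St_filt le_rfl)).stronglyMeasurable
    have h1 := condExp_mul_of_stronglyMeasurable_left (μ := P) hsm
      (hint s) (integ_g hS hA (fun _ a s' => g s a s') t)
    have h2 := hmarkov t (fun q => g s q.1 q.2)
    refine h1.trans ?_
    filter_upwards [h2] with ω hω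
    simp only [Pi.mul_apply]
    rw [hω]
  have hfun : (fun ω => ∑ s : S, (if St t ω = s then (1:ℝ) else 0) *
      g s (At t ω) (St (t+1) ω)) =
      ∑ s : S, (fun ω => (if St t ω = s then (1:ℝ) else 0) * g s (At t ω) (St (t+1) ω)) := by
    funext ω; simp
  rw [hfun]
  refine hsum.trans ?_
  have hall : ∀ᵐ ω ∂P, ∀ s : S,
      (P[(fun ω => (if St t ω = s then (1:ℝ) else 0) * g s (At t ω) (St (t+1) ω)) |
        filtSA St At t]) ω =
      (if St t ω = s then (1:ℝ) else 0) *
        ∑ a, ∑ s', polb (St t ω) a * p (St t ω) a s' * g s a s' :=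
    (ae_all_iff).2 fun s => hterm s
  filter_upwards [hall] with ω hω
  simp only [Finset.sum_apply]
  rw [Finset.sum_congr rfl fun s _ => hω s]
  simp [ite_mul, Finset.sum_ite_eq]

variable {pol : S → A → ℝ} {c : S → ℝ}

lemma polb_mul_rho (hpol0 : ∀ s a, 0 ≤ pol s a)
    (hsupp : ∀ s a, 0 < pol s a → 0 < polb s a) (s : S) (a : A) :
    polb s a * rho pol polb s a = pol s a := by
  by_cases h : polb s a = 0
  · have hp : pol s a = 0 := by
      by_contra hne
      have := hsupp s a (lt_of_le_of_ne (hpol0 s a) (Ne.symm hne))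
      exact absurd h (ne_of_gt this)
    simp [rho, h, hp]
  · rw [rho, mul_div_cancel₀ _ h]

lemma mulVec_eq (hpol0 : ∀ s a, 0 ≤ pol s a)
    (hsupp : ∀ s a, 0 < pol s a → 0 < polb s a) (v : S → ℝ) (s : S) :
    (Ppi p pol * Matrix.diagonal c).mulVec v s =
      ∑ a, ∑ s', polb s a * p s a s' * (rho pol polb s a * (c s' * v s')) := by
  have h1 : (Ppi p pol * Matrix.diagonal c).mulVec v s =
      ∑ s', (∑ a, pol s a * p s a s') * (c s' * v s') := by
    simp only [Matrix.mulVec, dotProduct, Matrix.mul_diagonal]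
    refine Finset.sum_congr rfl fun s' _ => ?_
    show Ppi p pol s s' * c s' * v s' = _
    rw [mul_assoc]; rfl
  rw [h1]
  simp only [Finset.sum_mul]
  rw [Finset.sum_comm]
  refine Finset.sum_congr rfl fun a _ => Finset.sum_congr rfl fun s' _ => ?_
  rw [← polb_mul_rho hpol0 hsupp s a]
  ring

lemma meas_prod (hS : ∀ t, Measurable (St t)) (hA : ∀ t, Measurable (At t))
    (k t : ℕ) : Measurable fun ω =>
      ∏ j ∈ Finset.Ico k t, (rho pol polb (St j ω) (At j ω) * c (St (j+1) ω)) :=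
  Finset.measurable_prod _ fun j _ => meas_g hS hA (fun s a s' => rho pol polb s a * c s') j

lemma integ_prod (hS : ∀ t, Measurable (St t)) (hA : ∀ t, Measurable (At t))
    (k t : ℕ) : Integrable (fun ω =>
      ∏ j ∈ Finset.Ico k t, (rho pol polb (St j ω) (At j ω) * c (St (j+1) ω))) P := by
  set B : ℝ := ∑ q : S × A × S, |rho pol polb q.1 q.2.1 * c q.2.2| with hB
  refine integ_of_bdd (meas_prod hS hA k t) (∏ _j ∈ Finset.Ico k t, B) fun ω => ?_
  rw [Finset.abs_prod]
  refine Finset.prod_le_prod (fun j _ => abs_nonneg _) fun j _ => ?_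
  exact abs_le_bnd (fun q : S × A × S => rho pol polb q.1 q.2.1 * c q.2.2)
    (St j ω, At j ω, St (j+1) ω)

lemma master (hS : ∀ t, Measurable (St t)) (hA : ∀ t, Measurable (At t))
    (hmarkov : ∀ (t : ℕ) (f : A × S → ℝ),
      (P[(fun ω => f (At t ω, St (t + 1) ω)) | filtSA St At t]) =ᵐ[P]
        fun ω => ∑ a, ∑ s', polb (St t ω) a * p (St t ω) a s' * f (a, s'))
    (hpol0 : ∀ s a, 0 ≤ pol s a)
    (hsupp : ∀ s a, 0 < pol s a → 0 < polb s a) :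
    ∀ m k : ℕ,
      (P[(fun ω => ∏ j ∈ Finset.Ico k (k+m+1),
          (rho pol polb (St j ω) (At j ω) * c (St (j+1) ω))) | filtSA St At k]) =ᵐ[P]
        fun ω => ((Ppi p pol * Matrix.diagonal c) ^ (m+1)).mulVec 1 (St k ω) := by
  intro m
  induction m with
  | zero =>
    intro k
    have hrw : (fun ω => ∏ j ∈ Finset.Ico k (k+0+1),
        (rho pol polb (St j ω) (At j ω) * c (St (j+1) ω))) =
        fun ω => rho pol polb (St k ω) (At k ω) *
          (c (St (k+1) ω) * (1 : S → ℝ) (St (k+1) ω)) := by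
      funext ω
      rw [show k+0+1 = k+1 by ring, show Finset.Ico k (k+1) = {k} from
        Nat.Ico_succ_singleton k, Finset.prod_singleton]
      simp [mul_assoc]
    rw [hrw]
    refine (onestep hS hA hmarkov k
      (fun s a s' => rho pol polb s a * (c s' * (1 : S → ℝ) s'))).trans ?_
    refine Filter.Eventually.of_forall fun ω => ?_
    show (∑ a, ∑ s', polb (St k ω) a * p (St k ω) a s' *
        (rho pol polb (St k ω) a * (c s' * (1 : S → ℝ) s'))) =
      ((Ppi p pol * Matrix.diagonal c) ^ (0+1)).mulVec 1 (St k ω)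
    rw [pow_one, mulVec_eq hpol0 hsupp]
  | succ m ih =>
    intro k
    set M := Ppi p pol * Matrix.diagonal c with hM
    set u : S → ℝ := (M ^ (m+1)).mulVec 1 with hu
    haveI hsf : SigmaFinite (P.trim (filt_le hS hA (k+1))) := by
      have : IsFiniteMeasure (P.trim (filt_le hS hA (k+1))) :=
        isFiniteMeasure_trim _
      exact this.toSigmaFinite
    set F : Ω → ℝ := fun ω => ∏ j ∈ Finset.Ico k (k+(m+1)+1),
      (rho pol polb (St j ω) (At j ω) * c (St (j+1) ω)) with hF
    have hsplit : F = fun ω =>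
        (rho pol polb (St k ω) (At k ω) * c (St (k+1) ω)) *
          ∏ j ∈ Finset.Ico (k+1) (k+(m+1)+1),
            (rho pol polb (St j ω) (At j ω) * c (St (j+1) ω)) := by
      funext ω
      exact Finset.prod_eq_prod_Ico_succ_bot (by omega) _
    have hsm : StronglyMeasurable[filtSA St At (k+1)]
        (fun ω => rho pol polb (St k ω) (At k ω) * c (St (k+1) ω)) := by
      have : (fun ω => rho pol polb (St k ω) (At k ω) * c (St (k+1) ω)) =
          (fun q : S × A × S => rho pol polb q.1 q.2.1 * c q.2.2) ∘
            fun ω => (St k ω, At k ω, St (k+1) ω) := rfl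
      rw [this]
      exact ((measurable_of_countable _).comp
        (((meas_St_filt (by omega)).prodMk
          ((meas_At_filt (by omega)).prodMk (meas_St_filt le_rfl))))).stronglyMeasurable
    have hpull : (P[F | filtSA St At (k+1)]) =ᵐ[P]
        (fun ω => rho pol polb (St k ω) (At k ω) * c (St (k+1) ω)) *
          (P[(fun ω => ∏ j ∈ Finset.Ico (k+1) (k+(m+1)+1),
            (rho pol polb (St j ω) (At j ω) * c (St (j+1) ω))) | filtSA St At (k+1)]) := by
      rw [hsplit]
      exact condExp_mul_of_stronglyMeasurable_left hsm
        (by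
          have h := integ_prod (P := P) (pol := pol) (polb := polb) (c := c)
            hS hA k (k+(m+1)+1)
          exact h.congr (Filter.Eventually.of_forall fun ω =>
            Finset.prod_eq_prod_Ico_succ_bot (by omega) _))
        (integ_prod hS hA (k+1) (k+(m+1)+1))
    have hIH : (P[(fun ω => ∏ j ∈ Finset.Ico (k+1) (k+(m+1)+1),
        (rho pol polb (St j ω) (At j ω) * c (St (j+1) ω))) | filtSA St At (k+1)]) =ᵐ[P]
        fun ω => u (St (k+1) ω) := by
      have := ih (k+1)
      rw [show (k+1)+m+1 = k+(m+1)+1 by ring] at this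
      exact this
    have h2 : (P[F | filtSA St At (k+1)]) =ᵐ[P]
        fun ω => rho pol polb (St k ω) (At k ω) *
          (c (St (k+1) ω) * u (St (k+1) ω)) := by
      refine hpull.trans ?_
      filter_upwards [hIH] with ω hω
      simp only [Pi.mul_apply]
      rw [hω]; ring
    have htower : (P[(P[F | filtSA St At (k+1)]) | filtSA St At k]) =ᵐ[P]
        (P[F | filtSA St At k]) :=
      condExp_condExp_of_le (filt_mono (by omega)) (filt_le hS hA (k+1))
    refine (htower.symm.trans ?_)
    refine (condExp_congr_ae h2).trans ?_
    refine (onestep hS hA hmarkov k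
      (fun s a s' => rho pol polb s a * (c s' * u s'))).trans ?_
    refine Filter.Eventually.of_forall fun ω => ?_
    show (∑ a, ∑ s', polb (St k ω) a * p (St k ω) a s' *
        (rho pol polb (St k ω) a * (c s' * u s'))) =
      (M ^ (m+1+1)).mulVec 1 (St k ω)
    rw [← mulVec_eq hpol0 hsupp u (St k ω)]
    show M.mulVec u (St k ω) = _
    rw [hu, Matrix.mulVec_mulVec, ← pow_succ']

lemma ae_tendsto_of_summable_integral {f : ℕ → Ω → ℝ} (hmeas : ∀ k, Measurable (f k))
    (hnn : ∀ k ω, 0 ≤ f k ω) (hint : ∀ k, Integrable (f k) P)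
    (hsum : Summable fun k => ∫ ω, f k ω ∂P) :
    ∀ᵐ ω ∂P, Tendsto (fun k => f k ω) atTop (nhds 0) := by
  have h1 : ∫⁻ ω, ∑' k, ENNReal.ofReal (f k ω) ∂P =
      ∑' k, ∫⁻ ω, ENNReal.ofReal (f k ω) ∂P :=
    lintegral_tsum fun k => ((hmeas k).ennreal_ofReal).aemeasurable
  have h2 : ∀ k, ∫⁻ ω, ENNReal.ofReal (f k ω) ∂P = ENNReal.ofReal (∫ ω, f k ω ∂P) :=
    fun k => (ofReal_integral_eq_lintegral_ofReal (hint k)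
      (Filter.Eventually.of_forall fun ω => hnn k ω)).symm
  have h3 : ∑' k, ∫⁻ ω, ENNReal.ofReal (f k ω) ∂P < ⊤ := by
    simp only [h2]
    rw [← ENNReal.ofReal_tsum_of_nonneg (fun k => integral_nonneg (hnn k)) hsum]
    exact ENNReal.ofReal_lt_top
  rw [← h1] at h3
  have h4 : ∀ᵐ ω ∂P, ∑' k, ENNReal.ofReal (f k ω) < ⊤ :=
    ae_lt_top (Measurable.ennreal_tsum fun k => (hmeas k).ennreal_ofReal) h3.ne
  filter_upwards [h4] with ω hω
  have hs : Summable fun k => (ENNReal.ofReal (f k ω)).toReal :=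
    ENNReal.summable_toReal hω.ne
  have : (fun k => (ENNReal.ofReal (f k ω)).toReal) = fun k => f k ω := by
    funext k; exact ENNReal.toReal_ofReal (hnn k ω)
  rw [this] at hs
  exact hs.tendsto_atTop_zero

lemma integral_prod_le (hS : ∀ t, Measurable (St t)) (hA : ∀ t, Measurable (At t))
    (hmarkov : ∀ (t : ℕ) (f : A × S → ℝ),
      (P[(fun ω => f (At t ω, St (t + 1) ω)) | filtSA St At t]) =ᵐ[P]
        fun ω => ∑ a, ∑ s', polb (St t ω) a * p (St t ω) a s' * f (a, s'))
    (hpol0 : ∀ s a, 0 ≤ pol s a)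
    (hsupp : ∀ s a, 0 < pol s a → 0 < polb s a)
    (hunn : ∀ m s, 0 ≤ ((Ppi p pol * Matrix.diagonal c) ^ m).mulVec 1 s)
    (t : ℕ) (ht : 1 ≤ t) :
    ∫ ω, (∏ j ∈ Finset.range t, (rho pol polb (St j ω) (At j ω) * c (St (j+1) ω))) ∂P ≤
      ∑ s, ((Ppi p pol * Matrix.diagonal c) ^ t).mulVec 1 s := by
  have hce := master (c := c) hS hA hmarkov hpol0 hsupp (t-1) 0
  rw [show 0+(t-1)+1 = t by omega] at hce
  rw [show t-1+1 = t by omega] at hce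
  haveI hsf : SigmaFinite (P.trim (filt_le hS hA 0)) :=
    (isFiniteMeasure_trim _).toSigmaFinite
  have h1 : ∫ ω, (∏ j ∈ Finset.range t,
      (rho pol polb (St j ω) (At j ω) * c (St (j+1) ω))) ∂P =
      ∫ ω, ((Ppi p pol * Matrix.diagonal c) ^ t).mulVec 1 (St 0 ω) ∂P := by
    rw [← integral_condExp (filt_le hS hA 0)
      (f := fun ω => ∏ j ∈ Finset.range t,
        (rho pol polb (St j ω) (At j ω) * c (St (j+1) ω)))]
    refine integral_congr_ae ?_
    simp only [Finset.range_eq_Ico]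
    exact hce
  rw [h1]
  have hint : Integrable (fun ω =>
      ((Ppi p pol * Matrix.diagonal c) ^ t).mulVec 1 (St 0 ω)) P := by
    refine integ_of_bdd ((measurable_of_countable
        (fun s => ((Ppi p pol * Matrix.diagonal c) ^ t).mulVec 1 s)).comp (hS 0))
      (∑ s, |((Ppi p pol * Matrix.diagonal c) ^ t).mulVec 1 s|) fun ω => ?_
    exact abs_le_bnd _ (St 0 ω)
  calc ∫ ω, ((Ppi p pol * Matrix.diagonal c) ^ t).mulVec 1 (St 0 ω) ∂P
      ≤ ∫ _ω, (∑ s, ((Ppi p pol * Matrix.diagonal c) ^ t).mulVec 1 s) ∂P := by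
        refine integral_mono hint (integrable_const _) fun ω => ?_
        exact Finset.single_le_sum (f := fun s =>
          ((Ppi p pol * Matrix.diagonal c) ^ t).mulVec 1 s)
          (fun s _ => hunn t s) (Finset.mem_univ _)
    _ = ∑ s, ((Ppi p pol * Matrix.diagonal c) ^ t).mulVec 1 s := by
        simp [measure_univ]

lemma prod_tendsto_zero (hS : ∀ t, Measurable (St t)) (hA : ∀ t, Measurable (At t))
    (hmarkov : ∀ (t : ℕ) (f : A × S → ℝ),
      (P[(fun ω => f (At t ω, St (t + 1) ω)) | filtSA St At t]) =ᵐ[P]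
        fun ω => ∑ a, ∑ s', polb (St t ω) a * p (St t ω) a s' * f (a, s'))
    (hpol0 : ∀ s a, 0 ≤ pol s a)
    (hpolb0 : ∀ s a, 0 ≤ polb s a)
    (hsupp : ∀ s a, 0 < pol s a → 0 < polb s a)
    (hc0 : ∀ s, 0 ≤ c s)
    (hunn : ∀ m s, 0 ≤ ((Ppi p pol * Matrix.diagonal c) ^ m).mulVec 1 s)
    (T : ℕ) (hT : 1 ≤ T)
    (hsum : Summable fun k : ℕ =>
      ∑ s, ((Ppi p pol * Matrix.diagonal c) ^ ((k+1)*T)).mulVec 1 s) :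
    ∀ᵐ ω ∂P, Tendsto (fun t => ∏ j ∈ Finset.range t,
      (rho pol polb (St j ω) (At j ω) * c (St (j+1) ω))) atTop (nhds 0) := by
  set w : ℕ → Ω → ℝ := fun j ω => rho pol polb (St j ω) (At j ω) * c (St (j+1) ω) with hw
  have hwnn : ∀ j ω, 0 ≤ w j ω := fun j ω =>
    mul_nonneg (div_nonneg (hpol0 _ _) (hpolb0 _ _)) (hc0 _)
  set Mt : ℕ → Ω → ℝ := fun t ω => ∏ j ∈ Finset.range t, w j ω with hMt
  have hMtnn : ∀ t ω, 0 ≤ Mt t ω := fun t ω =>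
    Finset.prod_nonneg fun j _ => hwnn j ω
  set B : ℝ := ∑ q : S × A × S, |rho pol polb q.1 q.2.1 * c q.2.2| with hB
  have hwB : ∀ j ω, w j ω ≤ B := fun j ω =>
    le_trans (le_abs_self _)
      (abs_le_bnd (fun q : S × A × S => rho pol polb q.1 q.2.1 * c q.2.2)
        (St j ω, At j ω, St (j+1) ω))
  set D : ℝ := max 1 B with hD
  have hD1 : (1:ℝ) ≤ D := le_max_left _ _
  -- the subsequence
  have hNconv : ∀ᵐ ω ∂P, Tendsto (fun k => Mt ((k+1)*T) ω) atTop (nhds 0) := by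
    refine ae_tendsto_of_summable_integral
      (fun k => by
        have h := meas_prod (pol := pol) (polb := polb) (c := c) hS hA 0 ((k+1)*T)
        rw [← Finset.range_eq_Ico] at h
        exact h)
      (fun k ω => hMtnn _ ω)
      (fun k => by
        have h := integ_prod (pol := pol) (polb := polb) (c := c) (P := P) hS hA 0 ((k+1)*T)
        rw [← Finset.range_eq_Ico] at h
        exact h)
      ?_
    refine Summable.of_nonneg_of_le (fun k => integral_nonneg fun ω => hMtnn _ ω)
      (fun k => integral_prod_le hS hA hmarkov hpol0 hsupp hunn ((k+1)*T)
        (by nlinarith [Nat.succ_le_of_lt (Nat.pos_of_ne_zero (by omega : k+1 ≠ 0))])) hsum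
  -- squeeze
  filter_upwards [hNconv] with ω hN
  have hdiv : Tendsto (fun t : ℕ => t / T - 1) atTop atTop := by
    refine tendsto_atTop_atTop.2 fun b => ⟨(b+1)*T, fun t ht => ?_⟩
    have : b + 1 ≤ t / T := (Nat.le_div_iff_mul_le (by omega)).2 ht
    omega
  have hcomp : Tendsto (fun t : ℕ => D ^ T * Mt ((t / T - 1 + 1) * T) ω) atTop (nhds 0) := by
    have := (hN.comp hdiv).const_mul (D ^ T)
    simpa using this
  refine squeeze_zero' (Filter.Eventually.of_forall fun t => hMtnn t ω)
    ?_ hcomp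
  filter_upwards [eventually_ge_atTop T] with t ht
  have hT1 : 1 ≤ t / T := (Nat.le_div_iff_mul_le (by omega)).2 (by omega)
  have hm : (t / T - 1 + 1) * T = (t / T) * T := by
    congr 1
    omega
  rw [hm]
  show Mt t ω ≤ D ^ T * Mt (t / T * T) ω
  have hmle : (t / T) * T ≤ t := Nat.div_mul_le_self t T
  have hsplit : Mt t ω = Mt ((t / T) * T) ω * ∏ j ∈ Finset.Ico ((t / T) * T) t, w j ω := by
    rw [hMt]
    exact (Finset.prod_range_mul_prod_Ico _ hmle).symm
  rw [hsplit, mul_comm (D ^ T)]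
  refine mul_le_mul_of_nonneg_left ?_ (hMtnn _ ω)
  calc ∏ j ∈ Finset.Ico ((t / T) * T) t, w j ω
      ≤ ∏ _j ∈ Finset.Ico ((t / T) * T) t, D :=
        Finset.prod_le_prod (fun j _ => hwnn j ω)
          (fun j _ => le_trans (hwB j ω) (le_max_right _ _))
    _ = D ^ (t - (t / T) * T) := by rw [Finset.prod_const, Nat.card_Ico]
    _ ≤ D ^ T := by
        refine pow_le_pow_right₀ hD1 ?_
        have h5 := Nat.div_add_mod t T
        have h6 : T * (t / T) = (t / T) * T := Nat.mul_comm _ _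
        have h7 : t % T < T := Nat.mod_lt _ (by omega)
        rw [h6] at h5
        omega

end Stmt0Aux
end

open Stmt0Aux in
/-- For all `0 ≤ k < t`, almost surely
`𝔼[ρ_k γ_{k+1} ⋯ ρ_{t−1} γ_t | F_k] = ((P_πΓ)^{t−k} 𝟙)(S_k) ≤ 1` and
`𝔼[β_{k+1} ⋯ β_t | F_k] = ((P_πΓΛ)^{t−k} 𝟙)(S_k) ≤ 1`; moreover the products
`∏_{k=1}^t (ρ_{k−1} γ_k)` and `∏_{k=1}^t β_k` converge to `0` almost surely. -/
theorem stmt0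
    {S A : Type} [Fintype S] [Nonempty S] [Fintype A] [Nonempty A] [DecidableEq S]
    [MeasurableSpace S] [MeasurableSingletonClass S]
    [MeasurableSpace A] [MeasurableSingletonClass A]
    (p : S → A → S → ℝ) (pol polb : S → A → ℝ) (γf lamf ifun : S → ℝ)
    (hmodel : MDPModel p pol polb γf lamf ifun)
    (Ω : Type) [MeasurableSpace Ω] (P : Measure Ω) [IsProbabilityMeasure P]
    (St : ℕ → Ω → S) (At : ℕ → Ω → A)
    (hchain : IsBehaviorChain p polb P St At) :
    (∀ k t : ℕ, k < t →
      ((P[(fun ω => ∏ j ∈ Finset.Ico k t,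
            rho pol polb (St j ω) (At j ω) * γf (St (j + 1) ω)) | filtSA St At k]) =ᵐ[P]
          fun ω => ((Ppi p pol * Matrix.diagonal γf) ^ (t - k)).mulVec 1 (St k ω)) ∧
      (∀ᵐ ω ∂P, ((Ppi p pol * Matrix.diagonal γf) ^ (t - k)).mulVec 1 (St k ω) ≤ 1) ∧
      ((P[(fun ω => ∏ j ∈ Finset.Ico k t,
            rho pol polb (St j ω) (At j ω) * γf (St (j + 1) ω) * lamf (St (j + 1) ω)) |
              filtSA St At k]) =ᵐ[P]
          fun ω => ((Ppi p pol * Matrix.diagonal γf * Matrix.diagonal lamf) ^ (t - k)).mulVec 1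
            (St k ω)) ∧
      (∀ᵐ ω ∂P,
        ((Ppi p pol * Matrix.diagonal γf * Matrix.diagonal lamf) ^ (t - k)).mulVec 1 (St k ω)
          ≤ 1)) ∧
    (∀ᵐ ω ∂P, Tendsto (fun t => ∏ j ∈ Finset.range t,
        rho pol polb (St j ω) (At j ω) * γf (St (j + 1) ω)) atTop (nhds 0)) ∧
    (∀ᵐ ω ∂P, Tendsto (fun t => ∏ j ∈ Finset.range t,
        rho pol polb (St j ω) (At j ω) * γf (St (j + 1) ω) * lamf (St (j + 1) ω)) atTop
        (nhds 0)) := by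
  obtain ⟨hp0, hp1, hpol0, hpol1, hpolb0, hpolb1, hga, hla, hi, hinv, hirr, hsupp⟩ := hmodel
  obtain ⟨smeas, ameas, markov⟩ := hchain
  have hg0 : ∀ s, 0 ≤ γf s := fun s => (hga s).1
  have hg1 : ∀ s, γf s ≤ 1 := fun s => (hga s).2
  have hl0 : ∀ s, 0 ≤ lamf s := fun s => (hla s).1
  have hl1 : ∀ s, lamf s ≤ 1 := fun s => (hla s).2
  set c2 : S → ℝ := fun s => γf s * lamf s with hc2def
  have hc20 : ∀ s, 0 ≤ c2 s := fun s => mul_nonneg (hg0 s) (hl0 s)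
  have hc21 : ∀ s, c2 s ≤ 1 := fun s => mul_le_one₀ (hg1 s) (hl0 s) (hl1 s)
  have hc2g : ∀ s, c2 s ≤ γf s := fun s => by
    calc c2 s = γf s * lamf s := rfl
      _ ≤ γf s * 1 := mul_le_mul_of_nonneg_left (hl1 s) (hg0 s)
      _ = γf s := mul_one _
  have hdm : Ppi p pol * Matrix.diagonal γf * Matrix.diagonal lamf =
      Ppi p pol * Matrix.diagonal c2 := by
    rw [mul_assoc, Matrix.diagonal_mul_diagonal]
  -- entrywise comparison of the two matrices and their powers
  have hMg := M_nonneg (p := p) (pol := pol) (c := γf) hp0 hpol0 hg0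
  have hMc2 := M_nonneg (p := p) (pol := pol) (c := c2) hp0 hpol0 hc20
  have hentry : ∀ s s', (Ppi p pol * Matrix.diagonal c2) s s' ≤
      (Ppi p pol * Matrix.diagonal γf) s s' := by
    intro s s'
    rw [M_apply, M_apply]
    exact mul_le_mul_of_nonneg_left (hc2g s')
      (Finset.sum_nonneg fun a _ => mul_nonneg (hpol0 s a) (hp0 s a s'))
  have hucomp : ∀ m s, ((Ppi p pol * Matrix.diagonal c2) ^ m).mulVec 1 s ≤
      ((Ppi p pol * Matrix.diagonal γf) ^ m).mulVec 1 s := by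
    intro m s
    simp only [Matrix.mulVec, dotProduct, Pi.one_apply, mul_one]
    exact Finset.sum_le_sum fun s' _ => pow_le_pow_entry hMc2 hMg hentry m s s'
  -- rewriting products with λ
  have hprodrw : ∀ (F : Finset ℕ) (ω : Ω),
      (∏ j ∈ F, rho pol polb (St j ω) (At j ω) * γf (St (j + 1) ω) * lamf (St (j + 1) ω)) =
      ∏ j ∈ F, rho pol polb (St j ω) (At j ω) * c2 (St (j + 1) ω) := by
    intro F ω
    exact Finset.prod_congr rfl fun j _ => by rw [hc2def, mul_assoc]
  refine ⟨?_, ?_, ?_⟩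
  · intro k t hkt
    obtain ⟨m, rfl⟩ : ∃ m, t = k + m + 1 := ⟨t - k - 1, by omega⟩
    have htk : k + m + 1 - k = m + 1 := by omega
    refine ⟨?_, ?_, ?_, ?_⟩
    · rw [htk]
      exact master (c := γf) smeas ameas markov hpol0 hsupp m k
    · refine Filter.Eventually.of_forall fun ω => ?_
      rw [htk]
      exact u_le_one hp0 hp1 hpol0 hpol1 hg0 hg1 (m + 1) (St k ω)
    · rw [htk, hdm]
      have hfun : (fun ω => ∏ j ∈ Finset.Ico k (k + m + 1),
          rho pol polb (St j ω) (At j ω) * γf (St (j + 1) ω) * lamf (St (j + 1) ω)) =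
          fun ω => ∏ j ∈ Finset.Ico k (k + m + 1),
            rho pol polb (St j ω) (At j ω) * c2 (St (j + 1) ω) := by
        funext ω; exact hprodrw _ ω
      rw [hfun]
      exact master (c := c2) smeas ameas markov hpol0 hsupp m k
    · refine Filter.Eventually.of_forall fun ω => ?_
      rw [htk, hdm]
      exact u_le_one hp0 hp1 hpol0 hpol1 hc20 hc21 (m + 1) (St k ω)
  · -- convergence for γ
    have htend := u_tendsto_zero (M := Ppi p pol * Matrix.diagonal γf) hMg
      (M_row_sum hp0 hp1 hpol0 hpol1 hg0 hg1)
      (u_le_one hp0 hp1 hpol0 hpol1 hg0 hg1)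
      (u_nonneg hp0 hpol0 hg0)
      (u_antitone hp0 hp1 hpol0 hpol1 hg0 hg1) hinv
    obtain ⟨T, hT1, hTsum⟩ := exists_T (M := Ppi p pol * Matrix.diagonal γf) hMg
      (u_le_one hp0 hp1 hpol0 hpol1 hg0 hg1)
      (u_nonneg hp0 hpol0 hg0)
      (pow_nonneg_entry hMg) htend
    exact prod_tendsto_zero smeas ameas markov hpol0 hpolb0 hsupp hg0
      (u_nonneg hp0 hpol0 hg0) T hT1 hTsum
  · -- convergence for γλ
    have htend := u_tendsto_zero (M := Ppi p pol * Matrix.diagonal γf) hMg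
      (M_row_sum hp0 hp1 hpol0 hpol1 hg0 hg1)
      (u_le_one hp0 hp1 hpol0 hpol1 hg0 hg1)
      (u_nonneg hp0 hpol0 hg0)
      (u_antitone hp0 hp1 hpol0 hpol1 hg0 hg1) hinv
    obtain ⟨T, hT1, hTsum⟩ := exists_T (M := Ppi p pol * Matrix.diagonal γf) hMg
      (u_le_one hp0 hp1 hpol0 hpol1 hg0 hg1)
      (u_nonneg hp0 hpol0 hg0)
      (pow_nonneg_entry hMg) htend
    have hTsum2 : Summable fun k : ℕ =>
        ∑ s, ((Ppi p pol * Matrix.diagonal c2) ^ ((k + 1) * T)).mulVec 1 s := by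
      refine Summable.of_nonneg_of_le
        (fun k => Finset.sum_nonneg fun s _ => u_nonneg hp0 hpol0 hc20 _ s)
        (fun k => Finset.sum_le_sum fun s _ => hucomp _ s) hTsum
    have hconv := prod_tendsto_zero smeas ameas markov hpol0 hpolb0 hsupp hc20
      (u_nonneg hp0 hpol0 hc20) T hT1 hTsum2
    filter_upwards [hconv] with ω hω
    have hfun : (fun t => ∏ j ∈ Finset.range t,
        rho pol polb (St j ω) (At j ω) * γf (St (j + 1) ω) * lamf (St (j + 1) ω)) =
        fun t => ∏ j ∈ Finset.range t,
          rho pol polb (St j ω) (At j ω) * c2 (St (j + 1) ω) := by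
      funext t; exact hprodrw _ ω
    rw [hfun]
    exact hω
end

section
/- Under Assumption 1, for any given initial condition (e_0, F_0), the emphatic trace iterates satisfy sup_{t≥0} 𝔼[‖(e_t, F_t)‖] < ∞. -/
open MeasureTheory Filter Finset

namespace Stmt2Aux
set_option linter.unusedSectionVars false
open Matrix


section Mat
variable {S : Type} [Fintype S] [Nonempty S] [DecidableEq S]

/-- row sums of powers -/
def rs (M : Matrix S S ℝ) (k : ℕ) (s : S) : ℝ := ∑ s', (M ^ k) s s'

lemma pow_entry_nonneg {M : Matrix S S ℝ} (h : ∀ s s', 0 ≤ M s s') (t : ℕ) (s s' : S) :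
    0 ≤ (M ^ t) s s' := by
  induction t generalizing s s' with
  | zero => by_cases hs : s = s' <;> simp [Matrix.one_apply, hs]
  | succ t ih =>
    rw [pow_succ, Matrix.mul_apply]
    exact Finset.sum_nonneg fun k _ => mul_nonneg (ih s k) (h k s')

lemma rs_zero (M : Matrix S S ℝ) (s : S) : rs M 0 s = 1 := by
  simp [rs, Matrix.one_apply]

lemma rs_succ (M : Matrix S S ℝ) (k : ℕ) (s : S) :
    rs M (k + 1) s = ∑ r, M s r * rs M k r := by
  simp only [rs, pow_succ', Matrix.mul_apply, mul_sum]
  exact Finset.sum_comm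

lemma rs_nonneg {M : Matrix S S ℝ} (h : ∀ s s', 0 ≤ M s s') (k : ℕ) (s : S) :
    0 ≤ rs M k s :=
  Finset.sum_nonneg fun s' _ => pow_entry_nonneg h k s s'

lemma rs_le_one {M : Matrix S S ℝ} (hnn : ∀ s s', 0 ≤ M s s')
    (hsub : ∀ s, ∑ s', M s s' ≤ 1) (k : ℕ) (s : S) : rs M k s ≤ 1 := by
  induction k generalizing s with
  | zero => simp [rs_zero]
  | succ k ih =>
    rw [rs_succ]
    calc ∑ r, M s r * rs M k r ≤ ∑ r, M s r * 1 :=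
          Finset.sum_le_sum fun r _ => mul_le_mul_of_nonneg_left (ih r) (hnn s r)
      _ = ∑ r, M s r := by simp
      _ ≤ 1 := hsub s

lemma rs_antitone {M : Matrix S S ℝ} (hnn : ∀ s s', 0 ≤ M s s')
    (hsub : ∀ s, ∑ s', M s s' ≤ 1) (k : ℕ) (s : S) : rs M (k + 1) s ≤ rs M k s := by
  induction k generalizing s with
  | zero =>
    rw [rs_succ, rs_zero]
    calc ∑ r, M s r * rs M 0 r = ∑ r, M s r := by simp [rs_zero]
      _ ≤ 1 := hsub s
  | succ k ih =>
    rw [rs_succ, rs_succ]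
    exact Finset.sum_le_sum fun r _ => mul_le_mul_of_nonneg_left (ih r) (hnn s r)

lemma rs_anti {M : Matrix S S ℝ} (hnn : ∀ s s', 0 ≤ M s s')
    (hsub : ∀ s, ∑ s', M s s' ≤ 1) (s : S) : Antitone fun k => rs M k s :=
  antitone_nat_of_succ_le fun k => rs_antitone hnn hsub k s

lemma rs_add {M : Matrix S S ℝ} (a b : ℕ) (s : S) :
    rs M (a + b) s = ∑ r, (M ^ a) s r * rs M b r := by
  simp only [rs, pow_add, Matrix.mul_apply, mul_sum]
  exact Finset.sum_comm

lemma pow_entry_le_one {M : Matrix S S ℝ} (hnn : ∀ s s', 0 ≤ M s s')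
    (hsub : ∀ s, ∑ s', M s s' ≤ 1) (k : ℕ) (s s' : S) : (M ^ k) s s' ≤ 1 :=
  le_trans (Finset.single_le_sum (f := fun r => (M ^ k) s r)
    (fun r _ => pow_entry_nonneg hnn k s r) (Finset.mem_univ s')) (rs_le_one hnn hsub k s)

/-- Key matrix lemma: nonneg substochastic `M` with `1 - M` invertible has summable
row sums of powers, uniformly. -/
lemma matrix_bound {M : Matrix S S ℝ} (hnn : ∀ s s', 0 ≤ M s s')
    (hsub : ∀ s, ∑ s', M s s' ≤ 1) (hinv : IsUnit (1 - M)) :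
    ∃ C : ℝ, 0 ≤ C ∧ ∀ (t : ℕ) (s : S), ∑ k ∈ Finset.range t, rs M k s ≤ C := by
  -- limit of row sums
  set w : S → ℝ := fun s => ⨅ k, rs M k s with hw
  have hbdd : ∀ s, BddBelow (Set.range fun k => rs M k s) := fun s =>
    ⟨0, by rintro x ⟨k, rfl⟩; exact rs_nonneg hnn k s⟩
  have htend : ∀ s, Filter.Tendsto (fun k => rs M k s) Filter.atTop (nhds (w s)) :=
    fun s => tendsto_atTop_ciInf (rs_anti hnn hsub s) (hbdd s)
  have hfix : ∀ s, w s = ∑ r, M s r * w r := by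
    intro s
    have h1 : Filter.Tendsto (fun k => rs M (k + 1) s) Filter.atTop (nhds (w s)) :=
      (htend s).comp (Filter.tendsto_add_atTop_nat 1)
    have h2 : Filter.Tendsto (fun k => ∑ r, M s r * rs M k r) Filter.atTop
        (nhds (∑ r, M s r * w r)) :=
      tendsto_finset_sum _ fun r _ => (htend r).const_mul (M s r)
    have : (fun k => rs M (k + 1) s) = fun k => ∑ r, M s r * rs M k r := by
      funext k; exact rs_succ M k s
    rw [this] at h1
    exact tendsto_nhds_unique h1 h2
  -- w = 0
  have hw0 : ∀ s, w s = 0 := by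
    have hmv : (1 - M) *ᵥ w = 0 := by
      funext s
      have hexp : ∑ x, (1 - M) s x * w x = w s - ∑ x, M s x * w x := by
        simp [Matrix.sub_apply, sub_mul, Finset.sum_sub_distrib, Matrix.one_apply]
      show ∑ x, (1 - M) s x * w x = (0:ℝ)
      rw [hexp, ← hfix s, sub_self]
    have hdet : IsUnit (1 - M).det := (Matrix.isUnit_iff_isUnit_det _).mp hinv
    have : w = 0 := by
      have h1 : (1 - M)⁻¹ *ᵥ ((1 - M) *ᵥ w) = w := by
        rw [Matrix.mulVec_mulVec, Matrix.nonsing_inv_mul _ hdet, Matrix.one_mulVec]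
      rw [hmv, Matrix.mulVec_zero] at h1
      exact h1.symm
    intro s; rw [this]; rfl
  -- find T with rs M T s ≤ 1/2 for all s
  have hev : ∀ᶠ k in Filter.atTop, ∀ s, rs M k s ≤ 1 / 2 := by
    rw [Filter.eventually_all]
    intro s
    have := htend s
    rw [hw0 s] at this
    exact this.eventually_le_const (by norm_num)
  obtain ⟨T, hT⟩ := hev.exists
  have hT1 : 1 ≤ T := by
    by_contra h
    push_neg at h
    interval_cases T
    have := hT (Classical.arbitrary S)
    rw [rs_zero] at this; linarith
  -- geometric decay
  have hgeo : ∀ j s, rs M (j * T) s ≤ (1 / 2) ^ j := by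
    intro j
    induction j with
    | zero => intro s; simpa [rs_zero] using le_refl (1:ℝ)
    | succ j ih =>
      intro s
      have : (j + 1) * T = j * T + T := by ring
      rw [this, rs_add]
      calc ∑ r, (M ^ (j * T)) s r * rs M T r
          ≤ ∑ r, (M ^ (j * T)) s r * (1 / 2) :=
            Finset.sum_le_sum fun r _ =>
              mul_le_mul_of_nonneg_left (hT r) (pow_entry_nonneg hnn _ s r)
        _ = rs M (j * T) s * (1 / 2) := by rw [rs, Finset.sum_mul]
        _ ≤ (1 / 2) ^ j * (1 / 2) := by
            have := ih s; nlinarith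
        _ = (1 / 2) ^ (j + 1) := by ring
  -- partial sums over blocks
  have hblock : ∀ m s, ∑ k ∈ Finset.range (T * m), rs M k s ≤ 2 * T * (1 - (1/2) ^ m) := by
    intro m s
    induction m with
    | zero => simp
    | succ m ih =>
      have hTm : T * (m + 1) = T * m + T := by ring
      rw [hTm, Finset.range_eq_Ico, ← Finset.sum_Ico_consecutive _ (Nat.zero_le (T * m))
        (Nat.le_add_right (T * m) T)]
      have hico : ∑ k ∈ Finset.Ico (T * m) (T * m + T), rs M k s ≤ T * (1/2) ^ m := by
        calc ∑ k ∈ Finset.Ico (T * m) (T * m + T), rs M k s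
            ≤ ∑ k ∈ Finset.Ico (T * m) (T * m + T), (1/2) ^ m := by
              refine Finset.sum_le_sum fun k hk => ?_
              rw [Finset.mem_Ico] at hk
              calc rs M k s ≤ rs M (T * m) s := rs_anti hnn hsub s hk.1
                _ = rs M (m * T) s := by rw [Nat.mul_comm]
                _ ≤ (1/2) ^ m := hgeo m s
          _ = T * (1/2) ^ m := by
              rw [Finset.sum_const, Nat.card_Ico, Nat.add_sub_cancel_left, nsmul_eq_mul]
      rw [← Finset.range_eq_Ico]
      have h2 : (0:ℝ) < (1/2 : ℝ) ^ m := by positivity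
      have hT0 : (0:ℝ) ≤ T := Nat.cast_nonneg T
      calc ∑ k ∈ Finset.range (T * m), rs M k s
            + ∑ k ∈ Finset.Ico (T * m) (T * m + T), rs M k s
          ≤ 2 * T * (1 - (1/2) ^ m) + T * (1/2) ^ m := add_le_add ih hico
        _ = 2 * T * (1 - (1/2) ^ (m+1)) := by ring
  refine ⟨2 * T, by positivity, fun t s => ?_⟩
  have hmono : ∑ k ∈ Finset.range t, rs M k s ≤ ∑ k ∈ Finset.range (T * t), rs M k s := by
    refine Finset.sum_le_sum_of_subset_of_nonneg ?_ fun k _ _ => rs_nonneg hnn k s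
    exact Finset.range_subset_range.mpr (Nat.le_mul_of_pos_left t hT1)
  refine hmono.trans ((hblock t s).trans ?_)
  have : (0:ℝ) ≤ (1/2:ℝ)^t := by positivity
  have hT0 : (0:ℝ) ≤ T := Nat.cast_nonneg T
  nlinarith


end Mat

open MeasurableSpace

set_option linter.unusedSectionVars false

variable {S A Ω : Type} [Fintype S] [Fintype A] [DecidableEq S]
  [MeasurableSpace S] [MeasurableSingletonClass S]
  [MeasurableSpace A] [MeasurableSingletonClass A]
  [MeasurableSpace Ω]

lemma abs_le_total {X : Type*} [Fintype X] (f : X → ℝ) (x : X) : |f x| ≤ ∑ y, |f y| :=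
  Finset.single_le_sum (f := fun y => |f y|) (fun y _ => abs_nonneg _) (Finset.mem_univ x)

lemma total_nonneg {X : Type*} [Fintype X] (f : X → ℝ) : 0 ≤ ∑ y, |f y| :=
  Finset.sum_nonneg fun y _ => abs_nonneg _

lemma filt_le (St : ℕ → Ω → S) (At : ℕ → Ω → A)
    (hS : ∀ t, Measurable (St t)) (hA : ∀ t, Measurable (At t)) (t : ℕ) :
    filtSA St At t ≤ ‹MeasurableSpace Ω› := by
  refine sup_le (iSup₂_le fun k _ => ?_) (iSup₂_le fun k _ => ?_)
  · exact measurable_iff_comap_le.mp (hS k)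
  · exact measurable_iff_comap_le.mp (hA k)

lemma St_meas_filt (St : ℕ → Ω → S) (At : ℕ → Ω → A) {k t : ℕ} (hk : k ≤ t) :
    Measurable[filtSA St At t] (St k) := by
  refine measurable_iff_comap_le.mpr (le_trans ?_ le_sup_left)
  exact le_iSup₂ (f := fun k (_ : k ∈ Finset.range (t + 1)) =>
    MeasurableSpace.comap (St k) inferInstance) k (by simp [Finset.mem_range]; omega)

lemma At_meas_filt (St : ℕ → Ω → S) (At : ℕ → Ω → A) {k t : ℕ} (hk : k < t) :
    Measurable[filtSA St At t] (At k) := by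
  refine measurable_iff_comap_le.mpr (le_trans ?_ le_sup_right)
  exact le_iSup₂ (f := fun k (_ : k ∈ Finset.range t) =>
    MeasurableSpace.comap (At k) inferInstance) k (by simp [Finset.mem_range]; omega)

lemma filt_mono (St : ℕ → Ω → S) (At : ℕ → Ω → A) {t t' : ℕ} (h : t ≤ t') :
    filtSA St At t ≤ filtSA St At t' := by
  refine sup_le_sup (biSup_mono fun k hk => ?_) (biSup_mono fun k hk => ?_) <;>
    · simp only [Finset.mem_range] at hk ⊢; omega

lemma integrable_of_bdd {P : Measure Ω} [IsFiniteMeasure P] {g : Ω → ℝ}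
    (hm : AEStronglyMeasurable g P) (C : ℝ) (h : ∀ ω, |g ω| ≤ C) : Integrable g P :=
  (integrable_const C).mono' hm (Filter.Eventually.of_forall fun ω => by
    simpa [Real.norm_eq_abs] using h ω)

/-- Master conditioning lemma. -/
lemma master {P : Measure Ω} [IsProbabilityMeasure P] {p : S → A → S → ℝ} {polb : S → A → ℝ}
    {St : ℕ → Ω → S} {At : ℕ → Ω → A} (hchain : IsBehaviorChain p polb P St At)
    (t : ℕ) (g : Ω → ℝ) (hg : Measurable[filtSA St At t] g)
    (K : ℝ) (hK : 0 ≤ K) (hgb : ∀ ω, |g ω| ≤ K)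
    (h : S → A → S → ℝ) :
    ∫ ω, g ω * h (St t ω) (At t ω) (St (t + 1) ω) ∂P
      = ∫ ω, g ω * ∑ a, ∑ s', polb (St t ω) a * p (St t ω) a s' * h (St t ω) a s' ∂P := by
  have hm : filtSA St At t ≤ ‹MeasurableSpace Ω› := filt_le St At hchain.smeas hchain.ameas t
  have hgm : Measurable g := hg.mono hm le_rfl
  -- per-state indicator versions
  set ind : S → Ω → ℝ := fun s ω => if St t ω = s then (1:ℝ) else 0 with hind
  have hindm : ∀ s, Measurable[filtSA St At t] (ind s) := fun s =>
    (measurable_of_countable (fun x : S => if x = s then (1:ℝ) else 0)).comp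
      (St_meas_filt St At le_rfl)
  have hindb : ∀ s ω, 0 ≤ ind s ω ∧ ind s ω ≤ 1 := by
    intro s ω; by_cases hs : St t ω = s <;> simp [ind, hs]
  have key : ∀ s : S,
      ∫ ω, (g ω * ind s ω) * h s (At t ω) (St (t + 1) ω) ∂P
        = ∫ ω, (g ω * ind s ω) *
            ∑ a, ∑ s', polb (St t ω) a * p (St t ω) a s' * h s a s' ∂P := by
    intro s
    set f : A × S → ℝ := fun q => h s q.1 q.2 with hf
    set X : Ω → ℝ := fun ω => f (At t ω, St (t + 1) ω) with hX
    set G : Ω → ℝ := fun ω => g ω * ind s ω with hG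
    have hGmeas : Measurable[filtSA St At t] G := hg.mul (hindm s)
    have hGb : ∀ ω, |G ω| ≤ K := by
      intro ω
      have h1 := (hindb s ω).1; have h2 := (hindb s ω).2
      have := hgb ω
      calc |G ω| = |g ω| * |ind s ω| := abs_mul _ _
        _ ≤ K * 1 := mul_le_mul this (by rw [abs_of_nonneg h1]; exact h2)
            (abs_nonneg _) hK
        _ = K := mul_one K
    have hXm : Measurable X :=
      (measurable_of_countable f).comp ((hchain.ameas t).prodMk (hchain.smeas (t + 1)))
    set CF : ℝ := ∑ q : A × S, |f q| with hCF
    have hXb : ∀ ω, |X ω| ≤ CF := fun ω => abs_le_total f _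
    have hXint : Integrable X P := integrable_of_bdd hXm.aestronglyMeasurable CF hXb
    have hGXint : Integrable (G * X) P := by
      refine integrable_of_bdd ((hGmeas.mono hm le_rfl).mul hXm).aestronglyMeasurable
        (K * CF) fun ω => ?_
      calc |(G * X) ω| = |G ω| * |X ω| := abs_mul _ _
        _ ≤ K * CF := mul_le_mul (hGb ω) (hXb ω) (abs_nonneg _) hK
    have h1 : ∫ ω, (G * X) ω ∂P = ∫ ω, (P[G * X|filtSA St At t]) ω ∂P :=
      (integral_condExp hm).symm
    have h2 : (P[G * X|filtSA St At t]) =ᵐ[P] G * (P[X|filtSA St At t]) :=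
      condExp_mul_of_stronglyMeasurable_left hGmeas.stronglyMeasurable hGXint hXint
    have h3 : (P[X|filtSA St At t]) =ᵐ[P]
        fun ω => ∑ a, ∑ s', polb (St t ω) a * p (St t ω) a s' * f (a, s') :=
      hchain.markov t f
    have h4 : (P[G * X|filtSA St At t]) =ᵐ[P]
        fun ω => G ω * ∑ a, ∑ s', polb (St t ω) a * p (St t ω) a s' * f (a, s') := by
      refine h2.trans ?_
      filter_upwards [h3] with ω hω
      simp only [Pi.mul_apply, hω]
    calc ∫ ω, G ω * h s (At t ω) (St (t + 1) ω) ∂P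
        = ∫ ω, (G * X) ω ∂P := by simp only [Pi.mul_apply, hX, hf]
      _ = ∫ ω, (P[G * X|filtSA St At t]) ω ∂P := h1
      _ = ∫ ω, G ω * ∑ a, ∑ s', polb (St t ω) a * p (St t ω) a s' * f (a, s') ∂P :=
          integral_congr_ae h4
      _ = ∫ ω, G ω * ∑ a, ∑ s', polb (St t ω) a * p (St t ω) a s' * h s a s' ∂P := rfl
  -- decomposition over the value of `St t`
  have hmeas3 : ∀ (B : S → A → S → ℝ), Measurable fun ω => B (St t ω) (At t ω) (St (t+1) ω) :=
    fun B => (measurable_of_countable fun q : S × A × S => B q.1 q.2.1 q.2.2).comp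
      ((hchain.smeas t).prodMk ((hchain.ameas t).prodMk (hchain.smeas (t+1))))
  have hintB : ∀ (B : S → A → S → ℝ),
      Integrable (fun ω => g ω * B (St t ω) (At t ω) (St (t+1) ω)) P := by
    intro B
    set CB : ℝ := ∑ q : S × A × S, |B q.1 q.2.1 q.2.2| with hCB
    refine integrable_of_bdd (hgm.mul (hmeas3 B)).aestronglyMeasurable (K * CB) fun ω => ?_
    calc |g ω * B (St t ω) (At t ω) (St (t+1) ω)|
        = |g ω| * |B (St t ω) (At t ω) (St (t+1) ω)| := abs_mul _ _
      _ ≤ K * CB := mul_le_mul (hgb ω)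
          (abs_le_total (fun q : S × A × S => B q.1 q.2.1 q.2.2) ⟨St t ω, At t ω, St (t+1) ω⟩)
          (abs_nonneg _) hK
  have lhs_eq : ∫ ω, g ω * h (St t ω) (At t ω) (St (t + 1) ω) ∂P
      = ∑ s, ∫ ω, (g ω * ind s ω) * h s (At t ω) (St (t + 1) ω) ∂P := by
    rw [← integral_finset_sum]
    · refine integral_congr_ae (Filter.Eventually.of_forall fun ω => ?_)
      have : ∀ s, (g ω * ind s ω) * h s (At t ω) (St (t + 1) ω)
          = if St t ω = s then g ω * h s (At t ω) (St (t + 1) ω) else 0 := by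
        intro s; by_cases hs : St t ω = s <;> simp [ind, hs]
      simp only [this, Finset.sum_ite_eq, Finset.mem_univ, if_true]
    · intro s _
      have := hintB (fun s0 a s1 => (if s0 = s then (1:ℝ) else 0) * h s a s1)
      refine this.congr (Filter.Eventually.of_forall fun ω => ?_)
      by_cases hs : St t ω = s <;> simp [ind, hs] <;> ring
  have rhs_eq : ∫ ω, g ω * ∑ a, ∑ s', polb (St t ω) a * p (St t ω) a s' * h (St t ω) a s' ∂P
      = ∑ s, ∫ ω, (g ω * ind s ω) *
          ∑ a, ∑ s', polb (St t ω) a * p (St t ω) a s' * h s a s' ∂P := by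
    rw [← integral_finset_sum]
    · refine integral_congr_ae (Filter.Eventually.of_forall fun ω => ?_)
      have : ∀ s, (g ω * ind s ω) *
            ∑ a, ∑ s', polb (St t ω) a * p (St t ω) a s' * h s a s'
          = if St t ω = s then
              g ω * ∑ a, ∑ s', polb (St t ω) a * p (St t ω) a s' * h (St t ω) a s' else 0 := by
        intro s; by_cases hs : St t ω = s <;> simp [ind, hs]
      simp only [this, Finset.sum_ite_eq, Finset.mem_univ, if_true]
    · intro s _
      have := hintB (fun s0 a1 s1 => (if s0 = s then (1:ℝ) else 0) *
        ∑ a, ∑ s', polb s0 a * p s0 a s' * h s a s')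
      refine this.congr (Filter.Eventually.of_forall fun ω => ?_)
      by_cases hs : St t ω = s <;> simp [ind, hs] <;> ring
  rw [lhs_eq, rhs_eq]
  exact Finset.sum_congr rfl fun s _ => key s

lemma meas3 {St : ℕ → Ω → S} {At : ℕ → Ω → A}
    (hS : ∀ t, Measurable (St t)) (hA : ∀ t, Measurable (At t)) (t : ℕ)
    (B : S → A → S → ℝ) : Measurable fun ω => B (St t ω) (At t ω) (St (t + 1) ω) :=
  (measurable_of_countable fun q : S × A × S => B q.1 q.2.1 q.2.2).comp
    ((hS t).prodMk ((hA t).prodMk (hS (t + 1))))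

/-- Core recursion lemma: uniform bounds for state-decomposed expectations of a
nonnegative process driven by the discounted importance-sampling recursion. -/
lemma core [Nonempty S] {P : Measure Ω} [IsProbabilityMeasure P] {p : S → A → S → ℝ}
    {pol polb : S → A → ℝ} {γf : S → ℝ}
    (hpol_nn : ∀ s a, 0 ≤ pol s a)
    (hp_nn : ∀ s a s', 0 ≤ p s a s') (hp_sum : ∀ s a, ∑ s', p s a s' = 1)
    (hpol_sum : ∀ s, ∑ a, pol s a = 1)
    (hγ0 : ∀ s, 0 ≤ γf s) (hγ1 : ∀ s, γf s ≤ 1)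
    (hrel : ∀ s a, polb s a * rho pol polb s a = pol s a)
    (hinv : IsUnit (1 - (Matrix.of fun s s' => (∑ a, pol s a * p s a s') * γf s')))
    {St : ℕ → Ω → S} {At : ℕ → Ω → A} (hchain : IsBehaviorChain p polb P St At)
    (G R : ℕ → Ω → ℝ)
    (hGmeas : ∀ t, Measurable[filtSA St At t] (G t))
    (hGbd : ∀ t, ∃ K, 0 ≤ K ∧ ∀ ω, |G t ω| ≤ K)
    (hrec : ∀ t ω, G (t + 1) ω =
      γf (St (t + 1) ω) * rho pol polb (St t ω) (At t ω) * G t ω + R (t + 1) ω)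
    (hRmeas : ∀ t, Measurable (R t))
    (hRbd : ∀ t, ∃ K, ∀ ω, |R t ω| ≤ K)
    (c : ℝ) (hc : 0 ≤ c)
    (hRint : ∀ t s', (∫ ω, R (t + 1) ω * (if St (t + 1) ω = s' then (1:ℝ) else 0) ∂P) ≤ c) :
    ∃ D, 0 ≤ D ∧ ∀ t s, (∫ ω, G t ω * (if St t ω = s then (1:ℝ) else 0) ∂P) ≤ D := by
  classical
  set M : Matrix S S ℝ := Matrix.of fun s s' => (∑ a, pol s a * p s a s') * γf s' with hM
  have hMapp : ∀ s s', M s s' = (∑ a, pol s a * p s a s') * γf s' := fun s s' => rfl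
  have hMnn : ∀ s s', 0 ≤ M s s' := fun s s' =>
    mul_nonneg (Finset.sum_nonneg fun a _ => mul_nonneg (hpol_nn s a) (hp_nn s a s')) (hγ0 s')
  have hMsub : ∀ s, ∑ s', M s s' ≤ 1 := by
    intro s
    calc ∑ s', M s s' ≤ ∑ s', ∑ a, pol s a * p s a s' := by
          refine Finset.sum_le_sum fun s' _ => ?_
          rw [hMapp]
          have hnn : 0 ≤ ∑ a, pol s a * p s a s' :=
            Finset.sum_nonneg fun a _ => mul_nonneg (hpol_nn s a) (hp_nn s a s')
          nlinarith [hγ1 s', hγ0 s']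
      _ = ∑ a, pol s a * ∑ s', p s a s' := by
          rw [Finset.sum_comm]
          exact Finset.sum_congr rfl fun a _ => by rw [Finset.mul_sum]
      _ = 1 := by simp only [hp_sum, mul_one, hpol_sum]
  obtain ⟨C, hC0, hC⟩ := matrix_bound hMnn hMsub hinv
  have hmle : ∀ t, filtSA St At t ≤ ‹MeasurableSpace Ω› :=
    filt_le St At hchain.smeas hchain.ameas
  have hGm0 : ∀ t, Measurable (G t) := fun t => (hGmeas t).mono (hmle t) le_rfl
  have hindm : ∀ (t : ℕ) (s : S), Measurable fun ω => (if St t ω = s then (1:ℝ) else 0) :=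
    fun t s => (measurable_of_countable (fun x : S => if x = s then (1:ℝ) else 0)).comp
      (hchain.smeas t)
  have hind01 : ∀ (t : ℕ) (s : S) (ω : Ω),
      0 ≤ (if St t ω = s then (1:ℝ) else 0) ∧ (if St t ω = s then (1:ℝ) else 0) ≤ 1 := by
    intro t s ω; by_cases hs : St t ω = s <;> simp [hs]
  set x : ℕ → S → ℝ := fun t s => ∫ ω, G t ω * (if St t ω = s then (1:ℝ) else 0) ∂P with hx
  have hxint : ∀ t s, Integrable (fun ω => G t ω * (if St t ω = s then (1:ℝ) else 0)) P := by
    intro t s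
    obtain ⟨K, hK0, hKb⟩ := hGbd t
    refine integrable_of_bdd ((hGm0 t).mul (hindm t s)).aestronglyMeasurable K fun ω => ?_
    have h1 := (hind01 t s ω).1; have h2 := (hind01 t s ω).2
    calc |G t ω * _| = |G t ω| * |if St t ω = s then (1:ℝ) else 0| := abs_mul _ _
      _ ≤ K * 1 := mul_le_mul (hKb ω) (by rw [abs_of_nonneg h1]; exact h2) (abs_nonneg _) hK0
      _ = K := mul_one K
  -- one-step identity
  have hstep : ∀ t s', x (t + 1) s' = (∑ s, M s s' * x t s)
      + ∫ ω, R (t + 1) ω * (if St (t + 1) ω = s' then (1:ℝ) else 0) ∂P := by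
    intro t s'
    obtain ⟨K, hK0, hKb⟩ := hGbd t
    obtain ⟨KR, hKR⟩ := hRbd (t + 1)
    set B : S → A → S → ℝ :=
      fun s a s'' => rho pol polb s a * (if s'' = s' then (1:ℝ) else 0) with hB
    set CB : ℝ := ∑ q : S × A × S, |B q.1 q.2.1 q.2.2| with hCB
    have hmid_int : Integrable (fun ω => G t ω * B (St t ω) (At t ω) (St (t + 1) ω)) P := by
      refine integrable_of_bdd ((hGm0 t).mul
        (meas3 hchain.smeas hchain.ameas t B)).aestronglyMeasurable (K * CB) fun ω => ?_
      calc |G t ω * B (St t ω) (At t ω) (St (t + 1) ω)|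
          = |G t ω| * |B (St t ω) (At t ω) (St (t + 1) ω)| := abs_mul _ _
        _ ≤ K * CB := mul_le_mul (hKb ω)
            (abs_le_total (fun q : S × A × S => B q.1 q.2.1 q.2.2)
              ⟨St t ω, At t ω, St (t + 1) ω⟩) (abs_nonneg _) hK0
    have hR_int : Integrable
        (fun ω => R (t + 1) ω * (if St (t + 1) ω = s' then (1:ℝ) else 0)) P := by
      refine integrable_of_bdd ((hRmeas (t + 1)).mul
        (hindm (t + 1) s')).aestronglyMeasurable |KR| fun ω => ?_
      have h1 := (hind01 (t + 1) s' ω).1; have h2 := (hind01 (t + 1) s' ω).2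
      calc |R (t + 1) ω * _| = |R (t + 1) ω| * |if St (t + 1) ω = s' then (1:ℝ) else 0| :=
            abs_mul _ _
        _ ≤ |KR| * 1 := mul_le_mul ((hKR ω).trans (le_abs_self KR))
            (by rw [abs_of_nonneg h1]; exact h2) (abs_nonneg _) (abs_nonneg _)
        _ = |KR| := mul_one _
    have hptw : (fun ω => G (t + 1) ω * (if St (t + 1) ω = s' then (1:ℝ) else 0))
        = fun ω => γf s' * (G t ω * B (St t ω) (At t ω) (St (t + 1) ω))
            + R (t + 1) ω * (if St (t + 1) ω = s' then (1:ℝ) else 0) := by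
      funext ω
      by_cases hs : St (t + 1) ω = s'
      · subst hs
        simp only [hrec t ω, hB, if_pos rfl]
        ring
      · simp only [hrec t ω, hB, if_neg hs]
        ring
    have hsplit : x (t + 1) s'
        = γf s' * (∫ ω, G t ω * B (St t ω) (At t ω) (St (t + 1) ω) ∂P)
          + ∫ ω, R (t + 1) ω * (if St (t + 1) ω = s' then (1:ℝ) else 0) ∂P := by
      rw [hx]
      simp only [hptw]
      rw [integral_add (hmid_int.const_mul (γf s')) hR_int, integral_const_mul]
    -- apply the master lemma to the middle term
    have hmaster := master hchain t (G t) (hGmeas t) K hK0 hKb B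
    have hsimp : ∀ s : S,
        (∑ a, ∑ s'', polb s a * p s a s'' * B s a s'') = ∑ a, pol s a * p s a s' := by
      intro s
      refine Finset.sum_congr rfl fun a _ => ?_
      have : ∀ s'' : S, polb s a * p s a s'' * B s a s''
          = if s'' = s' then polb s a * rho pol polb s a * p s a s'' else 0 := by
        intro s''
        by_cases h : s'' = s'
        · simp only [hB, if_pos h]; ring
        · simp only [hB, if_neg h]; ring
      simp only [this]
      simp only [Finset.sum_ite_eq', Finset.mem_univ, if_true]
      rw [hrel]
    have hmid : (∫ ω, G t ω * B (St t ω) (At t ω) (St (t + 1) ω) ∂P)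
        = ∑ s, (x t s) * (∑ a, pol s a * p s a s') := by
      rw [hmaster]
      have hptw2 : (fun ω => G t ω * ∑ a, ∑ s'',
            polb (St t ω) a * p (St t ω) a s'' * B (St t ω) a s'')
          = fun ω => ∑ s, (G t ω * (if St t ω = s then (1:ℝ) else 0))
              * (∑ a, pol s a * p s a s') := by
        funext ω
        have : ∀ s : S, (G t ω * (if St t ω = s then (1:ℝ) else 0))
            * (∑ a, pol s a * p s a s')
            = if St t ω = s then G t ω * ∑ a, pol (St t ω) a * p (St t ω) a s' else 0 := by
          intro s
          by_cases hss : St t ω = s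
          · rw [if_pos hss, if_pos hss, hss]; ring
          · rw [if_neg hss, if_neg hss]; ring
        simp only [this, Finset.sum_ite_eq, Finset.mem_univ, if_true, hsimp (St t ω)]
      rw [hptw2, integral_finset_sum]
      · exact Finset.sum_congr rfl fun s _ => integral_mul_const _ _
      · exact fun s _ => (hxint t s).mul_const _
    rw [hsplit, hmid, Finset.mul_sum]
    congr 1
    exact Finset.sum_congr rfl fun s _ => by rw [hMapp]; ring
  -- column sums of powers
  set cs : ℕ → S → ℝ := fun k s' => ∑ s0, (M ^ k) s0 s' with hcs
  have hcs0 : ∀ s', cs 0 s' = 1 := by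
    intro s'
    simp [cs, Matrix.one_apply, Finset.sum_ite_eq', Finset.mem_univ]
  have hcs_succ : ∀ k s', (∑ s, M s s' * cs k s) = cs (k + 1) s' := by
    intro k s'
    simp only [cs, Finset.mul_sum]
    rw [Finset.sum_comm]
    refine Finset.sum_congr rfl fun s0 _ => ?_
    rw [pow_succ, Matrix.mul_apply]
    exact Finset.sum_congr rfl fun s1 _ => mul_comm _ _
  obtain ⟨K0, hK00, hK0b⟩ := hGbd 0
  have hx0 : ∀ s, x 0 s ≤ K0 := by
    intro s
    have : (∫ ω, G 0 ω * (if St 0 ω = s then (1:ℝ) else 0) ∂P) ≤ ∫ _ω, K0 ∂P := by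
      refine integral_mono (hxint 0 s) (integrable_const K0) fun ω => ?_
      have h1 := (hind01 0 s ω).1; have h2 := (hind01 0 s ω).2
      have := abs_le.mp (hK0b ω)
      nlinarith
    have h2 : (∫ _ω, K0 ∂P) = K0 := by simp
    simp only [hx]
    exact this.trans (le_of_eq h2)
  have claim : ∀ t s', x t s' ≤ K0 * cs t s' + c * ∑ k ∈ Finset.range t, cs k s' := by
    intro t
    induction t with
    | zero => intro s'; rw [hcs0 s']; simpa using hx0 s'
    | succ t ih =>
      intro s'
      have expand : (∑ s, M s s' * (K0 * cs t s + c * ∑ k ∈ Finset.range t, cs k s))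
          = K0 * (∑ s, M s s' * cs t s)
            + c * ∑ s, M s s' * ∑ k ∈ Finset.range t, cs k s := by
        rw [Finset.mul_sum, Finset.mul_sum, ← Finset.sum_add_distrib]
        exact Finset.sum_congr rfl fun s _ => by ring
      have swap : (∑ s, M s s' * ∑ k ∈ Finset.range t, cs k s)
          = ∑ k ∈ Finset.range t, cs (k + 1) s' := by
        simp only [Finset.mul_sum]
        rw [Finset.sum_comm]
        exact Finset.sum_congr rfl fun k _ => hcs_succ k s'
      calc x (t + 1) s' = (∑ s, M s s' * x t s)
            + ∫ ω, R (t + 1) ω * (if St (t + 1) ω = s' then (1:ℝ) else 0) ∂P := hstep t s'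
        _ ≤ (∑ s, M s s' * (K0 * cs t s + c * ∑ k ∈ Finset.range t, cs k s)) + c :=
            add_le_add (Finset.sum_le_sum fun s _ =>
              mul_le_mul_of_nonneg_left (ih s) (hMnn s s')) (hRint t s')
        _ = K0 * cs (t + 1) s' + c * ∑ k ∈ Finset.range (t + 1), cs k s' := by
            rw [expand, swap, hcs_succ t s', Finset.sum_range_succ', hcs0]
            ring
  have hcs_le : ∀ t s', cs t s' ≤ (Fintype.card S : ℝ) := by
    intro t s'
    calc cs t s' ≤ ∑ _s0 : S, (1:ℝ) :=
          Finset.sum_le_sum fun s0 _ => pow_entry_le_one hMnn hMsub t s0 s'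
      _ = (Fintype.card S : ℝ) := by rw [Finset.sum_const, Finset.card_univ, nsmul_eq_mul, mul_one]
  have hcs_sum_le : ∀ t s', (∑ k ∈ Finset.range t, cs k s') ≤ (Fintype.card S : ℝ) * C := by
    intro t s'
    calc (∑ k ∈ Finset.range t, cs k s')
        = ∑ s0, ∑ k ∈ Finset.range t, (M ^ k) s0 s' := Finset.sum_comm
      _ ≤ ∑ s0, ∑ k ∈ Finset.range t, rs M k s0 := by
          refine Finset.sum_le_sum fun s0 _ => Finset.sum_le_sum fun k _ => ?_
          exact Finset.single_le_sum (f := fun r => (M ^ k) s0 r)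
            (fun r _ => pow_entry_nonneg hMnn k s0 r) (Finset.mem_univ s')
      _ ≤ ∑ _s0 : S, C := Finset.sum_le_sum fun s0 _ => hC t s0
      _ = (Fintype.card S : ℝ) * C := by rw [Finset.sum_const, Finset.card_univ, nsmul_eq_mul]
  refine ⟨K0 * (Fintype.card S : ℝ) + c * ((Fintype.card S : ℝ) * C), by positivity, ?_⟩
  intro t s
  calc x t s ≤ K0 * cs t s + c * ∑ k ∈ Finset.range t, cs k s := claim t s
    _ ≤ K0 * (Fintype.card S : ℝ) + c * ((Fintype.card S : ℝ) * C) :=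
        add_le_add (mul_le_mul_of_nonneg_left (hcs_le t s) hK00)
          (mul_le_mul_of_nonneg_left (hcs_sum_le t s) hc)

lemma integrable_mul_ind {P : Measure Ω} [IsProbabilityMeasure P] {g : Ω → ℝ}
    (hg : Measurable g) (K : ℝ) (hK : ∀ ω, |g ω| ≤ K) {T : Ω → S} (hT : Measurable T)
    (s : S) : Integrable (fun ω => g ω * (if T ω = s then (1:ℝ) else 0)) P := by
  have hm : Measurable fun ω => (if T ω = s then (1:ℝ) else 0) :=
    (measurable_of_countable fun x : S => if x = s then (1:ℝ) else 0).comp hT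
  refine integrable_of_bdd (hg.mul hm).aestronglyMeasurable |K| fun ω => ?_
  rw [abs_mul]
  by_cases h : T ω = s
  · simp only [if_pos h, abs_one, mul_one]
    exact (hK ω).trans (le_abs_self K)
  · simp only [if_neg h, abs_zero, mul_zero]
    positivity

lemma integral_mul_ind_le {P : Measure Ω} [IsProbabilityMeasure P] {g : Ω → ℝ}
    (hg : Measurable g) (K : ℝ) (hK0 : 0 ≤ K) (hgnn : ∀ ω, 0 ≤ g ω) (hgK : ∀ ω, g ω ≤ K)
    {T : Ω → S} (hT : Measurable T) (s : S) :
    (∫ ω, g ω * (if T ω = s then (1:ℝ) else 0) ∂P) ≤ K := by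
  have h1 : (∫ ω, g ω * (if T ω = s then (1:ℝ) else 0) ∂P) ≤ ∫ _ω, K ∂P := by
    refine integral_mono (integrable_mul_ind hg K
      (fun ω => abs_le.mpr ⟨by linarith [hgnn ω], hgK ω⟩) hT s)
      (integrable_const K) fun ω => ?_
    by_cases h : T ω = s
    · simpa [h] using hgK ω
    · simpa [h] using hK0
  simpa using h1

end Stmt2Aux

/-- Under Assumption 1, for any given initial condition `(e0, F0)`,
the emphatic trace iterates satisfy `sup_{t≥0} 𝔼[‖(e_t, F_t)‖] < ∞`
(with the ℓ∞ norm on `ℝ^n × ℝ`). -/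
theorem stmt2
    {S A : Type} [Fintype S] [Nonempty S] [Fintype A] [Nonempty A] [DecidableEq S]
    [MeasurableSpace S] [MeasurableSingletonClass S]
    [MeasurableSpace A] [MeasurableSingletonClass A]
    (p : S → A → S → ℝ) (pol polb : S → A → ℝ) (γf lamf ifun : S → ℝ)
    (hmodel : MDPModel p pol polb γf lamf ifun)
    (n : ℕ) (hn : 1 ≤ n) (φ : S → Fin n → ℝ)
    (Ω : Type) [MeasurableSpace Ω] (P : Measure Ω) [IsProbabilityMeasure P]
    (St : ℕ → Ω → S) (At : ℕ → Ω → A)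
    (hchain : IsBehaviorChain p polb P St At)
    (e : ℕ → Ω → Fin n → ℝ) (F : ℕ → Ω → ℝ) (e0 : Fin n → ℝ) (F0 : ℝ) (hF0 : 0 ≤ F0)
    (htrace : IsTrace pol polb γf lamf ifun φ St At e F e0 F0) :
    (⨆ t : ℕ, ∫⁻ ω, ↑‖(e t ω, F t ω)‖₊ ∂P) < ⊤ := by
  classical
  -- basic facts
  have hγ0 : ∀ s, 0 ≤ γf s := fun s => (hmodel.gamma_mem s).1
  have hγ1 : ∀ s, γf s ≤ 1 := fun s => (hmodel.gamma_mem s).2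
  have hlam0 : ∀ s, 0 ≤ lamf s := fun s => (hmodel.lambda_mem s).1
  have hlam1 : ∀ s, lamf s ≤ 1 := fun s => (hmodel.lambda_mem s).2
  have hρnn : ∀ s a, 0 ≤ rho pol polb s a := fun s a =>
    div_nonneg (hmodel.pol_nonneg s a) (hmodel.polb_nonneg s a)
  have hrel : ∀ s a, polb s a * rho pol polb s a = pol s a := by
    intro s a
    by_cases h : polb s a = 0
    · have hp0 : pol s a = 0 := by
        by_contra hp
        have hpos := hmodel.support s a
          (lt_of_le_of_ne (hmodel.pol_nonneg s a) (Ne.symm hp))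
        exact absurd h (ne_of_gt hpos)
      simp [rho, h, hp0]
    · show polb s a * (pol s a / polb s a) = pol s a
      field_simp
  have hinv : IsUnit
      (1 - (Matrix.of fun s s' => (∑ a, pol s a * p s a s') * γf s' : Matrix S S ℝ)) := by
    have hMeq : (Matrix.of fun s s' => (∑ a, pol s a * p s a s') * γf s' : Matrix S S ℝ)
        = Ppi p pol * Matrix.diagonal γf := by
      ext s s'
      rw [Matrix.mul_diagonal]
      rfl
    rw [hMeq]
    exact hmodel.inv
  -- constants
  set ρC : ℝ := ∑ q : S × A, |rho pol polb q.1 q.2| with hρC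
  have hρC0 : 0 ≤ ρC := Stmt2Aux.total_nonneg _
  have hρb : ∀ s a, |rho pol polb s a| ≤ ρC := fun s a =>
    Stmt2Aux.abs_le_total (fun q : S × A => rho pol polb q.1 q.2) (s, a)
  set iC : ℝ := ∑ s, ifun s with hiC
  have hiC0 : 0 ≤ iC := Finset.sum_nonneg fun s _ => hmodel.interest_nonneg s
  have hib : ∀ s, ifun s ≤ iC :=
    fun s => Finset.single_le_sum (f := ifun)
      (fun s' _ => hmodel.interest_nonneg s') (Finset.mem_univ s)
  set Φ : ℝ := ∑ s, ‖φ s‖ with hΦ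
  have hΦ0 : 0 ≤ Φ := Finset.sum_nonneg fun s _ => norm_nonneg _
  have hφb : ∀ s, ‖φ s‖ ≤ Φ :=
    fun s => Finset.single_le_sum (f := fun s => ‖φ s‖)
      (fun s' _ => norm_nonneg _) (Finset.mem_univ s)
  -- F : nonneg, bounded, adapted
  have hFnn : ∀ t ω, 0 ≤ F t ω := by
    intro t
    induction t with
    | zero => intro ω; rw [htrace.init_F ω]; exact hF0
    | succ t ih =>
      intro ω
      rw [htrace.rec_F t ω]
      have := mul_nonneg (mul_nonneg (hγ0 (St (t+1) ω)) (hρnn (St t ω) (At t ω))) (ih ω)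
      linarith [hmodel.interest_nonneg (St (t+1) ω)]
  have hFbd : ∀ t, ∃ K, 0 ≤ K ∧ ∀ ω, |F t ω| ≤ K := by
    intro t
    induction t with
    | zero =>
      exact ⟨|F0|, abs_nonneg _, fun ω => by rw [htrace.init_F ω]⟩
    | succ t ih =>
      obtain ⟨K, hK0, hKb⟩ := ih
      refine ⟨ρC * K + iC, by positivity, fun ω => ?_⟩
      rw [htrace.rec_F t ω]
      have h1 : |γf (St (t+1) ω)| ≤ 1 :=
        abs_le.mpr ⟨by linarith [hγ0 (St (t+1) ω)], hγ1 (St (t+1) ω)⟩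
      have hbc : |rho pol polb (St t ω) (At t ω)| * |F t ω| ≤ ρC * K :=
        mul_le_mul (hρb _ _) (hKb ω) (abs_nonneg _) hρC0
      have h2 : |γf (St (t+1) ω)| * (|rho pol polb (St t ω) (At t ω)| * |F t ω|)
          ≤ 1 * (ρC * K) :=
        mul_le_mul h1 hbc (by positivity) zero_le_one
      have h3 : |ifun (St (t+1) ω)| ≤ iC := by
        rw [abs_of_nonneg (hmodel.interest_nonneg _)]; exact hib _
      calc |γf (St (t+1) ω) * rho pol polb (St t ω) (At t ω) * F t ω + ifun (St (t+1) ω)|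
          ≤ |γf (St (t+1) ω) * rho pol polb (St t ω) (At t ω) * F t ω|
            + |ifun (St (t+1) ω)| := abs_add_le _ _
        _ = |γf (St (t+1) ω)| * (|rho pol polb (St t ω) (At t ω)| * |F t ω|)
            + |ifun (St (t+1) ω)| := by rw [abs_mul, abs_mul, mul_assoc]
        _ ≤ 1 * (ρC * K) + iC := add_le_add h2 h3
        _ = ρC * K + iC := by ring
  have hFmeas : ∀ t, Measurable[filtSA St At t] (F t) := by
    intro t
    induction t with
    | zero =>
      have hF0eq : F 0 = fun _ => F0 := funext htrace.init_F
      rw [hF0eq]; exact measurable_const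
    | succ t ih =>
      have hFeq : F (t+1) = fun ω =>
          γf (St (t+1) ω) * rho pol polb (St t ω) (At t ω) * F t ω
            + ifun (St (t+1) ω) := funext (htrace.rec_F t)
      rw [hFeq]
      have h1 : Measurable[filtSA St At (t+1)] fun ω => γf (St (t+1) ω) :=
        (measurable_of_countable γf).comp (Stmt2Aux.St_meas_filt St At le_rfl)
      have h2 : Measurable[filtSA St At (t+1)]
          fun ω => rho pol polb (St t ω) (At t ω) :=
        (measurable_of_countable fun q : S × A => rho pol polb q.1 q.2).comp
          ((Stmt2Aux.St_meas_filt St At (Nat.le_succ t)).prodMk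
            (Stmt2Aux.At_meas_filt St At (Nat.lt_succ_self t)))
      have h3 : Measurable[filtSA St At (t+1)] (F t) :=
        ih.mono (Stmt2Aux.filt_mono St At (Nat.le_succ t)) le_rfl
      have h4 : Measurable[filtSA St At (t+1)] fun ω => ifun (St (t+1) ω) :=
        (measurable_of_countable ifun).comp (Stmt2Aux.St_meas_filt St At le_rfl)
      exact ((h1.mul h2).mul h3).add h4
  have hFm0 : ∀ t, Measurable (F t) := fun t =>
    (hFmeas t).mono (Stmt2Aux.filt_le St At hchain.smeas hchain.ameas t) le_rfl
  -- apply the core lemma to F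
  have hRbdF : ∀ t : ℕ, ∃ K : ℝ, ∀ ω, |ifun (St t ω)| ≤ K := fun t =>
    ⟨iC, fun ω => by rw [abs_of_nonneg (hmodel.interest_nonneg _)]; exact hib _⟩
  have hRintF : ∀ (t : ℕ) (s' : S),
      (∫ ω, ifun (St (t+1) ω) * (if St (t+1) ω = s' then (1:ℝ) else 0) ∂P) ≤ iC :=
    fun t s' => Stmt2Aux.integral_mul_ind_le (g := fun ω => ifun (St (t+1) ω))
      ((measurable_of_countable ifun).comp (hchain.smeas (t+1))) iC hiC0
      (fun ω => hmodel.interest_nonneg _) (fun ω => hib _) (hchain.smeas (t+1)) s'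
  obtain ⟨B, hB0, hBx⟩ := Stmt2Aux.core hmodel.pol_nonneg hmodel.p_nonneg hmodel.p_sum
    hmodel.pol_sum hγ0 hγ1 hrel hinv hchain F (fun t ω => ifun (St t ω)) hFmeas hFbd
    (htrace.rec_F) (fun t => (measurable_of_countable ifun).comp (hchain.smeas t))
    hRbdF iC hiC0 hRintF
  -- the dominating process H for ‖e‖
  obtain ⟨H, hH0, hHrec⟩ : ∃ H : ℕ → Ω → ℝ, (∀ ω, H 0 ω = ‖e0‖) ∧ ∀ t ω,
      H (t+1) ω = γf (St (t+1) ω) * rho pol polb (St t ω) (At t ω) * H t ω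
        + Φ * (ifun (St (t+1) ω) + F (t+1) ω) :=
    ⟨fun t => Nat.rec (fun _ => ‖e0‖) (fun t Ht ω =>
        γf (St (t+1) ω) * rho pol polb (St t ω) (At t ω) * Ht ω
          + Φ * (ifun (St (t+1) ω) + F (t+1) ω)) t,
      fun _ => rfl, fun _ _ => rfl⟩
  have hHnn : ∀ t ω, 0 ≤ H t ω := by
    intro t
    induction t with
    | zero => intro ω; rw [hH0 ω]; exact norm_nonneg _
    | succ t ih =>
      intro ω
      rw [hHrec t ω]
      have h1 := mul_nonneg (mul_nonneg (hγ0 (St (t+1) ω)) (hρnn (St t ω) (At t ω))) (ih ω)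
      have h2 : 0 ≤ Φ * (ifun (St (t+1) ω) + F (t+1) ω) :=
        mul_nonneg hΦ0 (by linarith [hmodel.interest_nonneg (St (t+1) ω), hFnn (t+1) ω])
      linarith
  have hHbd : ∀ t, ∃ K, 0 ≤ K ∧ ∀ ω, |H t ω| ≤ K := by
    intro t
    induction t with
    | zero => exact ⟨‖e0‖, norm_nonneg _, fun ω => by rw [hH0 ω, abs_of_nonneg (norm_nonneg _)]⟩
    | succ t ih =>
      obtain ⟨K, hK0, hKb⟩ := ih
      obtain ⟨KF, hKF0, hKFb⟩ := hFbd (t+1)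
      refine ⟨ρC * K + Φ * (iC + KF), by positivity, fun ω => ?_⟩
      rw [hHrec t ω]
      have h1 : |γf (St (t+1) ω)| ≤ 1 :=
        abs_le.mpr ⟨by linarith [hγ0 (St (t+1) ω)], hγ1 (St (t+1) ω)⟩
      have hbc : |rho pol polb (St t ω) (At t ω)| * |H t ω| ≤ ρC * K :=
        mul_le_mul (hρb _ _) (hKb ω) (abs_nonneg _) hρC0
      have h2 : |γf (St (t+1) ω)| * (|rho pol polb (St t ω) (At t ω)| * |H t ω|)
          ≤ 1 * (ρC * K) :=
        mul_le_mul h1 hbc (by positivity) zero_le_one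
      have h3 : |Φ * (ifun (St (t+1) ω) + F (t+1) ω)| ≤ Φ * (iC + KF) := by
        rw [abs_mul, abs_of_nonneg hΦ0]
        refine mul_le_mul_of_nonneg_left ?_ hΦ0
        have h4 : |ifun (St (t+1) ω) + F (t+1) ω|
            ≤ |ifun (St (t+1) ω)| + |F (t+1) ω| := abs_add_le _ _
        have h5 : |ifun (St (t+1) ω)| ≤ iC := by
          rw [abs_of_nonneg (hmodel.interest_nonneg _)]; exact hib _
        have h6 : |F (t+1) ω| ≤ KF := hKFb ω
        linarith
      calc |γf (St (t+1) ω) * rho pol polb (St t ω) (At t ω) * H t ω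
            + Φ * (ifun (St (t+1) ω) + F (t+1) ω)|
          ≤ |γf (St (t+1) ω) * rho pol polb (St t ω) (At t ω) * H t ω|
            + |Φ * (ifun (St (t+1) ω) + F (t+1) ω)| := abs_add_le _ _
        _ = |γf (St (t+1) ω)| * (|rho pol polb (St t ω) (At t ω)| * |H t ω|)
            + |Φ * (ifun (St (t+1) ω) + F (t+1) ω)| := by rw [abs_mul, abs_mul, mul_assoc]
        _ ≤ 1 * (ρC * K) + Φ * (iC + KF) := add_le_add h2 h3
        _ = ρC * K + Φ * (iC + KF) := by ring
  have hHmeas : ∀ t, Measurable[filtSA St At t] (H t) := by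
    intro t
    induction t with
    | zero =>
      have hHeq : H 0 = fun _ => ‖e0‖ := funext hH0
      rw [hHeq]; exact measurable_const
    | succ t ih =>
      have hHeq : H (t+1) = fun ω =>
          γf (St (t+1) ω) * rho pol polb (St t ω) (At t ω) * H t ω
            + Φ * (ifun (St (t+1) ω) + F (t+1) ω) := funext (hHrec t)
      rw [hHeq]
      have h1 : Measurable[filtSA St At (t+1)] fun ω => γf (St (t+1) ω) :=
        (measurable_of_countable γf).comp (Stmt2Aux.St_meas_filt St At le_rfl)
      have h2 : Measurable[filtSA St At (t+1)]
          fun ω => rho pol polb (St t ω) (At t ω) :=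
        (measurable_of_countable fun q : S × A => rho pol polb q.1 q.2).comp
          ((Stmt2Aux.St_meas_filt St At (Nat.le_succ t)).prodMk
            (Stmt2Aux.At_meas_filt St At (Nat.lt_succ_self t)))
      have h3 : Measurable[filtSA St At (t+1)] (H t) :=
        ih.mono (Stmt2Aux.filt_mono St At (Nat.le_succ t)) le_rfl
      have h4 : Measurable[filtSA St At (t+1)] fun ω => ifun (St (t+1) ω) :=
        (measurable_of_countable ifun).comp (Stmt2Aux.St_meas_filt St At le_rfl)
      exact ((h1.mul h2).mul h3).add
        ((measurable_const).mul (h4.add (hFmeas (t+1))))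
  have hHm0 : ∀ t, Measurable (H t) := fun t =>
    (hHmeas t).mono (Stmt2Aux.filt_le St At hchain.smeas hchain.ameas t) le_rfl
  -- apply the core lemma to H
  have hRbdH : ∀ t : ℕ, ∃ K : ℝ, ∀ ω, |Φ * (ifun (St t ω) + F t ω)| ≤ K := by
    intro t
    obtain ⟨KF, hKF0, hKFb⟩ := hFbd t
    refine ⟨Φ * (iC + KF), fun ω => ?_⟩
    rw [abs_mul, abs_of_nonneg hΦ0]
    refine mul_le_mul_of_nonneg_left ?_ hΦ0
    have h4 := abs_add_le (ifun (St t ω)) (F t ω)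
    have h5 : |ifun (St t ω)| ≤ iC := by
      rw [abs_of_nonneg (hmodel.interest_nonneg _)]; exact hib _
    linarith [hKFb ω]
  have hRintH : ∀ (t : ℕ) (s' : S),
      (∫ ω, (Φ * (ifun (St (t+1) ω) + F (t+1) ω))
        * (if St (t+1) ω = s' then (1:ℝ) else 0) ∂P) ≤ Φ * (iC + B) := by
    intro t s'
    obtain ⟨KF, hKF0, hKFb⟩ := hFbd (t+1)
    have hsplit : (fun ω => (Φ * (ifun (St (t+1) ω) + F (t+1) ω))
          * (if St (t+1) ω = s' then (1:ℝ) else 0))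
        = fun ω => Φ * ((ifun (St (t+1) ω)) * (if St (t+1) ω = s' then (1:ℝ) else 0))
          + Φ * ((F (t+1) ω) * (if St (t+1) ω = s' then (1:ℝ) else 0)) := by
      funext ω; ring
    rw [hsplit]
    have hint1 : Integrable
        (fun ω => ifun (St (t+1) ω) * (if St (t+1) ω = s' then (1:ℝ) else 0)) P :=
      Stmt2Aux.integrable_mul_ind (g := fun ω => ifun (St (t+1) ω))
        ((measurable_of_countable ifun).comp (hchain.smeas (t+1)))
        iC (fun ω => by rw [abs_of_nonneg (hmodel.interest_nonneg _)]; exact hib _)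
        (hchain.smeas (t+1)) s'
    have hint2 : Integrable
        (fun ω => F (t+1) ω * (if St (t+1) ω = s' then (1:ℝ) else 0)) P :=
      Stmt2Aux.integrable_mul_ind (hFm0 (t+1)) KF hKFb (hchain.smeas (t+1)) s'
    rw [integral_add (hint1.const_mul Φ) (hint2.const_mul Φ),
      integral_const_mul, integral_const_mul]
    have hle1 : (∫ ω, ifun (St (t+1) ω) * (if St (t+1) ω = s' then (1:ℝ) else 0) ∂P)
        ≤ iC :=
      Stmt2Aux.integral_mul_ind_le (g := fun ω => ifun (St (t+1) ω))
        ((measurable_of_countable ifun).comp (hchain.smeas (t+1)))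
        iC hiC0 (fun ω => hmodel.interest_nonneg _) (fun ω => hib _) (hchain.smeas (t+1)) s'
    have hle2 := hBx (t+1) s'
    have := add_le_add (mul_le_mul_of_nonneg_left hle1 hΦ0)
      (mul_le_mul_of_nonneg_left hle2 hΦ0)
    linarith
  obtain ⟨D, hD0, hDx⟩ := Stmt2Aux.core hmodel.pol_nonneg hmodel.p_nonneg hmodel.p_sum
    hmodel.pol_sum hγ0 hγ1 hrel hinv hchain H
    (fun t ω => Φ * (ifun (St t ω) + F t ω)) hHmeas hHbd hHrec
    (fun t => measurable_const.mul
      (((measurable_of_countable ifun).comp (hchain.smeas t)).add (hFm0 t)))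
    hRbdH (Φ * (iC + B)) (mul_nonneg hΦ0 (by linarith)) hRintH
  -- pointwise bound ‖e t ω‖ ≤ H t ω
  have he : ∀ t ω, ‖e t ω‖ ≤ H t ω := by
    intro t
    induction t with
    | zero => intro ω; rw [htrace.init_e ω, hH0 ω]
    | succ t ih =>
      intro ω
      rw [htrace.rec_e t ω, hHrec t ω]
      set lam := lamf (St (t+1) ω) with hlam
      set γ := γf (St (t+1) ω) with hγ
      set ρ := rho pol polb (St t ω) (At t ω) with hρ
      set i := ifun (St (t+1) ω) with hi
      have hγρ : 0 ≤ γ * ρ := mul_nonneg (hγ0 _) (hρnn _ _)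
      have ha : |lam * γ * ρ| ≤ γ * ρ := by
        rw [abs_of_nonneg (mul_nonneg (mul_nonneg (hlam0 (St (t+1) ω)) (hγ0 (St (t+1) ω)))
          (hρnn (St t ω) (At t ω)))]
        nlinarith [hlam1 (St (t+1) ω), hlam0 (St (t+1) ω)]
      have hbnn : 0 ≤ lam * i + (1 - lam) * F (t+1) ω := by
        have := hmodel.interest_nonneg (St (t+1) ω)
        have := hFnn (t+1) ω
        have := hlam0 (St (t+1) ω)
        have := hlam1 (St (t+1) ω)
        nlinarith
      have hb : |lam * i + (1 - lam) * F (t+1) ω| ≤ i + F (t+1) ω := by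
        rw [abs_of_nonneg hbnn]
        have h1 := hmodel.interest_nonneg (St (t+1) ω)
        have h2 := hFnn (t+1) ω
        have h3 := hlam0 (St (t+1) ω)
        have h4 := hlam1 (St (t+1) ω)
        nlinarith
      calc ‖(lam * γ * ρ) • e t ω + (lam * i + (1 - lam) * F (t+1) ω) • φ (St (t+1) ω)‖
          ≤ ‖(lam * γ * ρ) • e t ω‖ + ‖(lam * i + (1 - lam) * F (t+1) ω) • φ (St (t+1) ω)‖ :=
            norm_add_le _ _
        _ = |lam * γ * ρ| * ‖e t ω‖
            + |lam * i + (1 - lam) * F (t+1) ω| * ‖φ (St (t+1) ω)‖ := by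
            rw [norm_smul, norm_smul, Real.norm_eq_abs, Real.norm_eq_abs]
        _ ≤ (γ * ρ) * H t ω + (i + F (t+1) ω) * Φ := by
            refine add_le_add ?_ ?_
            · exact mul_le_mul ha (ih ω) (norm_nonneg _) hγρ
            · refine mul_le_mul hb (hφb _) (norm_nonneg _) ?_
              have := hmodel.interest_nonneg (St (t+1) ω)
              have := hFnn (t+1) ω
              linarith
        _ = γ * ρ * H t ω + Φ * (i + F (t+1) ω) := by ring
  -- integrate
  have hint_H : ∀ t, Integrable (H t) P := by
    intro t
    obtain ⟨K, hK0, hKb⟩ := hHbd t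
    exact Stmt2Aux.integrable_of_bdd (hHm0 t).aestronglyMeasurable K hKb
  have hint_F : ∀ t, Integrable (F t) P := by
    intro t
    obtain ⟨K, hK0, hKb⟩ := hFbd t
    exact Stmt2Aux.integrable_of_bdd (hFm0 t).aestronglyMeasurable K hKb
  have hsum_ind : ∀ (t : ℕ) (g : Ω → ℝ) (ω : Ω),
      g ω = ∑ s, g ω * (if St t ω = s then (1:ℝ) else 0) := by
    intro t g ω
    rw [← Finset.mul_sum, Finset.sum_ite_eq, if_pos (Finset.mem_univ _), mul_one]
  have hEH : ∀ t, (∫ ω, H t ω ∂P) ≤ (Fintype.card S : ℝ) * D := by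
    intro t
    obtain ⟨K, hK0, hKb⟩ := hHbd t
    have hdec : (∫ ω, H t ω ∂P)
        = ∑ s, ∫ ω, H t ω * (if St t ω = s then (1:ℝ) else 0) ∂P := by
      rw [← integral_finset_sum _ fun s _ =>
        Stmt2Aux.integrable_mul_ind (hHm0 t) K hKb (hchain.smeas t) s]
      exact integral_congr_ae (Filter.Eventually.of_forall fun ω => hsum_ind t (H t) ω)
    rw [hdec]
    calc (∑ s, ∫ ω, H t ω * (if St t ω = s then (1:ℝ) else 0) ∂P)
        ≤ ∑ _s : S, D := Finset.sum_le_sum fun s _ => hDx t s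
      _ = (Fintype.card S : ℝ) * D := by
          rw [Finset.sum_const, Finset.card_univ, nsmul_eq_mul]
  have hEF : ∀ t, (∫ ω, F t ω ∂P) ≤ (Fintype.card S : ℝ) * B := by
    intro t
    obtain ⟨K, hK0, hKb⟩ := hFbd t
    have hdec : (∫ ω, F t ω ∂P)
        = ∑ s, ∫ ω, F t ω * (if St t ω = s then (1:ℝ) else 0) ∂P := by
      rw [← integral_finset_sum _ fun s _ =>
        Stmt2Aux.integrable_mul_ind (hFm0 t) K hKb (hchain.smeas t) s]
      exact integral_congr_ae (Filter.Eventually.of_forall fun ω => hsum_ind t (F t) ω)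
    rw [hdec]
    calc (∑ s, ∫ ω, F t ω * (if St t ω = s then (1:ℝ) else 0) ∂P)
        ≤ ∑ _s : S, B := Finset.sum_le_sum fun s _ => hBx t s
      _ = (Fintype.card S : ℝ) * B := by
          rw [Finset.sum_const, Finset.card_univ, nsmul_eq_mul]
  have hbound : ∀ t, (∫⁻ ω, ↑‖(e t ω, F t ω)‖₊ ∂P)
      ≤ ENNReal.ofReal ((Fintype.card S : ℝ) * D + (Fintype.card S : ℝ) * B) := by
    intro t
    have hptw : ∀ ω, (↑‖(e t ω, F t ω)‖₊ : ENNReal) ≤ ENNReal.ofReal (H t ω + F t ω) := by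
      intro ω
      rw [← enorm_eq_nnnorm, ← ofReal_norm]
      refine ENNReal.ofReal_le_ofReal ?_
      rw [Prod.norm_def]
      refine max_le ?_ ?_
      · have := he t ω; have := hFnn t ω; linarith
      · rw [Real.norm_eq_abs, abs_of_nonneg (hFnn t ω)]
        linarith [hHnn t ω]
    calc (∫⁻ ω, ↑‖(e t ω, F t ω)‖₊ ∂P)
        ≤ ∫⁻ ω, ENNReal.ofReal (H t ω + F t ω) ∂P := lintegral_mono hptw
      _ = ENNReal.ofReal (∫ ω, H t ω + F t ω ∂P) := by
          have hint : Integrable (fun ω => H t ω + F t ω) P := (hint_H t).add (hint_F t)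
          rw [← ofReal_integral_eq_lintegral_ofReal hint
            (Filter.Eventually.of_forall fun ω => by
              have := hHnn t ω; have := hFnn t ω
              simpa using by linarith)]
      _ ≤ ENNReal.ofReal ((Fintype.card S : ℝ) * D + (Fintype.card S : ℝ) * B) := by
          refine ENNReal.ofReal_le_ofReal ?_
          rw [integral_add (hint_H t) (hint_F t)]
          exact add_le_add (hEH t) (hEF t)
  exact lt_of_le_of_lt (iSup_le hbound) ENNReal.ofReal_lt_top
end

section
/- Let (e_t, F_t)_{t≥0} and (ê_t, F̂_t)_{t≥0} be emphatic trace iterates defined by the same recursions, driven by the same random state-action sequence (S_t, A_t), but starting from two possibly different initial conditions (e_0, F_0) and (ê_0, F̂_0). Under Assumption 1, F_t − F̂_t → 0 almost surely and e_t − ê_t → 0 (the zero vector of ℝ^n) almost surely as t → ∞. -/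
open MeasureTheory Filter Finset

set_option linter.unusedSectionVars false

noncomputable section AuxDet
variable {S A : Type} [Fintype S] [Nonempty S] [Fintype A] [Nonempty A] [DecidableEq S]
  (p : S → A → S → ℝ) (pol polb : S → A → ℝ) (γf lamf ifun : S → ℝ)

/-- action of `P_π Γ` on functions -/
def op1 (h : S → ℝ) : S → ℝ := fun s => ∑ a, ∑ s', pol s a * p s a s' * γf s' * h s'

def vfun (t : ℕ) : S → ℝ := (op1 p pol γf)^[t] (fun _ => 1)

variable {p pol polb γf lamf ifun}
variable (hm : MDPModel p pol polb γf lamf ifun)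
include hm

lemma w_nonneg (s : S) (a : A) (s' : S) : 0 ≤ pol s a * p s a s' * γf s' :=
  mul_nonneg (mul_nonneg (hm.pol_nonneg s a) (hm.p_nonneg s a s')) (hm.gamma_mem s').1

lemma op1_mono {h h' : S → ℝ} (hh : ∀ s, h s ≤ h' s) (s : S) :
    op1 p pol γf h s ≤ op1 p pol γf h' s := by
  refine Finset.sum_le_sum fun a _ => Finset.sum_le_sum fun s' _ => ?_
  exact mul_le_mul_of_nonneg_left (hh s') (w_nonneg hm s a s')

lemma op1_const_mul (c : ℝ) (h : S → ℝ) (s : S) :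
    op1 p pol γf (fun x => c * h x) s = c * op1 p pol γf h s := by
  simp only [op1, Finset.mul_sum]; congr 1; ext a; congr 1; ext s'; ring

lemma op1_one_le (s : S) : op1 p pol γf (fun _ => 1) s ≤ 1 := by
  have : op1 p pol γf (fun _ => 1) s ≤ ∑ a, ∑ s', pol s a * p s a s' := by
    refine Finset.sum_le_sum fun a _ => Finset.sum_le_sum fun s' _ => ?_
    show pol s a * p s a s' * γf s' * 1 ≤ pol s a * p s a s'
    rw [mul_one]
    exact mul_le_of_le_one_right (mul_nonneg (hm.pol_nonneg s a) (hm.p_nonneg s a s'))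
      (hm.gamma_mem s').2
  calc op1 p pol γf (fun _ => 1) s ≤ ∑ a, ∑ s', pol s a * p s a s' := this
    _ = ∑ a, pol s a := by
        refine Finset.sum_congr rfl fun a _ => ?_
        rw [← Finset.mul_sum, hm.p_sum s a, mul_one]
    _ = 1 := hm.pol_sum s

lemma vfun_succ (t : ℕ) : vfun p pol γf (t + 1) = op1 p pol γf (vfun p pol γf t) :=
  Function.iterate_succ_apply' _ _ _

lemma vfun_nonneg (t : ℕ) (s : S) : 0 ≤ vfun p pol γf t s := by
  induction t generalizing s with
  | zero => simp [vfun]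
  | succ t ih =>
    rw [vfun_succ hm]
    exact Finset.sum_nonneg fun a _ => Finset.sum_nonneg fun s' _ =>
      mul_nonneg (w_nonneg hm s a s') (ih s')

lemma vfun_le_one (t : ℕ) (s : S) : vfun p pol γf t s ≤ 1 := by
  induction t generalizing s with
  | zero => simp [vfun]
  | succ t ih =>
    rw [vfun_succ hm]
    exact le_trans (op1_mono hm ih s) (op1_one_le hm s)

lemma vfun_antitone (t : ℕ) (s : S) : vfun p pol γf (t + 1) s ≤ vfun p pol γf t s := by
  induction t generalizing s with
  | zero => simpa [vfun] using vfun_le_one hm 1 s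
  | succ t ih =>
    calc vfun p pol γf (t + 1 + 1) s = op1 p pol γf (vfun p pol γf (t + 1)) s := by
          rw [vfun_succ hm]
      _ ≤ op1 p pol γf (vfun p pol γf t) s := op1_mono hm (fun s' => ih s') s
      _ = vfun p pol γf (t + 1) s := by rw [vfun_succ hm]

lemma vfun_tendsto_zero (s : S) :
    Tendsto (fun t => vfun p pol γf t s) atTop (nhds 0) := by
  -- limit function
  set L : S → ℝ := fun s => ⨅ t, vfun p pol γf t s with hL
  have hanti : ∀ s : S, Antitone fun t => vfun p pol γf t s := fun s =>
    antitone_nat_of_succ_le fun t => vfun_antitone hm t s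
  have hbdd : ∀ s : S, BddBelow (Set.range fun t => vfun p pol γf t s) := fun s =>
    ⟨0, fun x ⟨t, ht⟩ => ht ▸ vfun_nonneg hm t s⟩
  have htend : ∀ s : S, Tendsto (fun t => vfun p pol γf t s) atTop (nhds (L s)) :=
    fun s => tendsto_atTop_ciInf (hanti s) (hbdd s)
  -- L is a fixed point of op1
  have hfix : ∀ s : S, op1 p pol γf L s = L s := by
    intro s
    have h1 : Tendsto (fun t => vfun p pol γf (t + 1) s) atTop (nhds (L s)) :=
      (htend s).comp (tendsto_add_atTop_nat 1)
    have h2 : Tendsto (fun t => op1 p pol γf (vfun p pol γf t) s) atTop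
        (nhds (op1 p pol γf L s)) := by
      unfold op1
      refine tendsto_finset_sum _ fun a _ => tendsto_finset_sum _ fun s' _ => ?_
      exact (htend s').const_mul _
    have : ∀ t, vfun p pol γf (t + 1) s = op1 p pol γf (vfun p pol γf t) s := fun t => by
      rw [vfun_succ hm]
    rw [funext this] at h1
    exact (tendsto_nhds_unique h2 h1)
  -- L = 0 by invertibility
  have hmul : (1 - Ppi p pol * Matrix.diagonal γf).mulVec L = 0 := by
    funext s
    have hMop : (Ppi p pol * Matrix.diagonal γf).mulVec L s = op1 p pol γf L s := by
      simp only [Matrix.mulVec, dotProduct, Matrix.mul_diagonal, Ppi, Matrix.of_apply,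
        op1]
      rw [Finset.sum_comm]
      refine Finset.sum_congr rfl fun s' _ => ?_
      rw [Finset.sum_mul, Finset.sum_mul]
    simp only [Matrix.sub_mulVec, Matrix.one_mulVec, Pi.sub_apply, hMop, hfix s, sub_self,
      Pi.zero_apply]
  have hdet : IsUnit (1 - Ppi p pol * Matrix.diagonal γf).det :=
    (Matrix.isUnit_iff_isUnit_det _).1 hm.inv
  have hL0 : L = 0 := by
    have := congrArg ((1 - Ppi p pol * Matrix.diagonal γf)⁻¹).mulVec hmul
    rwa [Matrix.mulVec_mulVec, Matrix.nonsing_inv_mul _ hdet, Matrix.one_mulVec,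
      Matrix.mulVec_zero] at this
  have := htend s
  rw [hL0] at this
  simpa using this

end AuxDet

section AuxC
variable {S A : Type} [Fintype S] [Nonempty S] [Fintype A] [Nonempty A] [DecidableEq S]
  {p : S → A → S → ℝ} {pol polb : S → A → ℝ} {γf lamf ifun : S → ℝ}

/-- max over states of `vfun` -/
noncomputable def cfun (p : S → A → S → ℝ) (pol : S → A → ℝ) (γf : S → ℝ) (t : ℕ) : ℝ :=
  Finset.univ.sup' Finset.univ_nonempty (vfun p pol γf t)

variable (hm : MDPModel p pol polb γf lamf ifun)
include hm

lemma vfun_le_cfun (t : ℕ) (s : S) : vfun p pol γf t s ≤ cfun p pol γf t :=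
  Finset.le_sup' _ (Finset.mem_univ s)

lemma cfun_le_one (t : ℕ) : cfun p pol γf t ≤ 1 :=
  Finset.sup'_le _ _ fun s _ => vfun_le_one hm t s

lemma cfun_nonneg (t : ℕ) : 0 ≤ cfun p pol γf t := by
  obtain ⟨s⟩ := (inferInstance : Nonempty S)
  exact le_trans (vfun_nonneg hm t s) (vfun_le_cfun hm t s)

lemma iterate_le (a : ℝ) (ha : 0 ≤ a) {h : S → ℝ} (hh : ∀ s, h s ≤ a) :
    ∀ t s, (op1 p pol γf)^[t] h s ≤ a * vfun p pol γf t s := by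
  intro t
  induction t with
  | zero => intro s; simpa [vfun] using hh s
  | succ t ih =>
    intro s
    rw [Function.iterate_succ_apply', vfun_succ hm]
    calc op1 p pol γf ((op1 p pol γf)^[t] h) s
        ≤ op1 p pol γf (fun x => a * vfun p pol γf t x) s := op1_mono hm ih s
      _ = a * op1 p pol γf (vfun p pol γf t) s := op1_const_mul hm a _ s
  
lemma cfun_add (T t : ℕ) : cfun p pol γf (t + T) ≤ cfun p pol γf T * cfun p pol γf t := by
  refine Finset.sup'_le _ _ fun s _ => ?_
  have h1 : vfun p pol γf (t + T) s = (op1 p pol γf)^[t] (vfun p pol γf T) s := by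
    rw [vfun, Function.iterate_add_apply]; rfl
  rw [h1]
  calc (op1 p pol γf)^[t] (vfun p pol γf T) s
      ≤ cfun p pol γf T * vfun p pol γf t s :=
        iterate_le hm _ (cfun_nonneg hm T) (vfun_le_cfun hm T) t s
    _ ≤ cfun p pol γf T * cfun p pol γf t :=
        mul_le_mul_of_nonneg_left (vfun_le_cfun hm t s) (cfun_nonneg hm T)

lemma cfun_geo {T : ℕ} (hT : cfun p pol γf T ≤ 1 / 2) :
    ∀ k j, cfun p pol γf (T * k + j) ≤ (1 / 2 : ℝ) ^ k := by
  intro k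
  induction k with
  | zero => intro j; simpa using cfun_le_one hm j
  | succ k ih =>
    intro j
    have h1 : T * (k + 1) + j = (T * k + j) + T := by ring
    rw [h1]
    calc cfun p pol γf ((T * k + j) + T) ≤ cfun p pol γf T * cfun p pol γf (T * k + j) :=
          cfun_add hm T (T * k + j)
      _ ≤ (1 / 2) * (1 / 2 : ℝ) ^ k := by
          exact mul_le_mul hT (ih j) (cfun_nonneg hm _) (by norm_num)
      _ = (1 / 2 : ℝ) ^ (k + 1) := by ring

/-- there is `T ≥ 1` with `cfun T ≤ 1/2` -/
lemma exists_T : ∃ T : ℕ, 1 ≤ T ∧ cfun p pol γf T ≤ 1 / 2 := by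
  have h : ∀ s : S, ∀ᶠ t in atTop, vfun p pol γf t s ≤ 1 / 2 := fun s =>
    (vfun_tendsto_zero hm s).eventually (ge_mem_nhds (by norm_num))
  have h2 : ∀ᶠ t in atTop, (∀ s : S, vfun p pol γf t s ≤ 1 / 2) ∧ 1 ≤ t :=
    (eventually_all.2 h).and (eventually_ge_atTop 1)
  obtain ⟨T, hT⟩ := h2.exists
  exact ⟨T, hT.2, Finset.sup'_le _ _ fun s _ => hT.1 s⟩

lemma cfun_summable : Summable (fun t : ℕ => ((t : ℝ) + 1) * cfun p pol γf t) := by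
  obtain ⟨T, hT1, hT⟩ := exists_T hm
  set q : ℝ := (1 / 2 : ℝ) ^ ((T : ℝ)⁻¹) with hq
  have hq0 : 0 < q := Real.rpow_pos_of_pos (by norm_num) _
  have hq1 : q < 1 := Real.rpow_lt_one (by norm_num) (by norm_num)
    (by positivity)
  have hbound : ∀ t : ℕ, cfun p pol γf t ≤ 2 * q ^ t := by
    intro t
    have hdm : T * (t / T) + t % T = t := Nat.div_add_mod t T
    have h1 : cfun p pol γf t ≤ (1 / 2 : ℝ) ^ (t / T) := by
      calc cfun p pol γf t = cfun p pol γf (T * (t / T) + t % T) := by rw [hdm]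
        _ ≤ (1 / 2 : ℝ) ^ (t / T) := cfun_geo hm hT (t / T) (t % T)
    have hTpos : (0 : ℝ) < T := by exact_mod_cast hT1
    have hk : (t : ℝ) / (T : ℝ) - 1 ≤ ((t / T : ℕ) : ℝ) := by
      have hmod : t % T < T := Nat.mod_lt t hT1
      have h2 : (t : ℝ) < T * ((t / T : ℕ) + 1) := by
        have heq : (T : ℝ) * ((t / T : ℕ) : ℝ) + ((t % T : ℕ) : ℝ) = (t : ℝ) := by
          exact_mod_cast congrArg (fun n : ℕ => (n : ℝ)) hdm
        have : ((t % T : ℕ) : ℝ) < (T : ℝ) := by exact_mod_cast hmod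
        nlinarith
      rw [sub_le_iff_le_add, div_le_iff₀ hTpos]
      nlinarith
    have h3 : ((1 : ℝ) / 2) ^ (t / T) ≤ 2 * q ^ t := by
      have e1 : ((1 : ℝ) / 2) ^ (t / T) = (1 / 2 : ℝ) ^ (((t / T : ℕ) : ℝ)) := by
        rw [Real.rpow_natCast]
      have e2 : (2 : ℝ) * q ^ t = (1 / 2 : ℝ) ^ ((t : ℝ) / (T : ℝ) - 1) := by
        rw [Real.rpow_sub (by norm_num), Real.rpow_one, hq, ← Real.rpow_natCast
          ((1 / 2 : ℝ) ^ ((T : ℝ)⁻¹)) t, ← Real.rpow_mul (by norm_num)]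
        rw [div_eq_mul_inv, mul_comm]
        ring
      rw [e1, e2]
      exact Real.rpow_le_rpow_of_exponent_ge (by norm_num) (by norm_num) hk
    linarith
  have hsum : Summable (fun t : ℕ => ((t : ℝ) + 1) * (2 * q ^ t)) := by
    have h1 : Summable (fun t : ℕ => (t : ℝ) * q ^ t) := by
      have := summable_pow_mul_geometric_of_norm_lt_one 1 (r := q)
        (by rwa [Real.norm_eq_abs, abs_of_pos hq0])
      simpa using this
    have h2 : Summable (fun t : ℕ => q ^ t) := summable_geometric_of_lt_one hq0.le hq1
    have := (h1.add h2).mul_left 2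
    refine this.congr fun t => ?_
    ring
  refine Summable.of_nonneg_of_le (fun t => ?_) (fun t => ?_) hsum
  · exact mul_nonneg (by positivity) (cfun_nonneg hm t)
  · exact mul_le_mul_of_nonneg_left (hbound t) (by positivity)

end AuxC

section AuxP
variable {S A Ω : Type} [Fintype S] [Nonempty S] [Fintype A] [Nonempty A] [DecidableEq S]
  [MeasurableSpace S] [MeasurableSingletonClass S]
  [MeasurableSpace A] [MeasurableSingletonClass A]
  [MeasurableSpace Ω]
  {p : S → A → S → ℝ} {pol polb : S → A → ℝ} {γf lamf ifun : S → ℝ}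
  {P : Measure Ω} [IsProbabilityMeasure P]
  {St : ℕ → Ω → S} {At : ℕ → Ω → A}

/-- the product `X_t = ∏_{k<t} γ(S_{k+1}) ρ(S_k, A_k)` -/
noncomputable def Xt (pol polb : S → A → ℝ) (γf : S → ℝ) (St : ℕ → Ω → S)
    (At : ℕ → Ω → A) (t : ℕ) (ω : Ω) : ℝ :=
  ∏ k ∈ Finset.range t, γf (St (k + 1) ω) * rho pol polb (St k ω) (At k ω)

lemma integrable_bdd {f : Ω → ℝ} (hf : Measurable f) (C : ℝ) (hC : ∀ ω, |f ω| ≤ C) :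
    Integrable f P :=
  Integrable.mono' (integrable_const C) hf.aestronglyMeasurable
    (ae_of_all _ fun ω => by rw [Real.norm_eq_abs]; exact hC ω)

lemma filt_le (hc : IsBehaviorChain p polb P St At) (t : ℕ) :
    filtSA St At t ≤ (inferInstance : MeasurableSpace Ω) := by
  refine sup_le ?_ ?_ <;> refine iSup_le fun k => iSup_le fun _ => ?_
  · exact measurable_iff_comap_le.1 (hc.smeas k)
  · exact measurable_iff_comap_le.1 (hc.ameas k)

lemma meas_St_filt (t k : ℕ) (hk : k ≤ t) : Measurable[filtSA St At t] (St k) := by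
  rw [measurable_iff_comap_le]
  refine le_trans ?_ le_sup_left
  exact le_iSup₂ (f := fun k (_ : k ∈ Finset.range (t + 1)) =>
    MeasurableSpace.comap (St k) inferInstance) k (Finset.mem_range.2 (Nat.lt_succ_of_le hk))

lemma meas_At_filt (t k : ℕ) (hk : k < t) : Measurable[filtSA St At t] (At k) := by
  rw [measurable_iff_comap_le]
  refine le_trans ?_ le_sup_right
  exact le_iSup₂ (f := fun k (_ : k ∈ Finset.range t) =>
    MeasurableSpace.comap (At k) inferInstance) k (Finset.mem_range.2 hk)

lemma Xt_meas_filt (t : ℕ) : Measurable[filtSA St At t] (Xt pol polb γf St At t) := by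
  refine Finset.measurable_prod _ fun k hk => ?_
  rw [Finset.mem_range] at hk
  have h1 : Measurable[filtSA St At t] (St (k + 1)) := meas_St_filt t (k + 1) hk
  have h2 : Measurable[filtSA St At t] (St k) := meas_St_filt t k hk.le
  have h3 : Measurable[filtSA St At t] (At k) := meas_At_filt t k hk
  exact ((measurable_of_countable γf).comp h1).mul
    ((measurable_of_countable (fun q : S × A => rho pol polb q.1 q.2)).comp (h2.prodMk h3))

lemma Xt_meas (hc : IsBehaviorChain p polb P St At) (t : ℕ) :
    Measurable (Xt pol polb γf St At t) :=
  (Xt_meas_filt t).mono (filt_le hc t) le_rfl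

lemma Xt_bound : ∃ B : ℝ, 0 ≤ B ∧ ∀ t (ω : Ω), |Xt pol polb γf St At t ω| ≤ B ^ t := by
  obtain ⟨B, hB⟩ := Finite.exists_le fun z : S × S × A => |γf z.1 * rho pol polb z.2.1 z.2.2|
  refine ⟨B, le_trans (abs_nonneg _) (hB (Classical.arbitrary _)), fun t ω => ?_⟩
  rw [Xt, Finset.abs_prod]
  calc (∏ k ∈ Finset.range t, |γf (St (k + 1) ω) * rho pol polb (St k ω) (At k ω)|)
      ≤ ∏ _k ∈ Finset.range t, B :=
        Finset.prod_le_prod (fun k _ => abs_nonneg _)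
          (fun k _ => hB (St (k + 1) ω, St k ω, At k ω))
    _ = B ^ t := by rw [Finset.prod_const, Finset.card_range]

variable (hmo : MDPModel p pol polb γf lamf ifun)
include hmo

lemma rho_nonneg (s : S) (a : A) : 0 ≤ rho pol polb s a :=
  div_nonneg (hmo.pol_nonneg s a) (hmo.polb_nonneg s a)

lemma Xt_nonneg (t : ℕ) (ω : Ω) : 0 ≤ Xt pol polb γf St At t ω :=
  Finset.prod_nonneg fun k _ => mul_nonneg (hmo.gamma_mem _).1 (rho_nonneg hmo _ _)

lemma polb_mul_rho (s : S) (a : A) : polb s a * rho pol polb s a = pol s a := by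
  by_cases hb : polb s a = 0
  · have hp : pol s a = 0 := by
      by_contra hne
      exact (ne_of_gt (hmo.support s a
        (lt_of_le_of_ne (hmo.pol_nonneg s a) (Ne.symm hne)))) hb
    simp [rho, hb, hp]
  · rw [rho, mul_comm, div_mul_cancel₀ _ hb]

omit hmo

lemma markov_mul (hc : IsBehaviorChain p polb P St At) (t : ℕ) (g : Ω → ℝ)
    (hg : Measurable[filtSA St At t] g) (C : ℝ) (hC0 : 0 ≤ C) (hgC : ∀ ω, |g ω| ≤ C)
    (f : A × S → ℝ) :
    ∫ ω, g ω * f (At t ω, St (t + 1) ω) ∂P =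
      ∫ ω, g ω * ∑ a, ∑ s', polb (St t ω) a * p (St t ω) a s' * f (a, s') ∂P := by
  have hm := filt_le hc t
  obtain ⟨Cf, hCf⟩ := Finite.exists_le fun z : A × S => |f z|
  have hCf0 : 0 ≤ Cf := le_trans (abs_nonneg _) (hCf (Classical.arbitrary _))
  set F1 : Ω → ℝ := fun ω => f (At t ω, St (t + 1) ω) with hF1
  have hF1m : Measurable F1 :=
    (measurable_of_countable f).comp ((hc.ameas t).prodMk (hc.smeas (t + 1)))
  have hgm : Measurable g := hg.mono hm le_rfl
  have hF1i : Integrable F1 P := integrable_bdd hF1m Cf fun ω => hCf _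
  have hgFi : Integrable (g * F1) P := by
    refine integrable_bdd (hgm.mul hF1m) (C * Cf) fun ω => ?_
    rw [Pi.mul_apply, abs_mul]
    exact mul_le_mul (hgC ω) (hCf _) (abs_nonneg _) hC0
  have h1 : ∫ ω, (g * F1) ω ∂P = ∫ ω, (P[g * F1|filtSA St At t]) ω ∂P :=
    (integral_condExp hm (f := g * F1)).symm
  have h2 : P[g * F1|filtSA St At t] =ᵐ[P] g * P[F1|filtSA St At t] :=
    condExp_mul_of_stronglyMeasurable_left (Measurable.stronglyMeasurable hg) hgFi hF1i
  have h3 := hc.markov t f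
  have h4 : g * P[F1|filtSA St At t] =ᵐ[P]
      fun ω => g ω * ∑ a, ∑ s', polb (St t ω) a * p (St t ω) a s' * f (a, s') := by
    filter_upwards [h3] with ω hω
    rw [Pi.mul_apply, hω]
  calc ∫ ω, g ω * F1 ω ∂P = ∫ ω, (P[g * F1|filtSA St At t]) ω ∂P := h1
    _ = ∫ ω, g ω * ∑ a, ∑ s', polb (St t ω) a * p (St t ω) a s' * f (a, s') ∂P :=
      integral_congr_ae (h2.trans h4)

include hmo

lemma key_step (hc : IsBehaviorChain p polb P St At) (t : ℕ) (h : S → ℝ) :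
    ∫ ω, Xt pol polb γf St At (t + 1) ω * h (St (t + 1) ω) ∂P =
      ∫ ω, Xt pol polb γf St At t ω * op1 p pol γf h (St t ω) ∂P := by
  classical
  obtain ⟨B, hB0, hB⟩ := Xt_bound (pol := pol) (polb := polb) (γf := γf) (St := St) (At := At)
  -- the functions appearing per state s
  set g : S → Ω → ℝ := fun s ω =>
    Xt pol polb γf St At t ω * (if St t ω = s then (1 : ℝ) else 0) with hg
  set f : S → A × S → ℝ := fun s z => rho pol polb s z.1 * (γf z.2 * h z.2) with hf
  have hgmeas : ∀ s, Measurable[filtSA St At t] (g s) := by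
    intro s
    refine (Xt_meas_filt t).mul (Measurable.ite ?_ measurable_const measurable_const)
    exact (meas_St_filt t t le_rfl) (measurableSet_singleton s)
  have hgbd : ∀ s (ω : Ω), |g s ω| ≤ B ^ t := by
    intro s ω
    rw [hg, abs_mul]
    calc |Xt pol polb γf St At t ω| * |if St t ω = s then (1 : ℝ) else 0|
        ≤ B ^ t * 1 := by
          refine mul_le_mul (hB t ω) ?_ (abs_nonneg _) (le_trans (abs_nonneg _) (hB t ω))
          split <;> simp
      _ = B ^ t := mul_one _
  have expand : ∀ ω, Xt pol polb γf St At (t + 1) ω * h (St (t + 1) ω) =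
      ∑ s : S, g s ω * f s (At t ω, St (t + 1) ω) := by
    intro ω
    rw [Finset.sum_eq_single (St t ω)]
    · simp only [hg, hf, eq_self_iff_true, if_true, mul_one, Xt, Finset.prod_range_succ]
      ring
    · intro b _ hb
      simp [hg, if_neg (fun hh : St t ω = b => hb hh.symm)]
    · intro hmem; exact absurd (Finset.mem_univ _) hmem
  -- integrability of each summand
  obtain ⟨D, hD⟩ := Finite.exists_le fun z : S × A × S => |f z.1 (z.2.1, z.2.2)|
  have hD0 : 0 ≤ D := le_trans (abs_nonneg _) (hD (Classical.arbitrary _))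
  have hBt0 : (0 : ℝ) ≤ B ^ t := pow_nonneg hB0 t
  have hterm_meas : ∀ s : S, Measurable fun ω => g s ω * f s (At t ω, St (t + 1) ω) := by
    intro s
    refine ((hgmeas s).mono (filt_le hc t) le_rfl).mul ?_
    exact (measurable_of_countable (f s)).comp ((hc.ameas t).prodMk (hc.smeas (t + 1)))
  have hterm_int : ∀ s ∈ Finset.univ (α := S),
      Integrable (fun ω => g s ω * f s (At t ω, St (t + 1) ω)) P := by
    intro s _
    refine integrable_bdd (hterm_meas s) (B ^ t * D) fun ω => ?_
    rw [abs_mul]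
    exact mul_le_mul (hgbd s ω) (hD (s, At t ω, St (t + 1) ω)) (abs_nonneg _) hBt0
  calc ∫ ω, Xt pol polb γf St At (t + 1) ω * h (St (t + 1) ω) ∂P
      = ∫ ω, ∑ s : S, g s ω * f s (At t ω, St (t + 1) ω) ∂P :=
        integral_congr_ae (ae_of_all _ expand)
    _ = ∑ s : S, ∫ ω, g s ω * f s (At t ω, St (t + 1) ω) ∂P :=
        integral_finset_sum _ hterm_int
    _ = ∑ s : S, ∫ ω, g s ω *
          ∑ a, ∑ s', polb (St t ω) a * p (St t ω) a s' * f s (a, s') ∂P := by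
        refine Finset.sum_congr rfl fun s _ => ?_
        exact markov_mul hc t (g s) (hgmeas s) (B ^ t) (pow_nonneg hB0 t) (hgbd s) (f s)
    _ = ∫ ω, ∑ s : S, g s ω *
          ∑ a, ∑ s', polb (St t ω) a * p (St t ω) a s' * f s (a, s') ∂P := by
        refine (integral_finset_sum _ fun s _ => ?_).symm
        refine integrable_bdd ?_ (B ^ t * (Fintype.card A * (Fintype.card S * D))) fun ω => ?_
        · refine ((hgmeas s).mono (filt_le hc t) le_rfl).mul ?_
          refine Finset.measurable_sum _ fun a _ => Finset.measurable_sum _ fun s' _ => ?_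
          exact ((measurable_of_countable
            (fun x : S => polb x a * p x a s' * f s (a, s'))).comp (hc.smeas t))
        · rw [abs_mul]
          refine mul_le_mul (hgbd s ω) ?_ (abs_nonneg _) hBt0
          calc |∑ a, ∑ s', polb (St t ω) a * p (St t ω) a s' * f s (a, s')|
              ≤ ∑ a, |∑ s', polb (St t ω) a * p (St t ω) a s' * f s (a, s')| :=
                Finset.abs_sum_le_sum_abs _ _
            _ ≤ ∑ a : A, (Fintype.card S * D) := by
                refine Finset.sum_le_sum fun a _ => ?_
                calc |∑ s', polb (St t ω) a * p (St t ω) a s' * f s (a, s')|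
                    ≤ ∑ s', |polb (St t ω) a * p (St t ω) a s' * f s (a, s')| :=
                      Finset.abs_sum_le_sum_abs _ _
                  _ ≤ ∑ _s' : S, D := by
                      refine Finset.sum_le_sum fun s' _ => ?_
                      rw [abs_mul]
                      calc |polb (St t ω) a * p (St t ω) a s'| * |f s (a, s')|
                          ≤ 1 * D := by
                            refine mul_le_mul ?_ (hD (s, a, s')) (abs_nonneg _) zero_le_one
                            rw [abs_mul, abs_of_nonneg (hmo.polb_nonneg _ _),
                              abs_of_nonneg (hmo.p_nonneg _ _ _)]
                            calc polb (St t ω) a * p (St t ω) a s'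
                                ≤ 1 * 1 := by
                                  refine mul_le_mul ?_ ?_ (hmo.p_nonneg _ _ _) zero_le_one
                                  · calc polb (St t ω) a
                                        ≤ ∑ a', polb (St t ω) a' :=
                                          Finset.single_le_sum
                                            (fun a' _ => hmo.polb_nonneg _ a')
                                            (Finset.mem_univ a)
                                      _ = 1 := hmo.polb_sum _
                                  · calc p (St t ω) a s' ≤ ∑ x, p (St t ω) a x :=
                                        Finset.single_le_sum
                                          (fun x _ => hmo.p_nonneg _ _ x)
                                          (Finset.mem_univ s')
                                      _ = 1 := hmo.p_sum _ _
                              _ = 1 := one_mul 1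
                        _ = D := one_mul D
                  _ = Fintype.card S * D := by
                      rw [Finset.sum_const, Finset.card_univ, nsmul_eq_mul]
            _ = Fintype.card A * (Fintype.card S * D) := by
                rw [Finset.sum_const, Finset.card_univ, nsmul_eq_mul]
    _ = ∫ ω, Xt pol polb γf St At t ω * op1 p pol γf h (St t ω) ∂P := by
        refine integral_congr_ae (ae_of_all _ fun ω => ?_)
        dsimp only
        rw [Finset.sum_eq_single (St t ω)]
        · simp only [hg, eq_self_iff_true, if_true, mul_one]
          congr 1
          rw [op1]
          refine Finset.sum_congr rfl fun a _ => Finset.sum_congr rfl fun s' _ => ?_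
          have hrw : polb (St t ω) a * p (St t ω) a s' * f (St t ω) (a, s') =
              (polb (St t ω) a * rho pol polb (St t ω) a) * p (St t ω) a s' * γf s' * h s' := by
            rw [hf]; ring
          rw [hrw, polb_mul_rho hmo]
        · intro b _ hb
          simp [hg, if_neg (fun hh : St t ω = b => hb hh.symm)]
        · intro hmem; exact absurd (Finset.mem_univ _) hmem

lemma key_iter (hc : IsBehaviorChain p polb P St At) (t : ℕ) (h : S → ℝ) :
    ∫ ω, Xt pol polb γf St At t ω * h (St t ω) ∂P =
      ∫ ω, ((op1 p pol γf)^[t] h) (St 0 ω) ∂P := by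
  induction t generalizing h with
  | zero => simp [Xt]
  | succ t ih =>
    rw [key_step hmo hc t h, ih (op1 p pol γf h)]
    rw [Function.iterate_succ_apply]

lemma EXt_le (hc : IsBehaviorChain p polb P St At) (t : ℕ) :
    ∫ ω, Xt pol polb γf St At t ω ∂P ≤ cfun p pol γf t := by
  obtain ⟨B, hB0, hB⟩ := Xt_bound (pol := pol) (polb := polb) (γf := γf) (St := St) (At := At)
  have h1 : ∫ ω, Xt pol polb γf St At t ω ∂P =
      ∫ ω, Xt pol polb γf St At t ω * (fun _ : S => (1 : ℝ)) (St t ω) ∂P := by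
    simp
  rw [h1, key_iter hmo hc t (fun _ => 1)]
  have h2 : ∀ ω, ((op1 p pol γf)^[t] fun _ => (1 : ℝ)) (St 0 ω) ≤ cfun p pol γf t := fun ω =>
    vfun_le_cfun hmo t (St 0 ω)
  calc ∫ ω, ((op1 p pol γf)^[t] fun _ => (1 : ℝ)) (St 0 ω) ∂P
      ≤ ∫ _ω, cfun p pol γf t ∂P := by
        refine integral_mono ?_ (integrable_const _) h2
        refine integrable_bdd ?_ (1 : ℝ) fun ω => ?_
        · exact (measurable_of_countable _).comp (hc.smeas 0)
        · show |vfun p pol γf t (St 0 ω)| ≤ (1 : ℝ)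
          rw [abs_of_nonneg (vfun_nonneg hmo t _)]
          exact vfun_le_one hmo t _
    _ = cfun p pol γf t := by simp

lemma Xt_as (hc : IsBehaviorChain p polb P St At) :
    ∀ᵐ ω ∂P, Tendsto (fun t : ℕ => ((t : ℝ) + 1) * Xt pol polb γf St At t ω) atTop (nhds 0) := by
  obtain ⟨B, hB0, hB⟩ := Xt_bound (pol := pol) (polb := polb) (γf := γf) (St := St) (At := At)
  set gg : ℕ → Ω → ℝ := fun t ω => ((t : ℝ) + 1) * Xt pol polb γf St At t ω with hgg
  have hnn : ∀ (t : ℕ) (ω : Ω), 0 ≤ gg t ω := by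
    intro t ω
    exact mul_nonneg (by positivity) (Xt_nonneg hmo t ω)
  have hmeas : ∀ t, Measurable (gg t) := fun t => (Xt_meas hc t).const_mul _
  have hint : ∀ t, Integrable (gg t) P := by
    intro t
    refine integrable_bdd (hmeas t) (((t : ℝ) + 1) * B ^ t) fun ω => ?_
    rw [hgg, abs_mul, abs_of_nonneg (show (0:ℝ) ≤ (t : ℝ) + 1 by positivity)]
    exact mul_le_mul_of_nonneg_left (hB t ω) (by positivity)
  have hEle : ∀ t, ∫ ω, gg t ω ∂P ≤ ((t : ℝ) + 1) * cfun p pol γf t := by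
    intro t
    rw [hgg]
    rw [integral_const_mul]
    exact mul_le_mul_of_nonneg_left (EXt_le hmo hc t) (by positivity)
  have h2 : ∑' t, ∫⁻ ω, ENNReal.ofReal (gg t ω) ∂P ≠ ⊤ := by
    have hle : ∀ t, ∫⁻ ω, ENNReal.ofReal (gg t ω) ∂P ≤
        ENNReal.ofReal (((t : ℝ) + 1) * cfun p pol γf t) := by
      intro t
      rw [← ofReal_integral_eq_lintegral_ofReal (hint t) (ae_of_all _ (hnn t))]
      exact ENNReal.ofReal_le_ofReal (hEle t)
    refine ne_top_of_le_ne_top ?_ (ENNReal.tsum_le_tsum hle)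
    rw [← ENNReal.ofReal_tsum_of_nonneg
      (fun t => mul_nonneg (by positivity) (cfun_nonneg hmo t)) (cfun_summable hmo)]
    exact ENNReal.ofReal_ne_top
  have h3 : ∫⁻ ω, ∑' t, ENNReal.ofReal (gg t ω) ∂P ≠ ⊤ := by
    rw [lintegral_tsum (fun t => ((hmeas t).ennreal_ofReal).aemeasurable)]
    exact h2
  have h4 : ∀ᵐ ω ∂P, ∑' t, ENNReal.ofReal (gg t ω) < ⊤ :=
    ae_lt_top' (AEMeasurable.ennreal_tsum fun t => ((hmeas t).ennreal_ofReal).aemeasurable) h3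
  filter_upwards [h4] with ω hω
  have h5 : Tendsto (fun t => ENNReal.ofReal (gg t ω)) atTop (nhds 0) :=
    ENNReal.tendsto_atTop_zero_of_tsum_ne_top hω.ne
  have h6 : Tendsto (fun t => (ENNReal.ofReal (gg t ω)).toReal) atTop (nhds 0) := by
    have := (ENNReal.tendsto_toReal (show (0 : ENNReal) ≠ ⊤ by simp)).comp h5
    simpa [Function.comp_def] using this
  exact h6.congr fun t => ENNReal.toReal_ofReal (hnn t ω)

end AuxP

/-- Two emphatic trace iterates driven by the same state-action
sequence but with different initial conditions satisfy `F_t − F̂_t → 0` a.s. and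
`e_t − ê_t → 0` a.s. -/
theorem stmt3
    {S A : Type} [Fintype S] [Nonempty S] [Fintype A] [Nonempty A] [DecidableEq S]
    [MeasurableSpace S] [MeasurableSingletonClass S]
    [MeasurableSpace A] [MeasurableSingletonClass A]
    (p : S → A → S → ℝ) (pol polb : S → A → ℝ) (γf lamf ifun : S → ℝ)
    (hmodel : MDPModel p pol polb γf lamf ifun)
    (n : ℕ) (hn : 1 ≤ n) (φ : S → Fin n → ℝ)
    (Ω : Type) [MeasurableSpace Ω] (P : Measure Ω) [IsProbabilityMeasure P]
    (St : ℕ → Ω → S) (At : ℕ → Ω → A)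
    (hchain : IsBehaviorChain p polb P St At)
    (e : ℕ → Ω → Fin n → ℝ) (F : ℕ → Ω → ℝ) (e0 : Fin n → ℝ) (F0 : ℝ) (hF0 : 0 ≤ F0)
    (htrace : IsTrace pol polb γf lamf ifun φ St At e F e0 F0)
    (eh : ℕ → Ω → Fin n → ℝ) (Fh : ℕ → Ω → ℝ) (eh0 : Fin n → ℝ) (Fh0 : ℝ) (hFh0 : 0 ≤ Fh0)
    (htraceh : IsTrace pol polb γf lamf ifun φ St At eh Fh eh0 Fh0) :
    (∀ᵐ ω ∂P, Tendsto (fun t => F t ω - Fh t ω) atTop (nhds 0)) ∧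
    (∀ᵐ ω ∂P, Tendsto (fun t => e t ω - eh t ω) atTop (nhds 0)) := by
  have hXas := Xt_as hmodel hchain (St := St) (At := At)
  set X : ℕ → Ω → ℝ := Xt pol polb γf St At with hX
  -- the F-difference is X t times the initial difference
  have hDF : ∀ (t : ℕ) (ω : Ω), F t ω - Fh t ω = X t ω * (F0 - Fh0) := by
    intro t ω
    induction t with
    | zero => simp [htrace.init_F, htraceh.init_F, hX, Xt]
    | succ t ih =>
      rw [htrace.rec_F t ω, htraceh.rec_F t ω]
      have hXs : X (t + 1) ω =
          X t ω * (γf (St (t + 1) ω) * rho pol polb (St t ω) (At t ω)) :=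
        Finset.prod_range_succ _ _
      have harith : γf (St (t + 1) ω) * rho pol polb (St t ω) (At t ω) * F t ω +
            ifun (St (t + 1) ω) -
          (γf (St (t + 1) ω) * rho pol polb (St t ω) (At t ω) * Fh t ω +
            ifun (St (t + 1) ω)) =
          γf (St (t + 1) ω) * rho pol polb (St t ω) (At t ω) * (F t ω - Fh t ω) := by ring
      rw [harith, ih, hXs]
      ring
  -- bound for the e-difference
  obtain ⟨Cp, hCp⟩ := Finite.exists_le fun s : S => ‖φ s‖
  have hCp0 : (0 : ℝ) ≤ Cp := le_trans (norm_nonneg _) (hCp (Classical.arbitrary S))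
  set K : ℝ := Cp * |F0 - Fh0| with hK
  have hK0 : 0 ≤ K := mul_nonneg hCp0 (abs_nonneg _)
  have hDE : ∀ (t : ℕ) (ω : Ω),
      ‖e t ω - eh t ω‖ ≤ X t ω * ‖e0 - eh0‖ + (t : ℝ) * X t ω * K := by
    intro t ω
    induction t with
    | zero => simp [htrace.init_e, htraceh.init_e, hX, Xt]
    | succ t ih =>
      set lam := lamf (St (t + 1) ω) with hlam
      set g := γf (St (t + 1) ω) * rho pol polb (St t ω) (At t ω) with hgd
      have hg0 : 0 ≤ g :=
        mul_nonneg (hmodel.gamma_mem _).1 (rho_nonneg hmodel _ _)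
      have hlam0 : 0 ≤ lam := by
        rw [hlam]; exact (hmodel.lambda_mem (St (t + 1) ω)).1
      have hlam1 : lam ≤ 1 := by
        rw [hlam]; exact (hmodel.lambda_mem (St (t + 1) ω)).2
      have hXs : X (t + 1) ω = X t ω * g := Finset.prod_range_succ _ _
      have hXt0 : 0 ≤ X t ω := Xt_nonneg (St := St) (At := At) hmodel t ω
      have hXt10 : 0 ≤ X (t + 1) ω := Xt_nonneg (St := St) (At := At) hmodel (t + 1) ω
      have hdiff : e (t + 1) ω - eh (t + 1) ω =
          (lam * g) • (e t ω - eh t ω) +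
            ((1 - lam) * (F (t + 1) ω - Fh (t + 1) ω)) • φ (St (t + 1) ω) := by
        rw [htrace.rec_e t ω, htraceh.rec_e t ω, hlam, hgd]
        module
      have hnorm : ‖e (t + 1) ω - eh (t + 1) ω‖ ≤
          (lam * g) * ‖e t ω - eh t ω‖ +
            ((1 - lam) * |F (t + 1) ω - Fh (t + 1) ω|) * ‖φ (St (t + 1) ω)‖ := by
        rw [hdiff]
        refine le_trans (norm_add_le _ _) ?_
        rw [norm_smul, norm_smul, Real.norm_eq_abs, Real.norm_eq_abs,
          abs_of_nonneg (mul_nonneg hlam0 hg0), abs_mul, abs_of_nonneg (by linarith : (0:ℝ) ≤ 1 - lam)]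
      have hFd : |F (t + 1) ω - Fh (t + 1) ω| = X (t + 1) ω * |F0 - Fh0| := by
        rw [hDF (t + 1) ω, abs_mul, abs_of_nonneg (Xt_nonneg (St := St) (At := At) hmodel (t + 1) ω)]
      calc ‖e (t + 1) ω - eh (t + 1) ω‖
          ≤ (lam * g) * ‖e t ω - eh t ω‖ +
            ((1 - lam) * |F (t + 1) ω - Fh (t + 1) ω|) * ‖φ (St (t + 1) ω)‖ := hnorm
        _ ≤ g * (X t ω * ‖e0 - eh0‖ + (t : ℝ) * X t ω * K) +
            (X (t + 1) ω * |F0 - Fh0|) * Cp := by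
            refine add_le_add ?_ ?_
            · refine mul_le_mul ?_ ih (norm_nonneg _) hg0
              nlinarith
            · rw [hFd]
              refine mul_le_mul ?_ (hCp _) (norm_nonneg _) ?_
              · nlinarith [abs_nonneg (F0 - Fh0), hXt10, mul_nonneg hXt10 (abs_nonneg (F0 - Fh0))]
              · exact mul_nonneg hXt10 (abs_nonneg _)
        _ = X (t + 1) ω * ‖e0 - eh0‖ + ((t : ℝ) + 1) * X (t + 1) ω * K := by
            rw [hXs, hK]; ring
        _ = X (t + 1) ω * ‖e0 - eh0‖ + ((t + 1 : ℕ) : ℝ) * X (t + 1) ω * K := by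
            push_cast; ring
  constructor
  · filter_upwards [hXas] with ω hω
    have hX0 : Tendsto (fun t => X t ω) atTop (nhds 0) := by
      refine squeeze_zero (fun t => Xt_nonneg (St := St) (At := At) hmodel t ω) (fun t => ?_) hω
      exact le_mul_of_one_le_left (Xt_nonneg (St := St) (At := At) hmodel t ω) (le_add_of_nonneg_left (Nat.cast_nonneg t))
    have heq : (fun t => F t ω - Fh t ω) = fun t => X t ω * (F0 - Fh0) :=
      funext fun t => hDF t ω
    rw [heq]
    simpa using hX0.mul_const (F0 - Fh0)
  · filter_upwards [hXas] with ω hω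
    have hX0 : Tendsto (fun t => X t ω) atTop (nhds 0) := by
      refine squeeze_zero (fun t => Xt_nonneg (St := St) (At := At) hmodel t ω) (fun t => ?_) hω
      exact le_mul_of_one_le_left (Xt_nonneg (St := St) (At := At) hmodel t ω) (le_add_of_nonneg_left (Nat.cast_nonneg t))
    have htX : Tendsto (fun t : ℕ => (t : ℝ) * X t ω) atTop (nhds 0) := by
      refine squeeze_zero (fun t => mul_nonneg (by positivity) (Xt_nonneg (St := St) (At := At) hmodel t ω))
        (fun t => ?_) hω
      have := Xt_nonneg (St := St) (At := At) hmodel t ω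
      nlinarith
    have hb : Tendsto (fun t : ℕ => X t ω * ‖e0 - eh0‖ + (t : ℝ) * X t ω * K) atTop
        (nhds 0) := by
      have := (hX0.mul_const ‖e0 - eh0‖).add (htX.mul_const K)
      simpa using this
    rw [tendsto_zero_iff_norm_tendsto_zero]
    exact squeeze_zero (fun t => norm_nonneg _) (fun t => hDE t ω) hb
end

section
/- Let C be an n×n real matrix and c > 0 a constant with xᵀCx ≤ −c‖x‖₂² for all x ∈ ℝ^n, let b ∈ ℝ^n, and let θ* be the unique solution of Cθ + b = 0 (C is invertible under this hypothesis). Let r > ‖b‖₂/c and B = {θ ∈ ℝ^n : ‖θ‖₂ ≤ r}. Then: (i) ‖θ*‖₂ ≤ ‖b‖₂/c < r, so θ* lies in the interior of B; (ii) for every x with ‖x‖₂ = r, ⟨x, Cx + b⟩ < 0; and (iii) if x : ℝ → ℝ^n is differentiable with x'(t) = C x(t) + b and x(t) ∈ B for all t ∈ ℝ, then x(t) = θ* for all t ∈ ℝ. -/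
open Filter Matrix

theorem dotProduct_self_nonneg' {n : ℕ} (u : Fin n → ℝ) : 0 ≤ u ⬝ᵥ u :=
  Finset.sum_nonneg fun i _ => mul_self_nonneg _

theorem cauchy_dot {n : ℕ} (u v : Fin n → ℝ) :
    u ⬝ᵥ v ≤ Real.sqrt (u ⬝ᵥ u) * Real.sqrt (v ⬝ᵥ v) := by
  have h := Finset.sum_mul_sq_le_sq_mul_sq Finset.univ u v
  have hu : Real.sqrt (u ⬝ᵥ u) ^ 2 = u ⬝ᵥ u := Real.sq_sqrt (dotProduct_self_nonneg' u)
  have hv : Real.sqrt (v ⬝ᵥ v) ^ 2 = v ⬝ᵥ v := Real.sq_sqrt (dotProduct_self_nonneg' v)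
  have h2 : (u ⬝ᵥ v) ^ 2 ≤ (u ⬝ᵥ u) * (v ⬝ᵥ v) := by
    simpa [dotProduct, sq] using h
  calc u ⬝ᵥ v ≤ |u ⬝ᵥ v| := le_abs_self _
    _ = Real.sqrt ((u ⬝ᵥ v) ^ 2) := (Real.sqrt_sq_eq_abs _).symm
    _ ≤ Real.sqrt ((u ⬝ᵥ u) * (v ⬝ᵥ v)) := Real.sqrt_le_sqrt h2
    _ = _ := Real.sqrt_mul (dotProduct_self_nonneg' u) _

/-- If `xᵀCx ≤ −c‖x‖₂²` and `Cθ* + b = 0`, `r > ‖b‖₂/c`, then: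
(i) `‖θ*‖₂ ≤ ‖b‖₂/c < r`; (ii) for every `x` with `‖x‖₂ = r`, `⟨x, Cx + b⟩ < 0`;
(iii) any solution of `x' = Cx + b` staying in the ball of radius `r` is
identically `θ*`. -/
theorem stmt11 (n : ℕ) (hn : 1 ≤ n)
    (C : Matrix (Fin n) (Fin n) ℝ) (b : Fin n → ℝ) (c : ℝ) (hc : 0 < c)
    (hC : ∀ x : Fin n → ℝ, x ⬝ᵥ C.mulVec x ≤ -c * (x ⬝ᵥ x))
    (θs : Fin n → ℝ) (hθ : C.mulVec θs + b = 0)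
    (r : ℝ) (hr : Real.sqrt (b ⬝ᵥ b) / c < r) :
    (Real.sqrt (θs ⬝ᵥ θs) ≤ Real.sqrt (b ⬝ᵥ b) / c ∧ Real.sqrt (b ⬝ᵥ b) / c < r) ∧
    (∀ x : Fin n → ℝ, Real.sqrt (x ⬝ᵥ x) = r → x ⬝ᵥ (C.mulVec x + b) < 0) ∧
    (∀ x : ℝ → Fin n → ℝ,
      (∀ t : ℝ, HasDerivAt x (C.mulVec (x t) + b) t) →
      (∀ t : ℝ, Real.sqrt (x t ⬝ᵥ x t) ≤ r) →
      ∀ t : ℝ, x t = θs) := by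
  have hBnn : 0 ≤ Real.sqrt (b ⬝ᵥ b) := Real.sqrt_nonneg _
  have hr0 : 0 < r := lt_of_le_of_lt (div_nonneg hBnn hc.le) hr
  have hmul : C.mulVec θs = -b := by
    have := hθ; rwa [add_eq_zero_iff_eq_neg] at this
  -- (i)
  have key1 : Real.sqrt (θs ⬝ᵥ θs) ≤ Real.sqrt (b ⬝ᵥ b) / c := by
    have h1 := hC θs
    rw [hmul, dotProduct_neg] at h1
    have h2 : c * (θs ⬝ᵥ θs) ≤ θs ⬝ᵥ b := by linarith
    have h3 : θs ⬝ᵥ b ≤ Real.sqrt (θs ⬝ᵥ θs) * Real.sqrt (b ⬝ᵥ b) := cauchy_dot θs b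
    have hS : Real.sqrt (θs ⬝ᵥ θs) ^ 2 = θs ⬝ᵥ θs := Real.sq_sqrt (dotProduct_self_nonneg' θs)
    have hSnn : 0 ≤ Real.sqrt (θs ⬝ᵥ θs) := Real.sqrt_nonneg _
    rcases eq_or_lt_of_le hSnn with h | h
    · rw [← h]; exact div_nonneg hBnn hc.le
    · rw [le_div_iff₀ hc]
      nlinarith
  refine ⟨⟨key1, hr⟩, ?_, ?_⟩
  -- (ii)
  · intro x hx
    have hxx : x ⬝ᵥ x = r ^ 2 := by
      have := Real.sq_sqrt (dotProduct_self_nonneg' x)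
      rw [hx] at this; linarith
    have h1 := hC x
    have h2 : x ⬝ᵥ b ≤ Real.sqrt (x ⬝ᵥ x) * Real.sqrt (b ⬝ᵥ b) := cauchy_dot x b
    rw [hx] at h2
    have hcr : Real.sqrt (b ⬝ᵥ b) < c * r := by
      rw [div_lt_iff₀ hc] at hr; linarith
    rw [dotProduct_add]
    nlinarith
  -- (iii)
  · intro x hx hball t₀
    set V : ℝ → ℝ := fun t => (x t - θs) ⬝ᵥ (x t - θs) with hVdef
    have hVnn : ∀ t, 0 ≤ V t := fun t => dotProduct_self_nonneg' _
    -- derivative of V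
    have hVd : ∀ t, HasDerivAt V (2 * ((x t - θs) ⬝ᵥ (C.mulVec (x t) + b))) t := by
      intro t
      have hcomp : ∀ i, HasDerivAt (fun s => x s i) ((C.mulVec (x t) + b) i) t :=
        fun i => hasDerivAt_pi.mp (hx t) i
      have hsum : HasDerivAt (fun s => ∑ i, (x s i - θs i) * (x s i - θs i))
          (∑ i, ((C.mulVec (x t) + b) i * (x t i - θs i)
            + (x t i - θs i) * (C.mulVec (x t) + b) i)) t := by
        apply HasDerivAt.fun_sum
        intro i _
        exact ((hcomp i).sub_const _).mul ((hcomp i).sub_const _)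
      have heq : V = fun s => ∑ i, (x s i - θs i) * (x s i - θs i) := by
        funext s; simp [hVdef, dotProduct, Pi.sub_apply]
      rw [heq]
      convert hsum using 1
      simp only [dotProduct, Pi.sub_apply, Finset.mul_sum]
      apply Finset.sum_congr rfl
      intro i _; ring
    -- V' ≤ -2c V
    have hVle : ∀ t, 2 * ((x t - θs) ⬝ᵥ (C.mulVec (x t) + b)) ≤ -(2 * c) * V t := by
      intro t
      have hsub : C.mulVec (x t) + b = C.mulVec (x t - θs) := by
        rw [Matrix.mulVec_sub, hmul, sub_neg_eq_add]
      rw [hsub]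
      have := hC (x t - θs)
      simp only [hVdef]
      nlinarith
    -- W = V * exp(2ct) is antitone
    set W : ℝ → ℝ := fun t => V t * Real.exp (2 * c * t) with hWdef
    have hWd : ∀ t, HasDerivAt W
        (2 * ((x t - θs) ⬝ᵥ (C.mulVec (x t) + b)) * Real.exp (2 * c * t)
          + V t * (Real.exp (2 * c * t) * (2 * c))) t := by
      intro t
      have hexp : HasDerivAt (fun t : ℝ => Real.exp (2 * c * t))
          (Real.exp (2 * c * t) * (2 * c)) t := by
        simpa using (((hasDerivAt_id t).const_mul (2 * c)).exp)
      exact (hVd t).mul hexp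
    have hWanti : Antitone W := by
      apply antitone_of_deriv_nonpos
      · intro t; exact (hWd t).differentiableAt
      · intro t
        rw [(hWd t).deriv]
        have h1 := hVle t
        have h2 := Real.exp_pos (2 * c * t)
        nlinarith [hVnn t]
    -- bound on V
    have hVbound : ∀ t, V t ≤ 2 * (r ^ 2 + θs ⬝ᵥ θs) := by
      intro t
      have h1 : x t ⬝ᵥ x t ≤ r ^ 2 := by
        have hs := Real.sq_sqrt (dotProduct_self_nonneg' (x t))
        nlinarith [hball t, Real.sqrt_nonneg (x t ⬝ᵥ x t)]
      have h2 : 0 ≤ (x t + θs) ⬝ᵥ (x t + θs) := dotProduct_self_nonneg' _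
      have e1 : (x t - θs) ⬝ᵥ (x t - θs)
          = x t ⬝ᵥ x t - 2 * (x t ⬝ᵥ θs) + θs ⬝ᵥ θs := by
        simp [dotProduct_sub, sub_dotProduct, dotProduct_comm]; ring
      have e2 : (x t + θs) ⬝ᵥ (x t + θs)
          = x t ⬝ᵥ x t + 2 * (x t ⬝ᵥ θs) + θs ⬝ᵥ θs := by
        simp [dotProduct_add, add_dotProduct, dotProduct_comm]; ring
      simp only [hVdef]
      nlinarith
    -- limit argument
    have htend : Tendsto (fun t => 2 * (r ^ 2 + θs ⬝ᵥ θs) * Real.exp (2 * c * t))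
        atBot (nhds 0) := by
      have h1 : Tendsto (fun t : ℝ => 2 * c * t) atBot atBot :=
        Tendsto.const_mul_atBot (by positivity) tendsto_id
      have h2 : Tendsto (fun t : ℝ => Real.exp (2 * c * t)) atBot (nhds 0) :=
        Real.tendsto_exp_atBot.comp h1
      simpa using h2.const_mul (2 * (r ^ 2 + θs ⬝ᵥ θs))
    have hW0 : W t₀ ≤ 0 := by
      apply ge_of_tendsto htend
      filter_upwards [eventually_le_atBot t₀] with t ht
      calc W t₀ ≤ W t := hWanti ht
        _ ≤ 2 * (r ^ 2 + θs ⬝ᵥ θs) * Real.exp (2 * c * t) := by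
            have := hVbound t
            have he := Real.exp_pos (2 * c * t)
            simp only [hWdef]
            nlinarith
    have hV0 : V t₀ = 0 := by
      have he := Real.exp_pos (2 * c * t₀)
      have : V t₀ ≤ 0 := by
        by_contra h
        push_neg at h
        have : 0 < W t₀ := by simp only [hWdef]; positivity
        linarith
      linarith [hVnn t₀]
    -- conclude
    have : ∀ i, (x t₀ i - θs i) * (x t₀ i - θs i) = 0 := by
      have := (Finset.sum_eq_zero_iff_of_nonneg
        (fun i _ => mul_self_nonneg (x t₀ i - θs i))).mp (by simpa [hVdef, dotProduct] using hV0)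
      intro i; exact this i (Finset.mem_univ i)
    funext i
    have := mul_self_eq_zero.mp (this i)
    linarith [this]
end

section
/- The matrix C = −ΦᵀM̄(I−Q)Φ is negative semidefinite: yᵀCy ≤ 0 for all y ∈ ℝ^n. If moreover i(s) > 0 for all s ∈ S, then C is negative definite: there exists c > 0 such that yᵀCy ≤ −c‖y‖₂² for all y ∈ ℝ^n. -/
open Matrix

noncomputable section

/-- `Q = I − (I−PΓΛ)⁻¹(I−PΓ)`. -/
def Qof {S : Type*} [Fintype S] [DecidableEq S]
    (P : Matrix S S ℝ) (γf lamf : S → ℝ) : Matrix S S ℝ :=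
  1 - (1 - P * Matrix.diagonal γf * Matrix.diagonal lamf)⁻¹ * (1 - P * Matrix.diagonal γf)

/-- The diagonal vector of `M̄`: `(d_i)ᵀ(I−Q)⁻¹`, with `d_i(s) = d(s)·i(s)`. -/
def MdiagOf {S : Type*} [Fintype S] [DecidableEq S]
    (P : Matrix S S ℝ) (γf lamf d ifun : S → ℝ) : S → ℝ :=
  Matrix.vecMul (fun s => d s * ifun s) (1 - Qof P γf lamf)⁻¹

/-- `C = −ΦᵀM̄(I−Q)Φ`. -/
def Cof {S : Type*} [Fintype S] [DecidableEq S] {n : ℕ}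
    (P : Matrix S S ℝ) (γf lamf d ifun : S → ℝ)
    (Φ : Matrix S (Fin n) ℝ) : Matrix (Fin n) (Fin n) ℝ :=
  -(Φ.transpose * Matrix.diagonal (MdiagOf P γf lamf d ifun) * (1 - Qof P γf lamf) * Φ)

end


open scoped NNReal
set_option linter.unusedSectionVars false

section PowNonneg

variable {S : Type} [Fintype S] [DecidableEq S]

lemma entries_pow_nonneg {X : Matrix S S ℝ} (h0 : ∀ i j, 0 ≤ X i j) (k : ℕ) :
    ∀ i j, 0 ≤ (X ^ k) i j := by
  induction k with
  | zero =>
    intro i j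
    rw [pow_zero, Matrix.one_apply]
    split <;> norm_num
  | succ k ih =>
    intro i j
    rw [pow_succ, Matrix.mul_apply]
    exact Finset.sum_nonneg fun t _ => mul_nonneg (ih i t) (h0 t j)

lemma rowsum_mul (X Y : Matrix S S ℝ) (i : S) :
    ∑ j, (X * Y) i j = ∑ k, X i k * ∑ j, Y k j := by
  simp_rw [Matrix.mul_apply, Finset.mul_sum]
  exact Finset.sum_comm

end PowNonneg

section NormAux

attribute [local instance] Matrix.linftyOpNormedRing Matrix.linftyOpNormedAlgebra

variable {S : Type} [Fintype S] [Nonempty S] [DecidableEq S]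

lemma inv_one_sub_entry_nonneg {X : Matrix S S ℝ} {c : ℝ} (h0 : ∀ i j, 0 ≤ X i j)
    (h1 : ∀ i, ∑ j, X i j ≤ c) (hc : c < 1) : ∀ i j, 0 ≤ (1 - X)⁻¹ i j := by
  have : CompleteSpace (Matrix S S ℝ) := FiniteDimensional.complete ℝ _
  have hnorm : ‖X‖ < 1 := by
    rw [Matrix.linfty_opNorm_def]
    have h1' : ∀ i, ((∑ j, ‖X i j‖₊ : ℝ≥0) : ℝ) < 1 := by
      intro i
      push_cast
      have heq : ∀ j ∈ Finset.univ, ‖X i j‖ = X i j := fun j _ => by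
        rw [Real.norm_eq_abs, abs_of_nonneg (h0 i j)]
      rw [Finset.sum_congr rfl heq]
      exact lt_of_le_of_lt (h1 i) hc
    have : (Finset.univ.sup fun i : S => ∑ j, ‖X i j‖₊) < 1 := by
      rw [Finset.sup_lt_iff (by norm_num : (⊥ : ℝ≥0) < 1)]
      intro i _
      have := h1' i
      exact_mod_cast this
    exact_mod_cast this
  intro i j
  have hsum : HasSum (fun k : ℕ => X ^ k) (Ring.inverse (1 - X)) :=
    hasSum_geom_series_inverse X hnorm
  have hb : ∀ A : Matrix S S ℝ, ‖A i j‖ ≤ 1 * ‖A‖ := by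
    intro A
    rw [one_mul, Matrix.linfty_opNorm_def]
    have h1 : ‖A i j‖₊ ≤ ∑ j', ‖A i j'‖₊ :=
      Finset.single_le_sum (f := fun j' => ‖A i j'‖₊) (fun _ _ => zero_le) (Finset.mem_univ j)
    have h2 : (∑ j', ‖A i j'‖₊) ≤ Finset.univ.sup fun i : S => ∑ j', ‖A i j'‖₊ :=
      Finset.le_sup (f := fun i => ∑ j' : S, ‖A i j'‖₊) (Finset.mem_univ i)
    exact_mod_cast h1.trans h2
  have hcont : Continuous fun A : Matrix S S ℝ => A i j :=
    AddMonoidHomClass.continuous_of_bound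
      (AddMonoidHom.mk' (fun A : Matrix S S ℝ => A i j) (fun A B => rfl)) 1 hb
  have hmap : HasSum (fun k : ℕ => (X ^ k) i j) ((Ring.inverse (1 - X)) i j) :=
    hsum.map (AddMonoidHom.mk' (fun A : Matrix S S ℝ => A i j) (fun A B => rfl)) hcont
  rw [Matrix.nonsing_inv_eq_ringInverse]
  exact hmap.nonneg (fun k => entries_pow_nonneg h0 k i j)

end NormAux

section LimitAux

open Filter Topology

variable {S : Type} [Fintype S] [Nonempty S] [DecidableEq S]

lemma inv_entry_nonneg_of_substochastic {M : Matrix S S ℝ} (h0 : ∀ i j, 0 ≤ M i j)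
    (h1 : ∀ i, ∑ j, M i j ≤ 1) (hU : IsUnit (1 - M)) : ∀ i j, 0 ≤ (1 - M)⁻¹ i j := by
  intro i j
  have hdet : ((1 : Matrix S S ℝ) - M).det ≠ 0 := by
    have := (Matrix.isUnit_iff_isUnit_det _).mp hU
    exact this.ne_zero
  have hg : Continuous fun t : ℝ => (1 : Matrix S S ℝ) - t • M :=
    continuous_const.sub (continuous_id.smul continuous_const)
  have hinv : ContinuousAt Inv.inv ((1 : Matrix S S ℝ) - (1 : ℝ) • M) := by
    apply continuousAt_matrix_inv
    rw [Ring.inverse_eq_inv']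
    apply continuousAt_inv₀
    rw [one_smul]
    exact hdet
  have hcont : ContinuousAt (fun t : ℝ => ((1 : Matrix S S ℝ) - t • M)⁻¹ i j) 1 := by
    have h1c : ContinuousAt (fun t : ℝ => ((1 : Matrix S S ℝ) - t • M)⁻¹) 1 :=
      ContinuousAt.comp (g := Inv.inv)
        (f := fun t : ℝ => (1 : Matrix S S ℝ) - t • M) hinv hg.continuousAt
    exact ((continuous_id.matrix_elem i j).continuousAt).comp h1c
  have hne : (nhdsWithin (1 : ℝ) (Set.Ico (0:ℝ) 1)).NeBot := by
    apply mem_closure_iff_nhdsWithin_neBot.mp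
    rw [closure_Ico (by norm_num : (0:ℝ) ≠ 1)]
    exact Set.right_mem_Icc.mpr (by norm_num)
  have htend : Tendsto (fun t : ℝ => ((1 : Matrix S S ℝ) - t • M)⁻¹ i j)
      (nhdsWithin 1 (Set.Ico (0:ℝ) 1)) (𝓝 (((1 : Matrix S S ℝ) - (1:ℝ) • M)⁻¹ i j)) :=
    hcont.tendsto.mono_left nhdsWithin_le_nhds
  have hev : ∀ᶠ t in nhdsWithin (1:ℝ) (Set.Ico (0:ℝ) 1),
      0 ≤ ((1 : Matrix S S ℝ) - t • M)⁻¹ i j := by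
    filter_upwards [self_mem_nhdsWithin] with t ht
    have h0' : ∀ a b, 0 ≤ (t • M) a b := fun a b => by
      rw [Matrix.smul_apply, smul_eq_mul]
      exact mul_nonneg ht.1 (h0 a b)
    have h1' : ∀ a, ∑ b, (t • M) a b ≤ t := by
      intro a
      have : ∑ b, (t • M) a b = t * ∑ b, M a b := by
        rw [Finset.mul_sum]
        exact Finset.sum_congr rfl fun b _ => by rw [Matrix.smul_apply, smul_eq_mul]
      rw [this]
      calc t * ∑ b, M a b ≤ t * 1 := mul_le_mul_of_nonneg_left (h1 a) ht.1
        _ = t := mul_one t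
    exact inv_one_sub_entry_nonneg h0' h1' ht.2 i j
  have := ge_of_tendsto htend hev
  rwa [one_smul] at this

end LimitAux

section QuadAux

variable {S : Type} [Fintype S] [Nonempty S] [DecidableEq S]

lemma quad_bound (N : Matrix S S ℝ) (m di : S → ℝ) (x : S → ℝ)
    (hN0 : ∀ i j, 0 ≤ N i j) (hrow : ∀ i, ∑ j, N i j ≤ 1) (hm0 : ∀ s, 0 ≤ m s)
    (hcol : ∀ t, ∑ s, m s * N s t = m t - di t) :
    (∑ s, di s * x s ^ 2) / 2 ≤ ∑ s, m s * x s * (x s - ∑ t, N s t * x t) := by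
  set S1 := ∑ s, m s * x s ^ 2 with hS1
  set T := ∑ s, ∑ t, m s * N s t * (x s * x t) with hT
  set U := ∑ s, ∑ t, m s * N s t * x s ^ 2 with hU
  set V := ∑ s, ∑ t, m s * N s t * x t ^ 2 with hV
  set Dq := ∑ s, di s * x s ^ 2 with hDq
  have hTUV : T ≤ (U + V) / 2 := by
    have : ∀ s ∈ Finset.univ, ∑ t, m s * N s t * (x s * x t)
        ≤ ∑ t, (m s * N s t * x s ^ 2 + m s * N s t * x t ^ 2) / 2 := by
      intro s _
      refine Finset.sum_le_sum fun t _ => ?_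
      have hmn : 0 ≤ m s * N s t := mul_nonneg (hm0 s) (hN0 s t)
      nlinarith [sq_nonneg (x s - x t)]
    calc T ≤ ∑ s, ∑ t, (m s * N s t * x s ^ 2 + m s * N s t * x t ^ 2) / 2 :=
          Finset.sum_le_sum this
      _ = (U + V) / 2 := by
          rw [hU, hV]
          simp_rw [← Finset.sum_div, ← Finset.sum_add_distrib]
  have hUle : U ≤ S1 := by
    refine Finset.sum_le_sum fun s _ => ?_
    have : ∑ t, m s * N s t * x s ^ 2 = m s * x s ^ 2 * ∑ t, N s t := by
      rw [Finset.mul_sum]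
      exact Finset.sum_congr rfl fun t _ => by ring
    rw [this]
    calc m s * x s ^ 2 * ∑ t, N s t ≤ m s * x s ^ 2 * 1 :=
          mul_le_mul_of_nonneg_left (hrow s) (mul_nonneg (hm0 s) (sq_nonneg _))
      _ = m s * x s ^ 2 := mul_one _
  have hVeq : V = S1 - Dq := by
    rw [hV, Finset.sum_comm]
    have : ∀ t ∈ Finset.univ, ∑ s, m s * N s t * x t ^ 2 = (m t - di t) * x t ^ 2 := by
      intro t _
      rw [← hcol t, Finset.sum_mul]
    rw [Finset.sum_congr rfl this, hS1, hDq, ← Finset.sum_sub_distrib]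
    exact Finset.sum_congr rfl fun t _ => by ring
  have hG : ∑ s, m s * x s * (x s - ∑ t, N s t * x t) = S1 - T := by
    rw [hS1, hT, ← Finset.sum_sub_distrib]
    refine Finset.sum_congr rfl fun s _ => ?_
    rw [mul_sub, Finset.mul_sum]
    congr 1
    · ring
    · exact Finset.sum_congr rfl fun t _ => by ring
  rw [hG]
  linarith

end QuadAux

/-- `C = −ΦᵀM̄(I−Q)Φ` is negative semidefinite; if `i(s) > 0`
for all `s`, then `C` is negative definite. -/
theorem stmt15 {S : Type} [Fintype S] [Nonempty S] [DecidableEq S] (n : ℕ) (hn : 1 ≤ n)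
    (P : Matrix S S ℝ) (hP0 : ∀ s s', 0 ≤ P s s') (hP1 : ∀ s, ∑ s', P s s' = 1)
    (γf lamf : S → ℝ)
    (hγ : ∀ s, γf s ∈ Set.Icc (0 : ℝ) 1) (hlam : ∀ s, lamf s ∈ Set.Icc (0 : ℝ) 1)
    (h1 : IsUnit (1 - P * Matrix.diagonal γf))
    (h2 : IsUnit (1 - P * Matrix.diagonal γf * Matrix.diagonal lamf))
    (d ifun : S → ℝ) (hd : ∀ s, 0 < d s) (hi : ∀ s, 0 ≤ ifun s)
    (Φ : Matrix S (Fin n) ℝ)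
    (hΦ : LinearIndependent ℝ fun j : Fin n => fun s : S => Φ s j) :
    (∀ y : Fin n → ℝ, y ⬝ᵥ (Cof P γf lamf d ifun Φ).mulVec y ≤ 0) ∧
    ((∀ s, 0 < ifun s) → ∃ c : ℝ, 0 < c ∧
      ∀ y : Fin n → ℝ, y ⬝ᵥ (Cof P γf lamf d ifun Φ).mulVec y ≤ -c * (y ⬝ᵥ y)) := by
  classical
  set A : Matrix S S ℝ := 1 - P * Matrix.diagonal γf * Matrix.diagonal lamf with hA
  set B : Matrix S S ℝ := 1 - P * Matrix.diagonal γf with hB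
  set D : Matrix S S ℝ := P * Matrix.diagonal γf * (1 - Matrix.diagonal lamf) with hD
  set N : Matrix S S ℝ := A⁻¹ * D with hN
  have hAdet : IsUnit A.det := (Matrix.isUnit_iff_isUnit_det A).mp h2
  have hBdet : IsUnit B.det := (Matrix.isUnit_iff_isUnit_det B).mp h1
  have hBAD : B = A - D := by rw [hA, hB, hD]; noncomm_ring
  have hIQ : A⁻¹ * B = 1 - N := by
    rw [hBAD, mul_sub, Matrix.nonsing_inv_mul A hAdet, hN]
  have hQN : 1 - Qof P γf lamf = 1 - N := by
    rw [Qof, sub_sub_cancel, ← hA, ← hB, hIQ]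
  -- entries of A⁻¹ are nonnegative
  have hAinv0 : ∀ i j, 0 ≤ A⁻¹ i j := by
    have h0 : ∀ i j, 0 ≤ (P * Matrix.diagonal γf * Matrix.diagonal lamf) i j := by
      intro i j
      rw [Matrix.mul_diagonal, Matrix.mul_diagonal]
      have := hP0 i j
      have := (hγ j).1
      have := (hlam j).1
      positivity
    have h1' : ∀ i, ∑ j, (P * Matrix.diagonal γf * Matrix.diagonal lamf) i j ≤ 1 := by
      intro i
      calc ∑ j, (P * Matrix.diagonal γf * Matrix.diagonal lamf) i j
          ≤ ∑ j, P i j := by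
            refine Finset.sum_le_sum fun j _ => ?_
            rw [Matrix.mul_diagonal, Matrix.mul_diagonal]
            calc P i j * γf j * lamf j ≤ P i j * γf j :=
                  mul_le_of_le_one_right (mul_nonneg (hP0 i j) (hγ j).1) (hlam j).2
              _ ≤ P i j := mul_le_of_le_one_right (hP0 i j) (hγ j).2
        _ = 1 := hP1 i
    exact inv_entry_nonneg_of_substochastic h0 h1' h2
  have hD0 : ∀ i j, 0 ≤ D i j := by
    intro i j
    have hDe : D = P * Matrix.diagonal γf - P * Matrix.diagonal γf * Matrix.diagonal lamf := by
      rw [hD, mul_sub, mul_one]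
    rw [hDe, Matrix.sub_apply, Matrix.mul_diagonal, Matrix.mul_diagonal, Matrix.mul_diagonal]
    have h := mul_le_of_le_one_right (mul_nonneg (hP0 i j) (hγ j).1) (hlam j).2
    linarith
  have hN0 : ∀ i j, 0 ≤ N i j := by
    intro i j
    rw [hN, Matrix.mul_apply]
    exact Finset.sum_nonneg fun k _ => mul_nonneg (hAinv0 i k) (hD0 k j)
  have hBrow : ∀ k, 0 ≤ ∑ j, B k j := by
    intro k
    have : ∑ j, B k j = 1 - ∑ j, P k j * γf j := by
      rw [hB]
      simp only [Matrix.sub_apply, Matrix.mul_diagonal, Finset.sum_sub_distrib]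
      congr 1
      simp [Matrix.one_apply]
    rw [this]
    have : ∑ j, P k j * γf j ≤ 1 := by
      calc ∑ j, P k j * γf j ≤ ∑ j, P k j :=
            Finset.sum_le_sum fun j _ =>
              mul_le_of_le_one_right (hP0 k j) (hγ j).2
        _ = 1 := hP1 k
    linarith
  have hNrow : ∀ i, ∑ j, N i j ≤ 1 := by
    intro i
    have hNe : N = 1 - A⁻¹ * B := by rw [hIQ]; noncomm_ring
    have h1sum : ∑ j, (1 : Matrix S S ℝ) i j = 1 := by simp [Matrix.one_apply]
    have hprod : 0 ≤ ∑ j, (A⁻¹ * B) i j := by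
      rw [rowsum_mul]
      exact Finset.sum_nonneg fun k _ => mul_nonneg (hAinv0 i k) (hBrow k)
    calc ∑ j, N i j = ∑ j, ((1 : Matrix S S ℝ) i j - (A⁻¹ * B) i j) := by
          rw [hNe]; exact Finset.sum_congr rfl fun j _ => by rw [Matrix.sub_apply]
      _ = 1 - ∑ j, (A⁻¹ * B) i j := by rw [Finset.sum_sub_distrib, h1sum]
      _ ≤ 1 := by linarith
  have hNunit : IsUnit (1 - N) := by
    rw [← hIQ, Matrix.isUnit_iff_isUnit_det, Matrix.det_mul, Matrix.det_nonsing_inv]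
    exact (isUnit_ringInverse.mpr hAdet).mul hBdet
  have hNdet : IsUnit (1 - N).det := (Matrix.isUnit_iff_isUnit_det _).mp hNunit
  have hNinv0 : ∀ i j, 0 ≤ (1 - N)⁻¹ i j :=
    inv_entry_nonneg_of_substochastic hN0 hNrow hNunit
  set di : S → ℝ := fun s => d s * ifun s with hdi
  set m : S → ℝ := MdiagOf P γf lamf d ifun with hm
  have hmv : m = Matrix.vecMul di (1 - N)⁻¹ := by
    rw [hm, MdiagOf, hQN]
  have hdi0 : ∀ s, 0 ≤ di s := fun s => mul_nonneg (hd s).le (hi s)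
  have hmdi : ∀ t, di t ≤ m t := by
    have e : (1 - N)⁻¹ = 1 + (1 - N)⁻¹ * N := by
      have h := Matrix.nonsing_inv_mul (1 - N) hNdet
      calc (1 - N)⁻¹ = (1 - N)⁻¹ * (1 - N) + (1 - N)⁻¹ * N := by noncomm_ring
        _ = 1 + (1 - N)⁻¹ * N := by rw [h]
    have hge : ∀ s t, (1 : Matrix S S ℝ) s t ≤ (1 - N)⁻¹ s t := by
      intro s t
      rw [e, Matrix.add_apply]
      have : 0 ≤ ((1 - N)⁻¹ * N) s t := by
        rw [Matrix.mul_apply]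
        exact Finset.sum_nonneg fun k _ => mul_nonneg (hNinv0 s k) (hN0 k t)
      rw [e] at this ⊢
      linarith [this]
    intro t
    have : m t = ∑ s, di s * (1 - N)⁻¹ s t := by
      rw [hmv]; rfl
    rw [this]
    have hone : ∑ s, di s * (1 : Matrix S S ℝ) s t = di t := by
      simp [Matrix.one_apply]
    calc di t = ∑ s, di s * (1 : Matrix S S ℝ) s t := hone.symm
      _ ≤ ∑ s, di s * (1 - N)⁻¹ s t :=
          Finset.sum_le_sum fun s _ =>
            mul_le_mul_of_nonneg_left (hge s t) (hdi0 s)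
  have hm0 : ∀ t, 0 ≤ m t := fun t => (hdi0 t).trans (hmdi t)
  have hcol : ∀ t, ∑ s, m s * N s t = m t - di t := by
    have hv : Matrix.vecMul m (1 - N) = di := by
      rw [hmv, Matrix.vecMul_vecMul, Matrix.nonsing_inv_mul _ hNdet, Matrix.vecMul_one]
    intro t
    have h1 : Matrix.vecMul m (1 - N) t = di t := by rw [hv]
    have h2 : Matrix.vecMul m (1 - N) t
        = ∑ s, m s * ((1 : Matrix S S ℝ) s t - N s t) := by
      simp [Matrix.vecMul, dotProduct, Matrix.sub_apply]
    have h3 : ∑ s, m s * ((1 : Matrix S S ℝ) s t - N s t)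
        = m t - ∑ s, m s * N s t := by
      simp_rw [mul_sub, Finset.sum_sub_distrib]
      congr 1
      simp [Matrix.one_apply]
    linarith [h1, h2.symm.trans h1, h3]
  -- quadratic form identity
  have hform : ∀ y : Fin n → ℝ,
      y ⬝ᵥ (Cof P γf lamf d ifun Φ).mulVec y
        = -(∑ s, m s * (Φ.mulVec y) s * ((Φ.mulVec y) s - ∑ t, N s t * (Φ.mulVec y) t)) := by
    intro y
    set x := Φ.mulVec y with hx
    have hC : Cof P γf lamf d ifun Φ
        = -(Φ.transpose * (Matrix.diagonal m * ((1 - N) * Φ))) := by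
      rw [Cof, hQN, ← hm, Matrix.mul_assoc, Matrix.mul_assoc]
    rw [hC, Matrix.neg_mulVec, dotProduct_neg, neg_inj]
    have e1 : (Φ.transpose * (Matrix.diagonal m * ((1 - N) * Φ))) *ᵥ y
        = Φ.transpose *ᵥ (Matrix.diagonal m *ᵥ ((1 - N) *ᵥ x)) := by
      rw [← Matrix.mulVec_mulVec, ← Matrix.mulVec_mulVec, ← Matrix.mulVec_mulVec, hx]
    rw [e1, Matrix.dotProduct_mulVec, Matrix.vecMul_transpose, ← hx]
    have hu : ∀ s, ((1 - N) *ᵥ x) s = x s - ∑ t, N s t * x t := by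
      intro s
      rw [Matrix.sub_mulVec, Matrix.one_mulVec, Pi.sub_apply]
      rfl
    show ∑ s, x s * (Matrix.diagonal m *ᵥ ((1 - N) *ᵥ x)) s = _
    refine Finset.sum_congr rfl fun s _ => ?_
    rw [Matrix.mulVec_diagonal, hu s]
    ring
  have hmain : ∀ y : Fin n → ℝ, y ⬝ᵥ (Cof P γf lamf d ifun Φ).mulVec y
      ≤ -((∑ s, di s * (Φ.mulVec y) s ^ 2) / 2) := by
    intro y
    rw [hform y]
    have := quad_bound N m di (Φ.mulVec y) hN0 hNrow hm0 hcol
    linarith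
  constructor
  · intro y
    have h := hmain y
    have hnn : 0 ≤ ∑ s, di s * (Φ.mulVec y) s ^ 2 :=
      Finset.sum_nonneg fun s _ => mul_nonneg (hdi0 s) (sq_nonneg _)
    linarith
  · intro hipos
    -- injectivity of Φ
    have hker : LinearMap.ker (Matrix.mulVecLin Φ) = ⊥ := by
      rw [LinearMap.ker_eq_bot']
      intro z hz
      have hz' : ∀ s, ∑ j, Φ s j * z j = 0 := by
        intro s
        have := congrFun hz s
        simpa [Matrix.mulVecLin_apply, Matrix.mulVec, dotProduct] using this
      have hlin := Fintype.linearIndependent_iff.mp hΦ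
      have hzero : (∑ j, z j • fun s : S => Φ s j) = (0 : S → ℝ) := by
        funext s
        simp only [Finset.sum_apply, Pi.smul_apply, smul_eq_mul, Pi.zero_apply]
        rw [← hz' s]
        exact Finset.sum_congr rfl fun j _ => mul_comm _ _
      funext j
      exact hlin z hzero j
    obtain ⟨K, hK0, hKa⟩ := (Matrix.mulVecLin Φ).exists_antilipschitzWith hker
    have hKr : (0:ℝ) < (K : ℝ) := by exact_mod_cast hK0
    have hnr : (0:ℝ) < (n : ℝ) := by
      have : (0:ℕ) < n := hn
      exact_mod_cast this
    have hKbound : ∀ y : Fin n → ℝ, ‖y‖ ≤ (K : ℝ) * ‖Φ.mulVec y‖ := by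
      intro y
      have h := hKa.le_mul_dist y 0
      simpa [Matrix.mulVecLin_apply, dist_zero_right, map_zero] using h
    have hne : (Finset.univ : Finset S).Nonempty := Finset.univ_nonempty
    set δ := Finset.univ.inf' hne di with hδ
    have hδpos : 0 < δ := by
      rw [hδ, Finset.lt_inf'_iff]
      exact fun s _ => mul_pos (hd s) (hipos s)
    have hδle : ∀ s, δ ≤ di s := fun s => Finset.inf'_le _ (Finset.mem_univ s)
    have hsum_ge_normsq : ∀ x : S → ℝ, ‖x‖ ^ 2 ≤ ∑ s, x s ^ 2 := by
      intro x
      obtain ⟨s₀, -, hs₀⟩ := Finset.exists_mem_eq_sup (Finset.univ : Finset S) hne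
        (fun s => ‖x s‖₊)
      have hxn : ‖x‖ = |x s₀| := by
        rw [Pi.norm_def, hs₀]
        simp [Real.norm_eq_abs]
      rw [hxn, sq_abs]
      exact Finset.single_le_sum (fun s _ => sq_nonneg (x s)) (Finset.mem_univ s₀)
    have hysum : ∀ y : Fin n → ℝ, (y ⬝ᵥ y) ≤ (n : ℝ) * ‖y‖ ^ 2 := by
      intro y
      have h1 : ∀ i, y i * y i ≤ ‖y‖ ^ 2 := by
        intro i
        have h0 : |y i| ≤ ‖y‖ := by
          have := norm_le_pi_norm y i
          rwa [Real.norm_eq_abs] at this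
        nlinarith [abs_nonneg (y i), le_abs_self (y i), neg_abs_le (y i)]
      calc y ⬝ᵥ y = ∑ i, y i * y i := rfl
        _ ≤ ∑ _i : Fin n, ‖y‖ ^ 2 := Finset.sum_le_sum fun i _ => h1 i
        _ = (n : ℝ) * ‖y‖ ^ 2 := by
            rw [Finset.sum_const, Finset.card_univ, Fintype.card_fin, nsmul_eq_mul]
    have hcpos : (0:ℝ) < δ / (2 * (K:ℝ) ^ 2 * (n:ℝ)) := by
      apply div_pos hδpos
      have : (0:ℝ) < (K:ℝ) ^ 2 := pow_pos hKr 2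
      nlinarith
    refine ⟨δ / (2 * (K:ℝ) ^ 2 * (n:ℝ)), hcpos, ?_⟩
    intro y
    set x := Φ.mulVec y with hx
    have h5 := hmain y
    have h6 : δ * (∑ s, x s ^ 2) ≤ ∑ s, di s * x s ^ 2 := by
      rw [Finset.mul_sum]
      exact Finset.sum_le_sum fun s _ => mul_le_mul_of_nonneg_right (hδle s) (sq_nonneg _)
    have h7 : ‖x‖ ^ 2 ≤ ∑ s, x s ^ 2 := hsum_ge_normsq x
    have h8 : ‖y‖ ≤ (K : ℝ) * ‖x‖ := hKbound y
    have h9 : y ⬝ᵥ y ≤ (n : ℝ) * ‖y‖ ^ 2 := hysum y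
    have hnormy : ‖y‖ ^ 2 ≤ (K:ℝ) ^ 2 * ‖x‖ ^ 2 := by
      have := pow_le_pow_left₀ (norm_nonneg y) h8 2
      rwa [mul_pow] at this
    have hxq : (y ⬝ᵥ y) ≤ ((n:ℝ) * (K:ℝ) ^ 2) * (∑ s, x s ^ 2) := by
      calc y ⬝ᵥ y ≤ (n:ℝ) * ‖y‖ ^ 2 := h9
        _ ≤ (n:ℝ) * ((K:ℝ) ^ 2 * ‖x‖ ^ 2) := mul_le_mul_of_nonneg_left hnormy hnr.le
        _ ≤ (n:ℝ) * ((K:ℝ) ^ 2 * (∑ s, x s ^ 2)) := by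
            exact mul_le_mul_of_nonneg_left
              (mul_le_mul_of_nonneg_left h7 (by positivity)) hnr.le
        _ = ((n:ℝ) * (K:ℝ) ^ 2) * (∑ s, x s ^ 2) := by ring
    set c := δ / (2 * (K:ℝ) ^ 2 * (n:ℝ)) with hc
    have hmul : c * (y ⬝ᵥ y) ≤ c * (((n:ℝ) * (K:ℝ) ^ 2) * (∑ s, x s ^ 2)) :=
      mul_le_mul_of_nonneg_left hxq hcpos.le
    have hceq : c * (((n:ℝ) * (K:ℝ) ^ 2) * (∑ s, x s ^ 2)) = δ * (∑ s, x s ^ 2) / 2 := by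
      rw [hc]
      field_simp
    rw [neg_mul]
    linarith [hmul, hceq, h5, h6]
end
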